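/- arXiv:1901.00384 — 9 statements merged into one kernel-verified Lean document; each statement's English description precedes it below -/
import Mathlib

section
/- Let r ≥ 1 and let Σ ⊆ ℝ^r be a subsemigroup graded by first component (deg(x) := x₁ ∈ ℤ for every x ∈ Σ) such that: some σ₀ ∈ Σ has deg(σ₀) = 1; the ℝ-linear span of Σ equals ℝ^r; the ℚ-linear span of Σ has dimension r as a ℚ-vector space; and the subgroup ⟨Σ⟩_ℤ of ℝ^r generated by Σ is not finitely generated. Then lim_{d→∞} H_Σ(d)/d^{r−1} = ∞, i.e. for every C > 0 there exists D such that for all integers d ≥ D the set Σ_d is infinite or #Σ_d ≥ C·d^{r−1}. -/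
open Filter Topology

-- shift lemma
lemma aux_li_shift {V : Type*} [AddCommGroup V] [Module ℝ V] {n : ℕ} {σ : V} {e : Fin n → V}
    (h : LinearIndependent ℝ (Fin.cons σ e : Fin (n+1) → V)) (K : Fin n → ℝ) :
    LinearIndependent ℝ (Fin.cons σ (fun i => e i + K i • σ) : Fin (n+1) → V) := by
  rw [Fintype.linearIndependent_iff] at h ⊢
  intro c hc
  have hc' : ∑ j, (Fin.cons (c 0 + ∑ i, c i.succ * K i) (fun i => c i.succ) : Fin (n+1) → ℝ) j
      • (Fin.cons σ e : Fin (n+1) → V) j = 0 := by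
    rw [← hc]
    rw [Fin.sum_univ_succ, Fin.sum_univ_succ]
    simp only [Fin.cons_zero, Fin.cons_succ, smul_add, smul_smul, add_smul,
      Finset.sum_smul, Finset.sum_add_distrib]
    abel
  have h0 := h _ hc'
  have hsucc : ∀ i : Fin n, c i.succ = 0 := fun i => h0 i.succ
  intro i
  induction i using Fin.cases with
  | zero =>
    have := h0 0
    simp only [Fin.cons_zero] at this
    have hz : ∑ i, c i.succ * K i = 0 := by
      apply Finset.sum_eq_zero; intro i _; rw [hsucc i, zero_mul]
    rw [hz, add_zero] at this; exact this
  | succ i => exact hsucc i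
lemma aux_count (n k M d A : ℕ) (S : Set (Fin (n + 1) → ℝ))
    (hadd : ∀ x ∈ S, ∀ y ∈ S, x + y ∈ S)
    (σ₀ : Fin (n+1) → ℝ) (hσ₀S : σ₀ ∈ S) (hσ₀deg : σ₀ 0 = 1)
    (e' : Fin n → (Fin (n+1) → ℝ)) (he'S : ∀ i, e' i ∈ S)
    (δ : Fin n → ℕ) (hδ : ∀ i, e' i 0 = (δ i : ℝ))
    (hli' : LinearIndependent ℝ (Fin.cons σ₀ e' : Fin (n+1) → (Fin (n+1) → ℝ)))
    (w : Fin k → (Fin (n+1) → ℝ)) (hwS : ∀ j, w j ∈ S) (hw0 : ∀ j, w j 0 = (M : ℝ))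
    (hwL : ∀ j j', j ≠ j' → w j - w j' ∉ AddSubgroup.closure (insert σ₀ (Set.range e')))
    (hA : M + A * (1 + ∑ i, δ i) ≤ d) :
    ∃ p : Fin k × (Fin n → Fin (A+1)) → (Fin (n+1) → ℝ),
      Function.Injective p ∧ ∀ x, p x ∈ {x ∈ S | x 0 = (d : ℝ)} := by
  classical
  have hS_nsmul : ∀ x ∈ S, ∀ y ∈ S, ∀ c : ℕ, x + c • y ∈ S := by
    intro x hx y hy c
    induction c with
    | zero => simpa using hx
    | succ c ih =>
      have h2 : x + (c + 1) • y = (x + c • y) + y := by rw [succ_nsmul]; abel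
      rw [h2]; exact hadd _ ih _ hy
  -- key bound
  have hbound : ∀ a : Fin n → Fin (A+1), M + ∑ i, (a i : ℕ) * δ i ≤ d := by
    intro a
    have h1 : ∑ i, (a i : ℕ) * δ i ≤ ∑ i, A * δ i :=
      Finset.sum_le_sum fun i _ => Nat.mul_le_mul_right _ (Fin.is_le _)
    have h2 : ∑ i, A * δ i = A * ∑ i, δ i := by rw [Finset.mul_sum]
    calc M + ∑ i, (a i : ℕ) * δ i ≤ M + A * ∑ i, δ i := by omega
      _ ≤ M + A * (1 + ∑ i, δ i) := by nlinarith
      _ ≤ d := hA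
  set L := AddSubgroup.closure (insert σ₀ (Set.range e')) with hL
  have hσ₀L : σ₀ ∈ L := AddSubgroup.subset_closure (Set.mem_insert _ _)
  have he'L : ∀ i, e' i ∈ L := fun i =>
    AddSubgroup.subset_closure (Set.mem_insert_of_mem _ ⟨i, rfl⟩)
  set X : (Fin n → Fin (A+1)) → (Fin (n+1) → ℝ) := fun a => ∑ i, (a i : ℕ) • e' i with hX
  set cc : (Fin n → Fin (A+1)) → ℕ := fun a => d - (M + ∑ i, (a i : ℕ) * δ i) with hcc
  refine ⟨fun x => w x.1 + X x.2 + cc x.2 • σ₀, ?_, ?_⟩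
  · -- injectivity
    rintro ⟨j, a⟩ ⟨j', a'⟩ hp
    simp only at hp
    have hXL : ∀ a, X a ∈ L := fun a => AddSubgroup.sum_mem _ fun i _ =>
      AddSubgroup.nsmul_mem _ (he'L i) _
    have hjj' : j = j' := by
      by_contra hne
      apply hwL j j' hne
      have key : w j - w j' = (X a' + cc a' • σ₀) - (X a + cc a • σ₀) := by
        have h0 : (w j + X a + cc a • σ₀) - (w j' + X a' + cc a' • σ₀) = 0 :=
          sub_eq_zero_of_eq hp
        rw [← sub_eq_zero, ← h0]; abel
      rw [key]
      exact AddSubgroup.sub_mem _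
        (AddSubgroup.add_mem _ (hXL a') (AddSubgroup.nsmul_mem _ hσ₀L _))
        (AddSubgroup.add_mem _ (hXL a) (AddSubgroup.nsmul_mem _ hσ₀L _))
    subst hjj'
    have hXeq : X a + cc a • σ₀ = X a' + cc a' • σ₀ := by
      have := hp
      rw [add_assoc, add_assoc] at this
      exact add_left_cancel this
    -- use linear independence
    have hcoef := Fintype.linearIndependent_iff.mp hli'
      (Fin.cons ((cc a : ℝ) - (cc a' : ℝ)) (fun i => ((a i : ℕ) : ℝ) - ((a' i : ℕ) : ℝ)))
      (by
        rw [Fin.sum_univ_succ]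
        simp only [Fin.cons_zero, Fin.cons_succ, sub_smul]
        rw [← sub_eq_zero] at hXeq
        rw [← hXeq]
        simp only [hX]
        rw [Finset.sum_sub_distrib]
        simp only [Nat.cast_smul_eq_nsmul]
        abel)
    have ha : a = a' := by
      funext i
      have := hcoef i.succ
      simp only [Fin.cons_succ, sub_eq_zero] at this
      exact Fin.ext (Nat.cast_injective this)
    rw [ha]
  · -- membership
    rintro ⟨j, a⟩
    constructor
    · have h1 : w j + X a ∈ S := by
        have : ∀ F : Finset (Fin n), w j + ∑ i ∈ F, (a i : ℕ) • e' i ∈ S := by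
          intro F
          induction F using Finset.induction with
          | empty => simpa using hwS j
          | @insert x F' hx ih =>
            have : w j + ∑ i ∈ insert x F', (a i : ℕ) • e' i
                = (w j + ∑ i ∈ F', (a i : ℕ) • e' i) + (a x : ℕ) • e' x := by
              rw [Finset.sum_insert hx]; abel
            rw [this]
            exact hS_nsmul _ ih _ (he'S x) _
        exact this Finset.univ
      exact hS_nsmul _ h1 _ hσ₀S _
    · -- degree
      have hc : (cc a : ℝ) = (d : ℝ) - (M : ℝ) - (∑ i, ((a i : ℕ) : ℝ) * (δ i : ℝ)) := by
        have hb := hbound a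
        rw [hcc]
        push_cast [Nat.cast_sub hb]
        ring
      have hXa : X a 0 = ∑ i, ((a i : ℕ) : ℝ) * (δ i : ℝ) := by
        rw [hX]
        simp only [Finset.sum_apply, Pi.smul_apply]
        exact Finset.sum_congr rfl fun i _ => by rw [hδ i, nsmul_eq_mul]
      show (w j + X a + cc a • σ₀) 0 = (d : ℝ)
      rw [Pi.add_apply, Pi.add_apply, Pi.smul_apply, hσ₀deg, hw0, hXa, nsmul_eq_mul, hc]
      ring

lemma aux_num (n M d Δ A k N : ℕ) (C : ℝ) (hΔpos : 0 < Δ) (hA : A = (d - M) / Δ)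
    (hd : 2*M + 1 ≤ d) (hk : C * ((2*Δ : ℕ) : ℝ)^n ≤ (k : ℝ))
    (hcard : k * (A+1)^n ≤ N) : C * (d:ℝ)^n ≤ (N:ℝ) := by
  have hdivlt : d - M < (A + 1) * Δ := by
    have h4 : (d - M) / Δ < A + 1 := by omega
    exact (Nat.div_lt_iff_lt_mul hΔpos).mp h4
  have hdle : d ≤ 2 * ((A + 1) * Δ) := by
    set sΔ := (A+1)*Δ
    omega
  have h2Δpos : (0:ℝ) < ((2*Δ : ℕ) : ℝ) := by positivity
  have hA1 : (d:ℝ) / ((2*Δ : ℕ) : ℝ) ≤ ((A+1 : ℕ) : ℝ) := by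
    rw [div_le_iff₀ h2Δpos]
    calc (d:ℝ) ≤ ((2 * ((A+1) * Δ) : ℕ) : ℝ) := by exact_mod_cast hdle
      _ = ((A+1 : ℕ) : ℝ) * ((2*Δ : ℕ) : ℝ) := by push_cast; ring
  have hdnn : (0:ℝ) ≤ (d:ℝ) / ((2*Δ : ℕ) : ℝ) := by positivity
  calc C * (d:ℝ)^n = (C * ((2*Δ : ℕ) : ℝ)^n) * ((d:ℝ) / ((2*Δ : ℕ) : ℝ))^n := by
        rw [div_pow, mul_assoc, mul_div_cancel₀]
        exact pow_ne_zero _ (ne_of_gt h2Δpos)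
    _ ≤ (k:ℝ) * ((A+1 : ℕ):ℝ)^n := by
        apply mul_le_mul hk (pow_le_pow_left₀ hdnn hA1 n) (pow_nonneg hdnn n)
        exact Nat.cast_nonneg k
    _ = ((k * (A+1)^n : ℕ) : ℝ) := by push_cast; ring
    _ ≤ (N:ℝ) := by exact_mod_cast hcard

theorem stmt1 (n : ℕ) (S : Set (Fin (n + 1) → ℝ)) (hne : S.Nonempty)
    (hadd : ∀ x ∈ S, ∀ y ∈ S, x + y ∈ S)
    (hgr : ∀ x ∈ S, ∃ m : ℤ, x 0 = (m : ℝ))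
    (hdeg1 : ∃ σ₀ ∈ S, σ₀ 0 = 1)
    (hspanR : Submodule.span ℝ S = ⊤)
    (hspanQ : Module.finrank ℚ ↥(Submodule.span ℚ S) = n + 1)
    (hnfg : ¬ (AddSubgroup.closure S).FG) :
    ∀ C : ℝ, 0 < C → ∃ D : ℕ, ∀ d : ℕ, D ≤ d →
      {x ∈ S | x 0 = (d : ℝ)}.Infinite ∨
      C * (d : ℝ) ^ n ≤ (Nat.card {x ∈ S | x 0 = (d : ℝ)} : ℝ) := by
  classical
  obtain ⟨σ₀, hσ₀S, hσ₀deg⟩ := hdeg1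
  have hσ₀ne : σ₀ ≠ 0 := by
    intro h; rw [h] at hσ₀deg; simp at hσ₀deg
  have hS_nsmul : ∀ x ∈ S, ∀ y ∈ S, ∀ c : ℕ, x + c • y ∈ S := by
    intro x hx y hy c
    induction c with
    | zero => simpa using hx
    | succ c ih =>
      have h2 : x + (c + 1) • y = (x + c • y) + y := by rw [succ_nsmul]; abel
      rw [h2]; exact hadd _ ih _ hy
  -- Step 1: extract a linearly independent family (σ₀, e) inside S
  have hbasis : ∃ e : Fin n → (Fin (n+1) → ℝ), (∀ i, e i ∈ S) ∧
      LinearIndependent ℝ (Fin.cons σ₀ e : Fin (n+1) → (Fin (n+1) → ℝ)) := by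
    have hli : LinearIndepOn ℝ id ({σ₀} : Set (Fin (n+1) → ℝ)) :=
      (linearIndepOn_singleton_iff ℝ).mpr hσ₀ne
    have hst : ({σ₀} : Set (Fin (n+1) → ℝ)) ⊆ S := Set.singleton_subset_iff.mpr hσ₀S
    have ht : ⊤ ≤ Submodule.span ℝ S := hspanR.ge
    set b := hli.extend hst with hb
    have hbS : b ⊆ S := hli.extend_subset hst
    have hσ₀b : σ₀ ∈ b := hli.subset_extend hst rfl
    have bbasis : Module.Basis b ℝ (Fin (n+1) → ℝ) := Module.Basis.extendLe hli hst ht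
    haveI : Fintype b := FiniteDimensional.fintypeBasisIndex bbasis
    have hcard : Fintype.card b = n + 1 := by
      have := Module.finrank_eq_card_basis bbasis
      simpa [Module.finrank_fin_fun] using this.symm
    have hliB : LinearIndependent ℝ (fun x => x : b → (Fin (n+1) → ℝ)) :=
      hli.linearIndepOn_extend hst
    have hcard' : (b.toFinset.erase σ₀).card = n := by
      rw [Finset.card_erase_of_mem (Set.mem_toFinset.mpr hσ₀b), Set.toFinset_card, hcard]
      omega
    set E := b.toFinset.erase σ₀ with hE
    have eqv : Fin n ≃ E := (E.equivFinOfCardEq hcard').symm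
    have hmem : ∀ i : Fin n, ((eqv i : Fin (n+1) → ℝ)) ∈ b :=
      fun i => Set.mem_toFinset.mp (Finset.erase_subset _ _ (eqv i).2)
    refine ⟨fun i => (eqv i : Fin (n+1) → ℝ), fun i => hbS (hmem i), ?_⟩
    have hne' : ∀ i : Fin n, ((eqv i : Fin (n+1) → ℝ)) ≠ σ₀ :=
      fun i => Finset.ne_of_mem_erase (eqv i).2
    set g : Fin (n+1) → b :=
      Fin.cons ⟨σ₀, hσ₀b⟩ (fun i => ⟨(eqv i : Fin (n+1) → ℝ), hmem i⟩) with hg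
    have hgval : ∀ i : Fin (n+1), (g i : Fin (n+1) → ℝ)
        = (Fin.cons σ₀ (fun i => (eqv i : Fin (n+1) → ℝ)) : Fin (n+1) → (Fin (n+1) → ℝ)) i := by
      intro i
      induction i using Fin.cases with
      | zero => rw [hg]; simp
      | succ i => rw [hg]; simp
    have hginj : Function.Injective g := by
      intro i j hij
      have hv := congrArg Subtype.val hij
      rw [hgval i, hgval j] at hv
      induction i using Fin.cases with
      | zero =>
        induction j using Fin.cases with
        | zero => rfl
        | succ j =>
          simp only [Fin.cons_zero, Fin.cons_succ] at hv
          exact absurd hv.symm (hne' j)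
      | succ i =>
        induction j using Fin.cases with
        | zero =>
          simp only [Fin.cons_zero, Fin.cons_succ] at hv
          exact absurd hv (hne' i)
        | succ j =>
          simp only [Fin.cons_succ] at hv
          rw [eqv.injective (Subtype.ext hv)]
    have hli2 := hliB.comp g hginj
    have heq : (fun x => x : b → (Fin (n+1) → ℝ)) ∘ g
        = (Fin.cons σ₀ (fun i => (eqv i : Fin (n+1) → ℝ)) : Fin (n+1) → (Fin (n+1) → ℝ)) := by
      funext i; exact hgval i
    rwa [heq] at hli2
  obtain ⟨e, heS, hlie⟩ := hbasis
  -- Step 2: shift to get positive integer degrees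
  obtain ⟨e', he'S, δ, hδ, hli'⟩ : ∃ e' : Fin n → (Fin (n+1) → ℝ), (∀ i, e' i ∈ S) ∧
      ∃ δ : Fin n → ℕ, (∀ i, e' i 0 = (δ i : ℝ)) ∧
        LinearIndependent ℝ (Fin.cons σ₀ e' : Fin (n+1) → (Fin (n+1) → ℝ)) := by
    choose m hm using fun i => hgr (e i) (heS i)
    refine ⟨fun i => e i + (((1 - m i).toNat : ℝ)) • σ₀, ?_,
      fun i => (m i + ((1 - m i).toNat : ℤ)).toNat, ?_, ?_⟩
    · intro i
      have := hS_nsmul (e i) (heS i) σ₀ hσ₀S ((1 - m i).toNat)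
      simpa [Nat.cast_smul_eq_nsmul] using this
    · intro i
      simp only [Pi.add_apply, Pi.smul_apply, smul_eq_mul, hσ₀deg, mul_one, hm i]
      have h1 : (((m i + ((1 - m i).toNat : ℤ)).toNat : ℤ)) = m i + ((1 - m i).toNat : ℤ) := by
        omega
      exact_mod_cast h1.symm
    · exact aux_li_shift hlie _
  -- Step 3: elements of the group are differences
  have hdiff : ∀ x ∈ AddSubgroup.closure S, ∃ s ∈ S, ∃ t ∈ S, x = s - t := by
    intro x hx
    induction hx using AddSubgroup.closure_induction with
    | mem y hy => exact ⟨y + σ₀, hadd _ hy _ hσ₀S, σ₀, hσ₀S, by abel⟩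
    | zero => exact ⟨σ₀, hσ₀S, σ₀, hσ₀S, by abel⟩
    | add a b ha hb iha ihb =>
      obtain ⟨s, hs, t, ht, rfl⟩ := iha
      obtain ⟨s', hs', t', ht', rfl⟩ := ihb
      exact ⟨s + s', hadd _ hs _ hs', t + t', hadd _ ht _ ht', by abel⟩
    | neg a ha iha =>
      obtain ⟨s, hs, t, ht, rfl⟩ := iha
      exact ⟨t, ht, s, hs, by abel⟩
  -- Step 4: representatives of distinct cosets
  have hreps : ∀ k : ℕ, ∃ g : Fin k → (Fin (n+1) → ℝ),
      (∀ j, g j ∈ AddSubgroup.closure S) ∧ ∀ j j', j ≠ j' →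
        g j - g j' ∉ AddSubgroup.closure (insert σ₀ (Set.range e')) := by
    intro k
    induction k with
    | zero => exact ⟨fun j => 0, fun j => j.elim0, fun j => j.elim0⟩
    | succ k ih =>
      obtain ⟨g, hgG, hgL⟩ := ih
      by_cases h : ∃ x ∈ AddSubgroup.closure S, ∀ j,
          x - g j ∉ AddSubgroup.closure (insert σ₀ (Set.range e'))
      · obtain ⟨x, hxG, hx⟩ := h
        refine ⟨Fin.cons x g, ?_, ?_⟩
        · intro j
          induction j using Fin.cases with
          | zero => simpa using hxG
          | succ j => simpa using hgG j
        · intro j j' hjj'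
          induction j using Fin.cases with
          | zero =>
            induction j' using Fin.cases with
            | zero => exact absurd rfl hjj'
            | succ j' => simpa using hx j'
          | succ j =>
            induction j' using Fin.cases with
            | zero =>
              simp only [Fin.cons_succ, Fin.cons_zero]
              intro hmem
              exact hx j (by simpa using (AddSubgroup.neg_mem _ hmem))
            | succ j' =>
              simp only [Fin.cons_succ]
              exact hgL j j' (fun hh => hjj' (by rw [hh]))
      · exfalso
        apply hnfg
        push_neg at h
        rw [AddSubgroup.fg_iff]
        refine ⟨insert σ₀ (Set.range e') ∪ Set.range g, ?_, ?_⟩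
        · apply le_antisymm
          · rw [AddSubgroup.closure_le]
            rintro x (hx | ⟨j, rfl⟩)
            · rcases hx with rfl | ⟨i, rfl⟩
              · exact AddSubgroup.subset_closure hσ₀S
              · exact AddSubgroup.subset_closure (he'S i)
            · exact hgG j
          · rw [AddSubgroup.closure_le]
            intro s hs
            obtain ⟨j, hj⟩ := h s (AddSubgroup.subset_closure hs)
            have h1 : s - g j ∈ AddSubgroup.closure (insert σ₀ (Set.range e') ∪ Set.range g) :=
              AddSubgroup.closure_mono Set.subset_union_left hj
            have h2 : g j ∈ AddSubgroup.closure (insert σ₀ (Set.range e') ∪ Set.range g) :=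
              AddSubgroup.subset_closure (Set.mem_union_right _ ⟨j, rfl⟩)
            have := AddSubgroup.add_mem _ h1 h2
            simpa using this
        · exact ((Set.finite_range e').insert σ₀).union (Set.finite_range g)
  have hσ₀L : σ₀ ∈ AddSubgroup.closure (insert σ₀ (Set.range e')) :=
    AddSubgroup.subset_closure (Set.mem_insert _ _)
  -- Step 5: normalized representatives in S at a common degree
  have hwgen : ∀ k : ℕ, ∃ (M : ℕ) (w : Fin k → (Fin (n+1) → ℝ)),
      (∀ j, w j ∈ S) ∧ (∀ j, w j 0 = (M : ℝ)) ∧ (∀ j j', j ≠ j' →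
        w j - w j' ∉ AddSubgroup.closure (insert σ₀ (Set.range e'))) := by
    intro k
    obtain ⟨g, hgG, hgL⟩ := hreps k
    choose s hsS t htS hgst using fun j => hdiff (g j) (hgG j)
    have hσsum : ∀ F : Finset (Fin k), σ₀ + ∑ j ∈ F, t j ∈ S := by
      intro F
      induction F using Finset.induction with
      | empty => simpa using hσ₀S
      | @insert x F' hx ih =>
        have h3 : σ₀ + ∑ j ∈ insert x F', t j = (σ₀ + ∑ j ∈ F', t j) + t x := by
          rw [Finset.sum_insert hx]; abel
        rw [h3]
        exact hadd _ ih _ (htS x)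
    have huS : ∀ j, g j + (σ₀ + ∑ j', t j') ∈ S := by
      intro j
      have h1 : t j + ∑ j' ∈ Finset.univ.erase j, t j' = ∑ j', t j' :=
        Finset.add_sum_erase _ t (Finset.mem_univ j)
      have h2 : g j + (σ₀ + ∑ j', t j')
          = s j + (σ₀ + ∑ j' ∈ Finset.univ.erase j, t j') := by
        rw [hgst j, ← h1]; abel
      rw [h2]
      exact hadd _ (hsS j) _ (hσsum _)
    choose mu hmu using fun j => hgr _ (huS j)
    refine ⟨Finset.univ.sup (fun j => (mu j).toNat),
      fun j => (g j + (σ₀ + ∑ j', t j'))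
        + ((((Finset.univ.sup (fun j => (mu j).toNat) : ℕ) : ℤ) - mu j).toNat) • σ₀, ?_, ?_, ?_⟩
    · intro j
      exact hS_nsmul _ (huS j) _ hσ₀S _
    · intro j
      have hm1 : (mu j).toNat ≤ Finset.univ.sup (fun j => (mu j).toNat) :=
        Finset.le_sup (f := fun j => (mu j).toNat) (Finset.mem_univ j)
      beta_reduce
      rw [Pi.add_apply, Pi.smul_apply, hσ₀deg, hmu j, nsmul_eq_mul, mul_one]
      exact_mod_cast (show mu j + (((((Finset.univ.sup (fun j => (mu j).toNat) : ℕ) : ℤ) - mu j).toNat : ℤ))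
        = (((Finset.univ.sup (fun j => (mu j).toNat) : ℕ) : ℤ)) by omega)
    · intro j j' hjj' hmem
      apply hgL j j' hjj'
      have key : g j - g j'
          = (((g j + (σ₀ + ∑ j', t j'))
              + ((((Finset.univ.sup (fun j => (mu j).toNat) : ℕ) : ℤ) - mu j).toNat) • σ₀)
            - ((g j' + (σ₀ + ∑ j', t j'))
              + ((((Finset.univ.sup (fun j => (mu j).toNat) : ℕ) : ℤ) - mu j').toNat) • σ₀))
            - ((((Finset.univ.sup (fun j => (mu j).toNat) : ℕ) : ℤ) - mu j).toNat) • σ₀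
            + ((((Finset.univ.sup (fun j => (mu j).toNat) : ℕ) : ℤ) - mu j').toNat) • σ₀ := by
        abel
      rw [key]
      exact AddSubgroup.add_mem _
        (AddSubgroup.sub_mem _ hmem (AddSubgroup.nsmul_mem _ hσ₀L _))
        (AddSubgroup.nsmul_mem _ hσ₀L _)
  -- Step 6: conclude
  intro C hC
  have hΔpos : 0 < 1 + ∑ i, δ i := by omega
  obtain ⟨M, w, hwS, hw0, hwL⟩ := hwgen (⌈C * ((2*(1 + ∑ i, δ i) : ℕ) : ℝ)^n⌉₊ + 1)
  refine ⟨2*M + 1, fun d hd => ?_⟩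
  have hAΔ : M + ((d - M) / (1 + ∑ i, δ i)) * (1 + ∑ i, δ i) ≤ d := by
    have h1 : ((d - M) / (1 + ∑ i, δ i)) * (1 + ∑ i, δ i) ≤ d - M := Nat.div_mul_le_self _ _
    omega
  obtain ⟨p, hpinj, hpmem⟩ := aux_count n _ M d ((d - M) / (1 + ∑ i, δ i)) S hadd σ₀ hσ₀S hσ₀deg
    e' he'S δ hδ hli' w hwS hw0 hwL hAΔ
  rcases Set.finite_or_infinite {x ∈ S | x 0 = (d : ℝ)} with hfin | hinf
  · right
    haveI := hfin.to_subtype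
    have hinj2 : Function.Injective
        (fun x => (⟨p x, hpmem x⟩ : {x ∈ S | x 0 = (d : ℝ)})) :=
      fun x y h => hpinj (congrArg Subtype.val h)
    have hcard := Nat.card_le_card_of_injective _ hinj2
    have hcard2 : Nat.card (Fin (⌈C * ((2*(1 + ∑ i, δ i) : ℕ) : ℝ)^n⌉₊ + 1)
        × (Fin n → Fin ((d - M) / (1 + ∑ i, δ i) + 1)))
        = (⌈C * ((2*(1 + ∑ i, δ i) : ℕ) : ℝ)^n⌉₊ + 1) * ((d - M) / (1 + ∑ i, δ i) + 1)^n := by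
      simp [Nat.card_eq_fintype_card]
    rw [hcard2] at hcard
    have hknum : C * ((2*(1 + ∑ i, δ i) : ℕ) : ℝ)^n
        ≤ ((⌈C * ((2*(1 + ∑ i, δ i) : ℕ) : ℝ)^n⌉₊ + 1 : ℕ) : ℝ) := by
      exact (Nat.le_ceil _).trans (Nat.cast_le.mpr (Nat.le_succ _))
    exact aux_num n M d (1 + ∑ i, δ i) ((d - M) / (1 + ∑ i, δ i))
      (⌈C * ((2*(1 + ∑ i, δ i) : ℕ) : ℝ)^n⌉₊ + 1) _ C hΔpos rfl hd hknum hcard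
  · left
    exact hinf
end

section
/- Let V be a vector space over ℚ and deg : V → ℚ a linear form. Let Σ ⊆ V be a subsemigroup (nonempty, closed under addition) such that deg(σ) ∈ ℤ for all σ ∈ Σ, some σ₀ ∈ Σ satisfies deg(σ₀) = 1, and the ℚ-linear span of Σ is infinite-dimensional. Then the growth rate of the Hilbert function H_Σ is not polynomial: for every natural number r and every C > 0 there exists D such that for all integers d ≥ D, the set Σ_d = {σ ∈ Σ : deg(σ) = d} is infinite or #Σ_d ≥ C·d^{r−1}. -/
section Helpers

variable {V : Type*} [AddCommGroup V] [Module ℚ V] {S : Set V}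

lemma aux_nsmul (hadd : ∀ x ∈ S, ∀ y ∈ S, x + y ∈ S) {x : V} (hx : x ∈ S) :
    ∀ n : ℕ, 1 ≤ n → n • x ∈ S := by
  intro n hn
  induction n with
  | zero => omega
  | succ k ih =>
    rcases Nat.eq_zero_or_pos k with hk | hk
    · subst hk; simpa using hx
    · rw [succ_nsmul]; exact hadd _ (ih hk) _ hx

lemma aux_sum (hadd : ∀ x ∈ S, ∀ y ∈ S, x + y ∈ S) {ι : Type*} (s : Finset ι)
    (hs : s.Nonempty) (f : ι → V) (hf : ∀ i ∈ s, f i ∈ S) : ∑ i ∈ s, f i ∈ S := by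
  induction s using Finset.cons_induction with
  | empty => simp at hs
  | cons a s ha ih =>
    rcases Finset.eq_empty_or_nonempty s with h | h
    · subst h; simpa using hf a (by simp)
    · rw [Finset.sum_cons]
      exact hadd _ (hf a (by simp)) _ (ih h (fun i hi => hf i (by simp [hi])))

lemma aux_span (hinf : ¬ Module.Finite ℚ ↥(Submodule.span ℚ S)) (t : Set V)
    (ht : t.Finite) : ∃ x ∈ S, x ∉ Submodule.span ℚ t := by
  by_contra h
  push_neg at h
  have hS : Submodule.span ℚ S ≤ Submodule.span ℚ t :=
    Submodule.span_le.mpr (fun x hx => h x hx)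
  have : FiniteDimensional ℚ (Submodule.span ℚ t) := FiniteDimensional.span_of_finite ℚ ht
  exact hinf (Submodule.finiteDimensional_of_le hS)

lemma aux_indep (hinf : ¬ Module.Finite ℚ ↥(Submodule.span ℚ S)) {σ₀ : V} (hσS : σ₀ ∈ S)
    (hσ0 : σ₀ ≠ 0) (n : ℕ) :
    ∃ τ : Fin (n + 1) → V, τ 0 = σ₀ ∧ (∀ i, τ i ∈ S) ∧ LinearIndependent ℚ τ := by
  induction n with
  | zero =>
    refine ⟨fun _ => σ₀, rfl, fun _ => hσS, ?_⟩
    show LinearIndependent ℚ (fun _ : Fin 1 => σ₀)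
    exact linearIndependent_unique_iff.mpr hσ0
  | succ k ih =>
    obtain ⟨τ, hτ0, hτS, hτind⟩ := ih
    obtain ⟨x, hxS, hx⟩ := aux_span hinf (Set.range τ) (Set.finite_range τ)
    refine ⟨Fin.snoc τ x, ?_, ?_, ?_⟩
    · rw [show (0 : Fin (k+2)) = Fin.castSucc 0 by rfl, Fin.snoc_castSucc]; exact hτ0
    · intro i
      refine Fin.lastCases ?_ ?_ i
      · simpa using hxS
      · intro j; rw [Fin.snoc_castSucc]; exact hτS j
    · exact linearIndependent_fin_snoc.mpr ⟨hτind, hx⟩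

end Helpers

theorem stmt2 {V : Type*} [AddCommGroup V] [Module ℚ V] (deg : V →ₗ[ℚ] ℚ)
    (S : Set V) (hne : S.Nonempty) (hadd : ∀ x ∈ S, ∀ y ∈ S, x + y ∈ S)
    (hint : ∀ x ∈ S, ∃ m : ℤ, deg x = (m : ℚ))
    (hdeg1 : ∃ σ₀ ∈ S, deg σ₀ = 1)
    (hinf : ¬ Module.Finite ℚ ↥(Submodule.span ℚ S)) :
    ∀ r : ℕ, ∀ C : ℝ, 0 < C → ∃ D : ℕ, ∀ d : ℕ, D ≤ d →
      {x ∈ S | deg x = (d : ℚ)}.Infinite ∨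
      C * (d : ℝ) ^ (r - 1) ≤ (Nat.card {x ∈ S | deg x = (d : ℚ)} : ℝ) := by
  classical
  obtain ⟨σ₀, hσS, hσdeg⟩ := hdeg1
  have hσ0 : σ₀ ≠ 0 := by
    intro h; rw [h] at hσdeg; simp at hσdeg
  suffices H : ∀ r : ℕ, 1 ≤ r → ∀ C : ℝ, 0 < C → ∃ D : ℕ, ∀ d : ℕ, D ≤ d →
      {x ∈ S | deg x = (d : ℚ)}.Infinite ∨
      C * (d : ℝ) ^ (r - 1) ≤ (Nat.card {x ∈ S | deg x = (d : ℚ)} : ℝ) by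
    intro r C hC
    obtain ⟨D, hD⟩ := H (max r 1) (le_max_right r 1) C hC
    refine ⟨D, fun d hd => ?_⟩
    have hmr : max r 1 - 1 = r - 1 := by omega
    rw [← hmr]
    exact hD d hd
  intro r hr C hC
  -- linearly independent family
  obtain ⟨τ, hτ0, hτS, hτind⟩ := aux_indep hinf hσS hσ0 r
  choose m hm using fun i : Fin r => hint _ (hτS i.succ)
  set N : Fin r → ℕ := fun i => (1 - m i).toNat + 1 with hN
  set e : Fin r → ℕ := fun i => (m i + N i).toNat with he
  have he1 : ∀ i, 1 ≤ e i := by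
    intro i; simp only [he, hN]; omega
  have heq : ∀ i, ((e i : ℤ) : ℚ) = (m i : ℚ) + (N i : ℚ) := by
    intro i
    have : (e i : ℤ) = m i + N i := by simp only [he, hN]; omega
    rw [this]; push_cast; ring
  set υ : Fin r → V := fun i => τ i.succ + N i • σ₀ with hυ
  have hυS : ∀ i, υ i ∈ S :=
    fun i => hadd _ (hτS i.succ) _ (aux_nsmul hadd hσS (N i) (by simp [hN]))
  have hυdeg : ∀ i, deg (υ i) = (e i : ℚ) := by
    intro i
    simp only [hυ, map_add, map_nsmul, hm i, hσdeg, smul_eq_mul, mul_one]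
    rw [show ((e i : ℚ)) = ((e i : ℤ) : ℚ) by push_cast; ring, heq]
    simp
  set K : ℕ := ∑ i, e i with hK
  have hK1 : 1 ≤ K := by
    calc 1 ≤ r := hr
    _ = ∑ _i : Fin r, 1 := by simp
    _ ≤ K := Finset.sum_le_sum (fun i _ => he1 i)
  refine ⟨max (2 * K) (⌈C * ((2 * K : ℕ) : ℝ) ^ r⌉₊ + 1), fun d hd => ?_⟩
  have hd2K : 2 * K ≤ d := le_trans (le_max_left _ _) hd
  have hd1 : 1 ≤ d := by omega
  have hCd : C * ((2 * K : ℕ) : ℝ) ^ r ≤ (d : ℝ) := by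
    have h1 : (⌈C * ((2 * K : ℕ) : ℝ) ^ r⌉₊ : ℝ) ≤ (d : ℝ) := by
      exact_mod_cast le_trans (le_trans (Nat.le_succ _) (le_max_right _ _)) hd
    exact le_trans (Nat.le_ceil _) h1
  by_cases hfin : {x ∈ S | deg x = (d : ℚ)}.Finite
  swap
  · exact Or.inl hfin
  right
  set B : ℕ := (d - 1) / K with hB
  have hB1 : 1 ≤ B := by
    rw [hB, Nat.one_le_div_iff (by omega)]; omega
  have hBK : B * K ≤ d - 1 := by
    rw [hB]; exact Nat.div_mul_le_self _ _
  obtain ⟨R, hR1, hR2⟩ : ∃ R, K * B + R = d - 1 ∧ R < K :=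
    ⟨(d - 1) % K, Nat.div_add_mod _ _, Nat.mod_lt _ (by omega)⟩
  have hdKB : d ≤ 2 * K * B := by
    have h3 : 2 * K * B = K * B + K * B := by ring
    omega
  haveI : Nonempty (Fin r) := ⟨⟨0, hr⟩⟩
  set A : Finset (Fin r → ℕ) := Finset.Icc 1 (fun _ => B) with hA
  have hmemA : ∀ a ∈ A, (∀ i, 1 ≤ a i ∧ a i ≤ B) := by
    intro a ha
    simp only [hA, Finset.mem_Icc, Pi.le_def] at ha
    intro i; exact ⟨ha.1 i, ha.2 i⟩
  have hsumle : ∀ a ∈ A, ∑ i, a i * e i ≤ d - 1 := by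
    intro a ha
    calc ∑ i, a i * e i ≤ ∑ i, B * e i :=
          Finset.sum_le_sum (fun i _ => Nat.mul_le_mul_right _ ((hmemA a ha) i).2)
    _ = B * K := by rw [hK, Finset.mul_sum]
    _ ≤ d - 1 := hBK
  set F : (Fin r → ℕ) → V := fun a => (∑ i, a i • υ i) + (d - ∑ i, a i * e i) • σ₀ with hF
  have hFS : ∀ a ∈ A, F a ∈ S ∧ deg (F a) = (d : ℚ) := by
    intro a ha
    have h1 : ∑ i, a i * e i ≤ d - 1 := hsumle a ha
    constructor
    · refine hadd _ ?_ _ (aux_nsmul hadd hσS _ (by omega))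
      exact aux_sum hadd Finset.univ Finset.univ_nonempty _
        (fun i _ => aux_nsmul hadd (hυS i) _ ((hmemA a ha) i).1)
    · simp only [hF, map_add, map_sum, map_nsmul, hυdeg, hσdeg, smul_eq_mul, mul_one,
        nsmul_eq_mul]
      rw [Nat.cast_sub (by omega)]
      push_cast
      ring
  set G : (Fin r → ℕ) → Fin (r + 1) → ℚ := fun a =>
    Fin.cons ((d : ℚ) - (∑ i, (a i : ℚ) * (e i : ℚ)) + ∑ i, (a i : ℚ) * (N i : ℚ))
      (fun i => (a i : ℚ)) with hG
  have key : ∀ a : Fin r → ℕ, ∑ i, a i * e i ≤ d - 1 → F a = ∑ j, G a j • τ j := by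
    intro a hs
    rw [Fin.sum_univ_succ]
    simp only [hG, Fin.cons_zero, Fin.cons_succ, hτ0]
    have h1 : ∀ i : Fin r, (a i : ℚ) • τ i.succ = a i • τ i.succ :=
      fun i => Nat.cast_smul_eq_nsmul ℚ _ _
    simp only [h1]
    have h2 : ((d : ℚ) - (∑ i, (a i : ℚ) * (e i : ℚ)) + ∑ i, (a i : ℚ) * (N i : ℚ)) =
        (((d - ∑ i, a i * e i) + ∑ i, a i * N i : ℕ) : ℚ) := by
      rw [Nat.cast_add, Nat.cast_sub (by omega)]
      push_cast
      ring
    rw [h2, Nat.cast_smul_eq_nsmul]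
    rw [hF, hυ]
    simp only [smul_add, Finset.sum_add_distrib, smul_smul]
    rw [← Finset.sum_smul, add_smul]
    abel
  have hFinj : Set.InjOn F ↑A := by
    intro a ha b hb hab
    rw [Finset.mem_coe] at ha hb
    have h0 : ∑ j, (G a j - G b j) • τ j = 0 := by
      simp only [sub_smul, Finset.sum_sub_distrib, ← key a (hsumle a ha),
        ← key b (hsumle b hb), hab, sub_self]
    have hall := Fintype.linearIndependent_iff.mp hτind _ h0
    funext i
    have hi := hall i.succ
    simp only [hG, Fin.cons_succ, sub_eq_zero] at hi
    exact_mod_cast hi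
  have hcard : (A.image F).card = B ^ r := by
    rw [Finset.card_image_of_injOn hFinj, hA, Pi.card_Icc]
    simp [Nat.card_Icc, Finset.prod_const]
  have hsubset : ↑(A.image F) ⊆ {x ∈ S | deg x = (d : ℚ)} := by
    intro x hx
    simp only [Finset.coe_image, Set.mem_image, Finset.mem_coe] at hx
    obtain ⟨a, ha, rfl⟩ := hx
    exact ⟨(hFS a ha).1, (hFS a ha).2⟩
  have hBcard : (B : ℝ) ^ r ≤ (Nat.card {x ∈ S | deg x = (d : ℚ)} : ℝ) := by
    have h1 : B ^ r ≤ Nat.card {x ∈ S | deg x = (d : ℚ)} := by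
      rw [Nat.card_coe_set_eq]
      calc B ^ r = (A.image F).card := hcard.symm
      _ = (↑(A.image F) : Set V).ncard := (Set.ncard_coe_finset _).symm
      _ ≤ _ := Set.ncard_le_ncard hsubset hfin
    exact_mod_cast h1
  have hK0 : (0 : ℝ) < ((2 * K : ℕ) : ℝ) := by
    have : 0 < 2 * K := by omega
    exact_mod_cast this
  have hKpow : (0 : ℝ) < ((2 * K : ℕ) : ℝ) ^ r := pow_pos hK0 r
  have h2 : (d : ℝ) ^ r ≤ ((2 * K : ℕ) : ℝ) ^ r * (B : ℝ) ^ r := by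
    rw [← mul_pow]
    refine pow_le_pow_left₀ (by positivity) ?_ r
    exact_mod_cast hdKB
  have hdpow : (d : ℝ) ^ r = (d : ℝ) ^ (r - 1) * d := by
    rw [← pow_succ]; congr 1; omega
  calc C * (d : ℝ) ^ (r - 1) ≤ (d : ℝ) ^ r / ((2 * K : ℕ) : ℝ) ^ r := by
        rw [le_div_iff₀ hKpow, hdpow]
        calc C * (d : ℝ) ^ (r - 1) * ((2 * K : ℕ) : ℝ) ^ r
            = (d : ℝ) ^ (r - 1) * (C * ((2 * K : ℕ) : ℝ) ^ r) := by ring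
        _ ≤ (d : ℝ) ^ (r - 1) * (d : ℝ) :=
            mul_le_mul_of_nonneg_left hCd (by positivity)
  _ ≤ (B : ℝ) ^ r := by
        rw [div_le_iff₀ hKpow]
        linarith [h2]
  _ ≤ (Nat.card {x ∈ S | deg x = (d : ℚ)} : ℝ) := hBcard
end

section
/- Let M be a commutative monoid (written additively), r ≥ 1, and let ι₁, ι₂ : M → ℝ^r be injective additive maps such that for both j = 1, 2: (i) the first components agree, i.e. (ι₁(σ))₁ = (ι₂(σ))₁ =: deg(σ) ∈ ℤ for every σ ∈ M; (ii) the subgroup of ℝ^r generated by ι_j(M) equals ℤ^r. For j = 1, 2 let Δ_j ⊆ ℝ^{r−1} be the topological closure of { (1/deg(σ))·((ι_j(σ))₂, …, (ι_j(σ))_r) : σ ∈ M, deg(σ) ≠ 0 }. Then there exist a matrix A ∈ GL_{r−1}(ℤ) (an integer (r−1)×(r−1) matrix with integer inverse) and a vector b ∈ ℤ^{r−1} such that the affine map y ↦ A·y + b carries Δ₁ onto Δ₂. -/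
theorem auxT {M : Type*} [AddCommMonoid M] {r : ℕ} (j j' : M → Fin r → ℤ)
    (hjadd : ∀ a b : M, j (a + b) = j a + j b)
    (hj'add : ∀ a b : M, j' (a + b) = j' a + j' b)
    (hjinj : Function.Injective j)
    (hrep : ∀ x : Fin r → ℤ, ∃ a b : M, x = j a - j b) :
    ∃ T : (Fin r → ℤ) → Fin r → ℤ,
      (∀ a b : M, T (j a - j b) = j' a - j' b) ∧ (∀ x y, T (x + y) = T x + T y) := by
  classical
  have hwd : ∀ a b c d : M, j a - j b = j c - j d → j' a - j' b = j' c - j' d := by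
    intro a b c d h
    have h1 : j (a + d) = j (c + b) := by
      rw [hjadd, hjadd]
      rw [sub_eq_sub_iff_add_eq_add] at h
      exact h
    have h2 : a + d = c + b := hjinj h1
    have h3 : j' a + j' d = j' c + j' b := by
      rw [← hj'add, ← hj'add, h2]
    rw [sub_eq_sub_iff_add_eq_add]
    exact h3
  have hrep' : ∀ x : Fin r → ℤ, ∃ p : M × M, x = j p.1 - j p.2 := by
    intro x
    obtain ⟨a, b, h⟩ := hrep x
    exact ⟨(a, b), h⟩
  refine ⟨fun x => j' (hrep' x).choose.1 - j' (hrep' x).choose.2, ?_, ?_⟩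
  · intro a b
    exact hwd _ _ a b ((hrep' (j a - j b)).choose_spec).symm
  · intro x y
    obtain ⟨a₁, a₂, hx⟩ := hrep x
    obtain ⟨b₁, b₂, hy⟩ := hrep y
    have hx' : j' (hrep' x).choose.1 - j' (hrep' x).choose.2 = j' a₁ - j' a₂ :=
      hwd _ _ _ _ (by rw [← (hrep' x).choose_spec, hx])
    have hy' : j' (hrep' y).choose.1 - j' (hrep' y).choose.2 = j' b₁ - j' b₂ :=
      hwd _ _ _ _ (by rw [← (hrep' y).choose_spec, hy])
    have hxy : j' (hrep' (x + y)).choose.1 - j' (hrep' (x + y)).choose.2 =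
        j' (a₁ + b₁) - j' (a₂ + b₂) := by
      refine hwd _ _ _ _ ?_
      rw [← (hrep' (x + y)).choose_spec, hx, hy, hjadd, hjadd]
      abel
    dsimp only
    rw [hx', hy', hxy, hj'add, hj'add]
    abel


theorem auxHomeo {α : Type*} [TopologicalSpace α] (f g : α → α)
    (hgf : Function.LeftInverse g f) (hfg : Function.RightInverse g f)
    (hfc : Continuous f) (hgc : Continuous g) {S T : Set α} (hST : f '' S = T) :
    f '' closure S = closure T := by
  let h : Homeomorph α α := ⟨⟨f, g, hgf, hfg⟩, hfc, hgc⟩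
  rw [← hST]
  exact h.image_closure S

theorem stmt5 {M : Type*} [AddCommMonoid M] (n : ℕ)
    (ι₁ ι₂ : M → (Fin (n + 1) → ℝ))
    (hadd₁ : ∀ a b : M, ι₁ (a + b) = ι₁ a + ι₁ b)
    (hadd₂ : ∀ a b : M, ι₂ (a + b) = ι₂ a + ι₂ b)
    (hinj₁ : Function.Injective ι₁) (hinj₂ : Function.Injective ι₂)
    (hfst : ∀ σ : M, ι₁ σ 0 = ι₂ σ 0)
    (hdegint : ∀ σ : M, ∃ m : ℤ, ι₁ σ 0 = (m : ℝ))
    (hgrp₁ : (AddSubgroup.closure (Set.range ι₁) : Set (Fin (n + 1) → ℝ)) =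
      {x | ∀ i, ∃ m : ℤ, x i = (m : ℝ)})
    (hgrp₂ : (AddSubgroup.closure (Set.range ι₂) : Set (Fin (n + 1) → ℝ)) =
      {x | ∀ i, ∃ m : ℤ, x i = (m : ℝ)}) :
    ∃ A : Matrix (Fin n) (Fin n) ℤ, IsUnit A ∧ ∃ b : Fin n → ℤ,
      (fun y : Fin n → ℝ =>
          (A.map (Int.cast : ℤ → ℝ)).mulVec y + fun i : Fin n => (b i : ℝ)) ''
        closure {y : Fin n → ℝ | ∃ σ : M, ι₁ σ 0 ≠ 0 ∧
          y = fun i : Fin n => ι₁ σ i.succ / ι₁ σ 0} =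
      closure {y : Fin n → ℝ | ∃ σ : M, ι₂ σ 0 ≠ 0 ∧
          y = fun i : Fin n => ι₂ σ i.succ / ι₂ σ 0} := by
  classical
  -- all coordinates are integers
  have hintA : ∀ (σ : M) (i : Fin (n + 1)), ∃ m : ℤ, ι₁ σ i = (m : ℝ) := by
    intro σ i
    have h : ι₁ σ ∈ (AddSubgroup.closure (Set.range ι₁) : Set (Fin (n + 1) → ℝ)) :=
      AddSubgroup.subset_closure ⟨σ, rfl⟩
    rw [hgrp₁] at h
    exact h i
  have hintB : ∀ (σ : M) (i : Fin (n + 1)), ∃ m : ℤ, ι₂ σ i = (m : ℝ) := by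
    intro σ i
    have h : ι₂ σ ∈ (AddSubgroup.closure (Set.range ι₂) : Set (Fin (n + 1) → ℝ)) :=
      AddSubgroup.subset_closure ⟨σ, rfl⟩
    rw [hgrp₂] at h
    exact h i
  obtain ⟨jA, hjA⟩ : ∃ j : M → Fin (n + 1) → ℤ, ∀ σ i, ((j σ i : ℤ) : ℝ) = ι₁ σ i :=
    ⟨fun σ i => (hintA σ i).choose, fun σ i => ((hintA σ i).choose_spec).symm⟩
  obtain ⟨jB, hjB⟩ : ∃ j : M → Fin (n + 1) → ℤ, ∀ σ i, ((j σ i : ℤ) : ℝ) = ι₂ σ i :=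
    ⟨fun σ i => (hintB σ i).choose, fun σ i => ((hintB σ i).choose_spec).symm⟩
  have castinj : ∀ x y : Fin (n + 1) → ℤ, (∀ i, (x i : ℝ) = (y i : ℝ)) → x = y :=
    fun x y h => funext fun i => Int.cast_injective (h i)
  have hjAadd : ∀ a b : M, jA (a + b) = jA a + jA b := by
    intro a b
    refine castinj _ _ fun i => ?_
    simp only [Pi.add_apply, Int.cast_add, hjA]
    rw [hadd₁]
    rfl
  have hjBadd : ∀ a b : M, jB (a + b) = jB a + jB b := by
    intro a b
    refine castinj _ _ fun i => ?_
    simp only [Pi.add_apply, Int.cast_add, hjB]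
    rw [hadd₂]
    rfl
  have hjAinj : Function.Injective jA := by
    intro a b h
    exact hinj₁ (funext fun i => by rw [← hjA, ← hjA, h])
  have hjBinj : Function.Injective jB := by
    intro a b h
    exact hinj₂ (funext fun i => by rw [← hjB, ← hjB, h])
  have h0A : ι₁ (0 : M) = 0 := by
    have h := hadd₁ 0 0
    rw [add_zero] at h
    exact (left_eq_add.mp h)
  have h0B : ι₂ (0 : M) = 0 := by
    have h := hadd₂ 0 0
    rw [add_zero] at h
    exact (left_eq_add.mp h)
  have hjA0 : jA 0 = 0 := by
    refine castinj _ _ fun i => ?_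
    rw [hjA, h0A]
    simp
  have hjB0 : jB 0 = 0 := by
    refine castinj _ _ fun i => ?_
    rw [hjB, h0B]
    simp
  -- representation of every integer vector as a difference
  have hrepA : ∀ x : Fin (n + 1) → ℤ, ∃ a b : M, x = jA a - jA b := by
    intro x
    have hx : (fun i => (x i : ℝ)) ∈
        (AddSubgroup.closure (Set.range ι₁) : Set (Fin (n + 1) → ℝ)) := by
      rw [hgrp₁]
      exact fun i => ⟨x i, rfl⟩
    let S : AddSubgroup (Fin (n + 1) → ℝ) :=
      { carrier := {y | ∃ a b : M, y = ι₁ a - ι₁ b}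
        zero_mem' := ⟨0, 0, by simp [h0A]⟩
        add_mem' := by
          rintro y z ⟨a, b, rfl⟩ ⟨c, d, rfl⟩
          exact ⟨a + c, b + d, by rw [hadd₁, hadd₁]; abel⟩
        neg_mem' := by
          rintro y ⟨a, b, rfl⟩
          exact ⟨b, a, by abel⟩ }
    have hle : AddSubgroup.closure (Set.range ι₁) ≤ S := by
      rw [AddSubgroup.closure_le]
      rintro y ⟨a, rfl⟩
      exact ⟨a, 0, by simp [h0A]⟩
    obtain ⟨a, b, hab⟩ := hle hx
    refine ⟨a, b, castinj _ _ fun i => ?_⟩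
    have h := congrFun hab i
    simp only [Pi.sub_apply] at h ⊢
    push_cast
    rw [hjA, hjA]
    exact h
  have hrepB : ∀ x : Fin (n + 1) → ℤ, ∃ a b : M, x = jB a - jB b := by
    intro x
    have hx : (fun i => (x i : ℝ)) ∈
        (AddSubgroup.closure (Set.range ι₂) : Set (Fin (n + 1) → ℝ)) := by
      rw [hgrp₂]
      exact fun i => ⟨x i, rfl⟩
    let S : AddSubgroup (Fin (n + 1) → ℝ) :=
      { carrier := {y | ∃ a b : M, y = ι₂ a - ι₂ b}
        zero_mem' := ⟨0, 0, by simp [h0B]⟩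
        add_mem' := by
          rintro y z ⟨a, b, rfl⟩ ⟨c, d, rfl⟩
          exact ⟨a + c, b + d, by rw [hadd₂, hadd₂]; abel⟩
        neg_mem' := by
          rintro y ⟨a, b, rfl⟩
          exact ⟨b, a, by abel⟩ }
    have hle : AddSubgroup.closure (Set.range ι₂) ≤ S := by
      rw [AddSubgroup.closure_le]
      rintro y ⟨a, rfl⟩
      exact ⟨a, 0, by simp [h0B]⟩
    obtain ⟨a, b, hab⟩ := hle hx
    refine ⟨a, b, castinj _ _ fun i => ?_⟩
    have h := congrFun hab i
    simp only [Pi.sub_apply] at h ⊢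
    push_cast
    rw [hjB, hjB]
    exact h
  -- the automorphisms
  obtain ⟨TA, hTA, hTAadd⟩ := auxT jA jB hjAadd hjBadd hjAinj hrepA
  obtain ⟨TB, hTB, hTBadd⟩ := auxT jB jA hjBadd hjAadd hjBinj hrepB
  have hTAx : ∀ x, ∃ a b : M, x = jA a - jA b ∧ TA x = jB a - jB b := by
    intro x
    obtain ⟨a, b, h⟩ := hrepA x
    exact ⟨a, b, h, by rw [h, hTA]⟩
  have hTBx : ∀ x, ∃ a b : M, x = jB a - jB b ∧ TB x = jA a - jA b := by
    intro x
    obtain ⟨a, b, h⟩ := hrepB x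
    exact ⟨a, b, h, by rw [h, hTB]⟩
  have hTAj : ∀ σ : M, TA (jA σ) = jB σ := by
    intro σ
    have h : jA σ = jA σ - jA 0 := by rw [hjA0, sub_zero]
    rw [h, hTA, hjB0, sub_zero]
  have hTBTA : ∀ x, TB (TA x) = x := by
    intro x
    obtain ⟨a, b, hx, hx'⟩ := hTAx x
    rw [hx', hTB, hx]
  have hTATB : ∀ x, TA (TB x) = x := by
    intro x
    obtain ⟨a, b, hx, hx'⟩ := hTBx x
    rw [hx', hTA, hx]
  have hfstj : ∀ σ : M, jA σ 0 = jB σ 0 := fun σ =>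
    Int.cast_injective (by rw [hjA, hjB, hfst])
  have hTA0 : ∀ x, TA x 0 = x 0 := by
    intro x
    obtain ⟨a, b, hx, hx'⟩ := hTAx x
    rw [hx', hx]
    simp only [Pi.sub_apply]
    rw [hfstj, hfstj]
  have hTB0 : ∀ x, TB x 0 = x 0 := by
    intro x
    obtain ⟨a, b, hx, hx'⟩ := hTBx x
    rw [hx', hx]
    simp only [Pi.sub_apply]
    rw [hfstj, hfstj]
  -- expansion lemmas
  have hexp : ∀ (T : (Fin (n + 1) → ℤ) → Fin (n + 1) → ℤ),
      (∀ x y, T (x + y) = T x + T y) →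
      ∀ (x : Fin (n + 1) → ℤ) (i : Fin (n + 1)),
      T x i = x 0 * T (Pi.single 0 1) i +
        ∑ k : Fin n, x k.succ * T (Pi.single k.succ 1) i := by
    intro T hTadd x i
    set Φ : (Fin (n + 1) → ℤ) →+ (Fin (n + 1) → ℤ) := AddMonoidHom.mk' T hTadd with hΦ
    have hx : x = ∑ j : Fin (n + 1), x j • Pi.single j (1 : ℤ) := by
      funext l
      rw [Finset.sum_apply]
      simp [Pi.single_apply]
    have h1 : T x = ∑ j : Fin (n + 1), x j • T (Pi.single j (1 : ℤ)) := by
      conv_lhs => rw [show T = ⇑Φ from rfl, hx, map_sum]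
      exact Finset.sum_congr rfl fun j _ => by
        rw [show T = ⇑Φ from rfl, ← map_zsmul Φ]
    have h2 := congrFun h1 i
    rw [Finset.sum_apply] at h2
    simp only [Pi.smul_apply, smul_eq_mul] at h2
    rw [h2, Fin.sum_univ_succ]
  -- key matrix identity
  have hkey : ∀ (T T' : (Fin (n + 1) → ℤ) → Fin (n + 1) → ℤ),
      (∀ x y, T (x + y) = T x + T y) → (∀ x y, T' (x + y) = T' x + T' y) →
      (∀ x, T' (T x) = x) → (∀ x, T x 0 = x 0) →
      ∀ i l : Fin n,
        ∑ k : Fin n, T (Pi.single l.succ 1) k.succ * T' (Pi.single k.succ 1) i.succ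
          = if i = l then 1 else 0 := by
    intro T T' hTa hT'a hinv hT0 i l
    have h2 := congrFun (hinv (Pi.single l.succ 1)) i.succ
    rw [hexp T' hT'a (T (Pi.single l.succ 1)) i.succ, hT0] at h2
    have hz : (Pi.single l.succ 1 : Fin (n + 1) → ℤ) 0 = 0 := by
      rw [Pi.single_apply, if_neg (Ne.symm (Fin.succ_ne_zero l))]
    have hv : (Pi.single l.succ 1 : Fin (n + 1) → ℤ) i.succ = if i = l then 1 else 0 := by
      rw [Pi.single_apply]
      simp [Fin.succ_inj]
    rw [hz, hv, zero_mul, zero_add] at h2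
    exact h2
  have hA'A : (Matrix.of fun i k => TB (Pi.single k.succ 1) i.succ) *
      (Matrix.of fun i k => TA (Pi.single k.succ 1) i.succ) = (1 : Matrix (Fin n) (Fin n) ℤ) := by
    ext i l
    rw [Matrix.mul_apply, Matrix.one_apply, ← hkey TA TB hTAadd hTBadd hTBTA hTA0 i l]
    refine Finset.sum_congr rfl fun k _ => ?_
    simp only [Matrix.of_apply]
    ring
  have hAA' : (Matrix.of fun i k => TA (Pi.single k.succ 1) i.succ) *
      (Matrix.of fun i k => TB (Pi.single k.succ 1) i.succ) = (1 : Matrix (Fin n) (Fin n) ℤ) := by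
    ext i l
    rw [Matrix.mul_apply, Matrix.one_apply, ← hkey TB TA hTBadd hTAadd hTATB hTB0 i l]
    refine Finset.sum_congr rfl fun k _ => ?_
    simp only [Matrix.of_apply]
    ring
  -- the real-valued expansion
  have hcast : ∀ (σ : M) (i : Fin n),
      ι₂ σ i.succ = ι₁ σ 0 * ((TA (Pi.single 0 1) i.succ : ℤ) : ℝ) +
        ∑ k : Fin n, ι₁ σ k.succ * ((TA (Pi.single k.succ 1) i.succ : ℤ) : ℝ) := by
    intro σ i
    have h1 := hexp TA hTAadd (jA σ) i.succ
    rw [hTAj σ] at h1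
    have h2 := congrArg (fun z : ℤ => (z : ℝ)) h1
    push_cast at h2
    simp only [hjA, hjB] at h2
    exact h2
  refine ⟨Matrix.of fun i k => TA (Pi.single k.succ 1) i.succ,
    ⟨⟨Matrix.of fun i k => TA (Pi.single k.succ 1) i.succ,
      Matrix.of fun i k => TB (Pi.single k.succ 1) i.succ, hAA', hA'A⟩, rfl⟩,
    fun i => TA (Pi.single 0 1) i.succ, ?_⟩
  have hmapmul : ∀ P Q : Matrix (Fin n) (Fin n) ℤ,
      ((P * Q).map (Int.cast : ℤ → ℝ)) = P.map (Int.cast : ℤ → ℝ) * Q.map (Int.cast : ℤ → ℝ) :=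
    fun P Q => Matrix.map_mul (f := Int.castRingHom ℝ)
  have hmapone : ((1 : Matrix (Fin n) (Fin n) ℤ).map (Int.cast : ℤ → ℝ)) = 1 :=
    Matrix.map_one _ (by simp) (by simp)
  have hcontmul : ∀ P : Matrix (Fin n) (Fin n) ℝ, Continuous fun y : Fin n → ℝ => P.mulVec y := by
    intro P
    refine continuous_pi fun i => ?_
    simp only [Matrix.mulVec, dotProduct]
    exact continuous_finset_sum _ fun k _ => continuous_const.mul (continuous_apply k)
  refine auxHomeo _
    (fun z : Fin n → ℝ =>
      ((Matrix.of fun i k => TB (Pi.single k.succ 1) i.succ).map (Int.cast : ℤ → ℝ)).mulVec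
        (z - fun i => ((TA (Pi.single 0 1) i.succ : ℤ) : ℝ)))
    ?_ ?_ ?_ ?_ ?_
  · -- left inverse
    intro y
    dsimp only
    rw [add_sub_cancel_right, Matrix.mulVec_mulVec, ← hmapmul, hA'A, hmapone, Matrix.one_mulVec]
  · -- right inverse
    intro z
    dsimp only
    rw [Matrix.mulVec_mulVec, ← hmapmul, hAA', hmapone, Matrix.one_mulVec, sub_add_cancel]
  · exact (hcontmul _).add continuous_const
  · exact (hcontmul _).comp (continuous_id.sub continuous_const)
  · -- image of the base set
    have himg : ∀ σ : M, ι₁ σ 0 ≠ 0 →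
        (((Matrix.of fun i k => TA (Pi.single k.succ 1) i.succ : Matrix (Fin n) (Fin n) ℤ).map
            (Int.cast : ℤ → ℝ)).mulVec (fun i => ι₁ σ i.succ / ι₁ σ 0) +
          fun i => ((TA (Pi.single 0 1) i.succ : ℤ) : ℝ)) =
        fun i : Fin n => ι₂ σ i.succ / ι₂ σ 0 := by
      intro σ hd
      funext i
      simp only [Pi.add_apply, Matrix.mulVec, dotProduct, Matrix.map_apply,
        Matrix.of_apply]
      rw [← hfst σ, hcast σ i]
      have hsum : ∑ k : Fin n, ((TA (Pi.single k.succ 1) i.succ : ℤ) : ℝ) *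
          (ι₁ σ k.succ / ι₁ σ 0) =
          (∑ k : Fin n, ι₁ σ k.succ * ((TA (Pi.single k.succ 1) i.succ : ℤ) : ℝ)) / ι₁ σ 0 := by
        rw [Finset.sum_div]
        exact Finset.sum_congr rfl fun k _ => by ring
      rw [hsum]
      field_simp
      ring
    ext z
    simp only [Set.mem_image, Set.mem_setOf_eq]
    constructor
    · rintro ⟨y, ⟨σ, hd, rfl⟩, rfl⟩
      refine ⟨σ, by rw [← hfst]; exact hd, ?_⟩
      exact himg σ hd
    · rintro ⟨σ, hd, rfl⟩
      have hd1 : ι₁ σ 0 ≠ 0 := by rw [hfst]; exact hd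
      exact ⟨_, ⟨σ, hd1, rfl⟩, himg σ hd1⟩
end

section
/- Let M be a commutative monoid equipped with a linear order ≤ that is compatible with addition (σ < τ implies σ + ρ < τ + ρ for all ρ ∈ M), and let deg : M → ℤ be a monotone additive map such that the subgroup of ℤ generated by deg(M) is ℤ. Let r ≥ 1 and let ι₁, ι₂ : M → ℝ^r be injective additive maps that are order embeddings for the lexicographic order on ℝ^r with first coordinate most significant (σ ≤ τ if and only if ι_j(σ) ≤_lex ι_j(τ)), and such that the subgroup of ℝ^r generated by ι_j(M) equals ℤ^r for both j = 1, 2. Then: (1) (ι_j(σ))₁ = deg(σ) for every σ ∈ M and both j; (2) there exist a lower-triangular integer matrix A ∈ SL_{r−1}(ℤ) with all diagonal entries equal to 1 and a vector b ∈ ℤ^{r−1} such that the affine map y ↦ A·y + b carries Δ₁ onto Δ₂, where Δ_j ⊆ ℝ^{r−1} is the topological closure of { (1/deg(σ))·((ι_j(σ))₂, …, (ι_j(σ))_r) : σ ∈ M, deg(σ) ≠ 0 }. -/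
/-- Strict lexicographic order on `ℝ^r`, first coordinate most significant. -/
def rlexLT {r : ℕ} (x y : Fin r → ℝ) : Prop :=
  ∃ i : Fin r, x i < y i ∧ ∀ j : Fin r, j < i → x j = y j

/-- Lexicographic order on `ℝ^r`, first coordinate most significant. -/
def rlexLE {r : ℕ} (x y : Fin r → ℝ) : Prop :=
  rlexLT x y ∨ x = y

lemma rlex_first {r : ℕ} {x y : Fin (r+1) → ℝ} (h : rlexLE x y) : x 0 ≤ y 0 := by
  rcases h with ⟨i, hi, hj⟩ | rfl
  · rcases eq_or_ne i 0 with rfl | hne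
    · exact le_of_lt hi
    · exact le_of_eq (hj 0 (Fin.pos_of_ne_zero hne))
  · exact le_rfl

lemma rlex_of_first {r : ℕ} {x y : Fin (r+1) → ℝ} (h : x 0 < y 0) : rlexLE x y :=
  Or.inl ⟨0, h, fun j hj => absurd hj (Nat.not_lt_zero _)⟩

lemma rlex_sub {r : ℕ} (x y : Fin r → ℝ) : rlexLE x y ↔ rlexLE 0 (y - x) := by
  unfold rlexLE rlexLT
  constructor
  · rintro (⟨i, hi, hj⟩ | rfl)
    · exact Or.inl ⟨i, by simpa using hi, fun j hj' => by simp [hj j hj']⟩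
    · exact Or.inr (by simp)
  · rintro (⟨i, hi, hj⟩ | h)
    · refine Or.inl ⟨i, by simpa [sub_pos] using hi, fun j hj' => ?_⟩
      have := (hj j hj').symm
      simp only [Pi.sub_apply, Pi.zero_apply, sub_eq_zero] at this
      exact this.symm
    · exact Or.inr (by have := h.symm; rwa [sub_eq_zero, eq_comm] at this)

lemma rlex_coord {r : ℕ} {w : Fin r → ℝ} (h : rlexLE 0 w) (j : Fin r)
    (hz : ∀ j', j' < j → w j' = 0) : 0 ≤ w j := by
  rcases h with ⟨i, hi, hji⟩ | h
  · simp only [Pi.zero_apply] at hi hji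
    rcases lt_trichotomy i j with hlt | rfl | hlt
    · exact absurd (hz i hlt) (ne_of_gt hi)
    · exact le_of_lt hi
    · exact le_of_eq (hji j hlt)
  · simp [← h]

section Rep
variable {M : Type*} [AddCommMonoid M] {r : ℕ} (ι : M → (Fin (r+1) → ℝ))

/-- every integer vector is a difference of two values of ι -/
lemma rep_lemma (hadd : ∀ a b : M, ι (a + b) = ι a + ι b)
    (hgrp : (AddSubgroup.closure (Set.range ι) : Set (Fin (r + 1) → ℝ)) =
      {x | ∀ i, ∃ m : ℤ, x i = (m : ℝ)})
    (z : Fin (r+1) → ℝ) (hz : ∀ i, ∃ m : ℤ, z i = (m : ℝ)) :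
    ∃ a b : M, z = ι a - ι b := by
  have hι0 : ι 0 = 0 := by
    have := hadd 0 0
    rw [add_zero] at this
    exact (left_eq_add.mp this)
  have hzmem : z ∈ AddSubgroup.closure (Set.range ι) := by
    have : z ∈ (AddSubgroup.closure (Set.range ι) : Set (Fin (r + 1) → ℝ)) := by
      rw [hgrp]; exact hz
    exact this
  clear hz
  induction hzmem using AddSubgroup.closure_induction with
  | mem x hx =>
    rcases hx with ⟨a, rfl⟩
    exact ⟨a, 0, by rw [hι0, sub_zero]⟩
  | zero => exact ⟨0, 0, by rw [hι0, sub_zero]⟩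
  | add x y _ _ hx hy =>
    rcases hx with ⟨a, b, rfl⟩
    rcases hy with ⟨c, d, rfl⟩
    exact ⟨a + c, b + d, by rw [hadd, hadd]; abel⟩
  | neg x _ hx =>
    rcases hx with ⟨a, b, rfl⟩
    exact ⟨b, a, by abel⟩

end Rep

section Part1
variable {M : Type*} [AddCommMonoid M] [LinearOrder M] {r : ℕ}

lemma part1_lemma (deg : M → ℤ) (hdegadd : ∀ a b : M, deg (a + b) = deg a + deg b)
    (hdegmono : ∀ a b : M, a ≤ b → deg a ≤ deg b)
    (hdegsurj : AddSubgroup.closure (Set.range deg) = (⊤ : AddSubgroup ℤ))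
    (ι : M → (Fin (r+1) → ℝ))
    (hadd : ∀ a b : M, ι (a + b) = ι a + ι b)
    (hord : ∀ a b : M, a ≤ b ↔ rlexLE (ι a) (ι b))
    (hgrp : (AddSubgroup.closure (Set.range ι) : Set (Fin (r + 1) → ℝ)) =
      {x | ∀ i, ∃ m : ℤ, x i = (m : ℝ)}) :
    ∀ σ : M, ι σ 0 = (deg σ : ℝ) := by
  classical
  set F : M →+ (Fin (r+1) → ℝ) := AddMonoidHom.mk' ι hadd with hF
  set D : M →+ ℤ := AddMonoidHom.mk' deg hdegadd with hD
  have hns : ∀ (k : ℕ) (σ : M), ι (k • σ) 0 = (k : ℝ) * ι σ 0 := by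
    intro k σ
    have : F (k • σ) = k • F σ := map_nsmul F k σ
    have h0 := congrFun this 0
    simpa [F, nsmul_eq_mul] using h0
  have hdns : ∀ (k : ℕ) (σ : M), deg (k • σ) = (k : ℤ) * deg σ := by
    intro k σ
    have : D (k • σ) = k • D σ := map_nsmul D k σ
    simpa [D, nsmul_eq_mul] using this
  have hmono : ∀ a b : M, a ≤ b → ι a 0 ≤ ι b 0 := fun a b h => rlex_first ((hord a b).mp h)
  have hle : ∀ a b : M, ι a 0 < ι b 0 → a ≤ b := by
    intro a b h
    by_contra hab
    exact absurd (hmono b a (le_of_not_ge hab)) (not_le.mpr h)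
  have hint : ∀ (σ : M) (i : Fin (r+1)), ∃ m : ℤ, ι σ i = (m : ℝ) := by
    intro σ i
    have h1 : ι σ ∈ AddSubgroup.closure (Set.range ι) :=
      AddSubgroup.subset_closure ⟨σ, rfl⟩
    have h2 : ι σ ∈ (AddSubgroup.closure (Set.range ι) : Set (Fin (r + 1) → ℝ)) := h1
    rw [hgrp] at h2
    exact h2 i
  obtain ⟨u, v, huv⟩ := rep_lemma ι hadd hgrp (Pi.single 0 1)
    (fun i => ⟨if i = 0 then 1 else 0, by rcases eq_or_ne i 0 with h | h <;> simp [h, Pi.single_apply]⟩)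
  have huv0 : ι u 0 = ι v 0 + 1 := by
    have := congrFun huv 0
    simp only [Pi.single_eq_same, Pi.sub_apply] at this
    linarith
  -- key: equal 0-coordinates give equal deg
  have key : ∀ σ τ : M, ι σ 0 = ι τ 0 → deg τ ≤ deg σ := by
    intro σ τ h
    have hk : ∀ k : ℕ, (k : ℤ) * deg τ + deg v ≤ (k : ℤ) * deg σ + deg u := by
      intro k
      have hlt : ι (k • τ + v) 0 < ι (k • σ + u) 0 := by
        rw [hadd, hadd]
        simp only [Pi.add_apply]
        rw [hns, hns, huv0, h]
        linarith
      have := hdegmono _ _ (hle _ _ hlt)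
      rw [hdegadd, hdegadd, hdns, hdns] at this
      linarith
    by_contra hcon
    push_neg at hcon
    have hc1 : 1 ≤ deg τ - deg σ := by omega
    set Dd := deg u - deg v with hDd
    have h1 := hk (Dd.toNat + 1)
    have h2 : (Dd : ℤ) ≤ ((Dd.toNat : ℤ)) := Int.self_le_toNat Dd
    push_cast at h1
    nlinarith
  have heq : ∀ σ τ : M, ι σ 0 = ι τ 0 → deg σ = deg τ :=
    fun σ τ h => le_antisymm (key τ σ h.symm) (key σ τ h)
  choose m hm using fun σ => hint σ 0
  set e : ℤ := deg u - deg v with he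
  have claim : ∀ σ : M, deg σ = m σ * e := by
    intro σ
    rcases le_or_gt 0 (m σ) with hpos | hneg
    · set p := (m σ).toNat with hp
      have hps : ((p : ℤ) : ℝ) = (m σ : ℝ) := by rw [hp, Int.toNat_of_nonneg hpos]
      have h0 : ι (σ + p • v) 0 = ι (p • u) 0 := by
        rw [hadd]
        simp only [Pi.add_apply]
        rw [hns, hns, huv0, hm σ]
        push_cast at hps ⊢
        linarith
      have := heq _ _ h0
      rw [hdegadd, hdns, hdns] at this
      have hpz : (p : ℤ) = m σ := Int.toNat_of_nonneg hpos
      rw [hpz] at this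
      rw [he, mul_sub]
      linarith [this]
    · set q := (-(m σ)).toNat with hq
      have hqz : (q : ℤ) = -(m σ) := Int.toNat_of_nonneg (by omega)
      have hqs : ((q : ℤ) : ℝ) = -(m σ : ℝ) := by rw [hqz]; push_cast; ring
      have h0 : ι (σ + q • u) 0 = ι (q • v) 0 := by
        rw [hadd]
        simp only [Pi.add_apply]
        rw [hns, hns, huv0, hm σ]
        push_cast at hqs ⊢
        linarith
      have := heq _ _ h0
      rw [hdegadd, hdns, hdns, hqz] at this
      simp only [neg_mul] at this
      rw [he, mul_sub]
      linarith [this]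
  have he1 : e = 1 := by
    have hsub : AddSubgroup.closure (Set.range deg) ≤ AddSubgroup.zmultiples e := by
      apply (AddSubgroup.closure_le _).mpr
      rintro x ⟨σ, rfl⟩
      exact ⟨m σ, by simp [claim σ, zsmul_eq_mul, mul_comm]⟩
    rw [hdegsurj] at hsub
    obtain ⟨k, hk⟩ := hsub (AddSubgroup.mem_top 1)
    have hdvd : e ∣ 1 := ⟨k, by rw [← hk]; simp [zsmul_eq_mul, mul_comm]⟩
    have he0 : 0 ≤ e := by
      have : v ≤ u := hle v u (by rw [huv0]; linarith)
      have := hdegmono v u this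
      omega
    rcases Int.isUnit_iff.mp (isUnit_of_dvd_one hdvd) with h | h
    · exact h
    · omega
  intro σ
  rw [hm σ]
  congr 1
  rw [claim σ, he1, mul_one]

end Part1
lemma smul_helper {G : Type*} [AddCommGroup G] (c : ℤ) (x y : G) :
    c.toNat • x + (-c).toNat • y - ((-c).toNat • x + c.toNat • y) = c • (x - y) := by
  have hc : ((c.toNat : ℤ)) - ((-c).toNat : ℤ) = c := by omega
  calc c.toNat • x + (-c).toNat • y - ((-c).toNat • x + c.toNat • y)
      = ((c.toNat : ℤ)) • x + ((-c).toNat : ℤ) • y -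
        (((-c).toNat : ℤ) • x + ((c.toNat : ℤ)) • y) := by
        simp only [natCast_zsmul]
    _ = (((c.toNat : ℤ)) - ((-c).toNat : ℤ)) • (x - y) := by
        rw [sub_zsmul, zsmul_sub, zsmul_sub]; abel
    _ = c • (x - y) := by rw [hc]

lemma combo_one {M : Type*} [AddCommMonoid M] {r : ℕ}
    (ι : M → (Fin (r+1) → ℝ))
    (hadd : ∀ a b : M, ι (a + b) = ι a + ι b)
    (c : Fin (r+1) → ℤ) (a b : Fin (r+1) → M) :
    ι (∑ i, ((c i).toNat • a i + (-(c i)).toNat • b i)) -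
      ι (∑ i, ((-(c i)).toNat • a i + (c i).toNat • b i)) =
    ∑ i, c i • (ι (a i) - ι (b i)) := by
  set F : M →+ (Fin (r+1) → ℝ) := AddMonoidHom.mk' ι hadd with hF
  have h1 : ι (∑ i, ((c i).toNat • a i + (-(c i)).toNat • b i)) =
      ∑ i, ((c i).toNat • ι (a i) + (-(c i)).toNat • ι (b i)) := by
    show F _ = _
    rw [map_sum]
    congr 1; funext i
    rw [map_add, map_nsmul, map_nsmul]
    rfl
  have h2 : ι (∑ i, ((-(c i)).toNat • a i + (c i).toNat • b i)) =
      ∑ i, ((-(c i)).toNat • ι (a i) + (c i).toNat • ι (b i)) := by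
    show F _ = _
    rw [map_sum]
    congr 1; funext i
    rw [map_add, map_nsmul, map_nsmul]
    rfl
  rw [h1, h2, ← Finset.sum_sub_distrib]
  congr 1; funext i
  exact smul_helper (c i) (ι (a i)) (ι (b i))

lemma sum_single_int {r : ℕ} (c : Fin (r+1) → ℤ) :
    (∑ l, c l • Pi.single l (1:ℝ)) = fun k => (c k : ℝ) := by
  funext k
  rw [Finset.sum_apply]
  have : ∀ l, (c l • (Pi.single l (1:ℝ) : Fin (r+1) → ℝ)) k = if k = l then (c l : ℝ) else 0 := by
    intro l
    rcases eq_or_ne k l with rfl | h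
    · simp
    · simp [Pi.single_apply, h]
  simp only [this]
  simp

lemma matN_lemma {M : Type*} [AddCommMonoid M] [LinearOrder M] {r : ℕ}
    (deg : M → ℤ) (hdegadd : ∀ a b : M, deg (a + b) = deg a + deg b)
    (hdegmono : ∀ a b : M, a ≤ b → deg a ≤ deg b)
    (hdegsurj : AddSubgroup.closure (Set.range deg) = (⊤ : AddSubgroup ℤ))
    (ι₁ ι₂ : M → (Fin (r+1) → ℝ))
    (hadd₁ : ∀ a b : M, ι₁ (a + b) = ι₁ a + ι₁ b)
    (hadd₂ : ∀ a b : M, ι₂ (a + b) = ι₂ a + ι₂ b)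
    (hinj₁ : Function.Injective ι₁)
    (hord₁ : ∀ a b : M, a ≤ b ↔ rlexLE (ι₁ a) (ι₁ b))
    (hord₂ : ∀ a b : M, a ≤ b ↔ rlexLE (ι₂ a) (ι₂ b))
    (hgrp₁ : (AddSubgroup.closure (Set.range ι₁) : Set (Fin (r + 1) → ℝ)) =
      {x | ∀ i, ∃ m : ℤ, x i = (m : ℝ)})
    (hgrp₂ : (AddSubgroup.closure (Set.range ι₂) : Set (Fin (r + 1) → ℝ)) =
      {x | ∀ i, ∃ m : ℤ, x i = (m : ℝ)}) :
    ∃ N : Matrix (Fin (r+1)) (Fin (r+1)) ℤ,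
      (∀ (σ : M) (j : Fin (r+1)), ι₂ σ j = ∑ l, (N j l : ℝ) * ι₁ σ l) ∧
      (∀ l, N 0 l = if l = 0 then 1 else 0) ∧
      (∀ j i : Fin (r+1), j < i → N j i = 0) ∧
      (∀ j, 0 ≤ N j j) := by
  classical
  have hd₁ := part1_lemma deg hdegadd hdegmono hdegsurj ι₁ hadd₁ hord₁ hgrp₁
  have hd₂ := part1_lemma deg hdegadd hdegmono hdegsurj ι₂ hadd₂ hord₂ hgrp₂
  have hint : ∀ (σ : M) (i : Fin (r+1)), ∃ m : ℤ, ι₂ σ i = (m : ℝ) := by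
    intro σ i
    have h1 : ι₂ σ ∈ (AddSubgroup.closure (Set.range ι₂) : Set (Fin (r+1) → ℝ)) :=
      AddSubgroup.subset_closure ⟨σ, rfl⟩
    rw [hgrp₂] at h1; exact h1 i
  choose mval₂ hmval₂ using hint
  have hint₁ : ∀ (σ : M) (i : Fin (r+1)), ∃ m : ℤ, ι₁ σ i = (m : ℝ) := by
    intro σ i
    have h1 : ι₁ σ ∈ (AddSubgroup.closure (Set.range ι₁) : Set (Fin (r+1) → ℝ)) :=
      AddSubgroup.subset_closure ⟨σ, rfl⟩
    rw [hgrp₁] at h1; exact h1 i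
  choose mval₁ hmval₁ using hint₁
  have hsing : ∀ i : Fin (r+1), ∃ a b : M, (Pi.single i (1:ℝ) : Fin (r+1) → ℝ) = ι₁ a - ι₁ b :=
    fun i => rep_lemma ι₁ hadd₁ hgrp₁ _
      (fun l => ⟨if l = i then 1 else 0, by rcases eq_or_ne l i with h|h <;> simp [h, Pi.single_apply]⟩)
  choose a b hab using hsing
  set N : Matrix (Fin (r+1)) (Fin (r+1)) ℤ := fun j i => mval₂ (a i) j - mval₂ (b i) j with hN
  have htN : ∀ i j : Fin (r+1), (ι₂ (a i) - ι₂ (b i)) j = (N j i : ℝ) := by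
    intro i j
    simp only [Pi.sub_apply, hN, hmval₂]
    push_cast
    ring
  -- transfer identity
  have transfer : ∀ (c : Fin (r+1) → ℤ) (σ : M),
      ι₁ σ = (fun k => (c k : ℝ)) → ι₂ σ = ∑ l, c l • (ι₂ (a l) - ι₂ (b l)) := by
    intro c σ hc
    have h1 := combo_one ι₁ hadd₁ c a b
    have h2 := combo_one ι₂ hadd₂ c a b
    have h3 : ∑ l, c l • (ι₁ (a l) - ι₁ (b l)) = ι₁ σ := by
      rw [hc, ← sum_single_int c]
      exact Finset.sum_congr rfl fun l _ => by rw [hab l]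
    rw [h3] at h1
    have hXY : (∑ i, ((c i).toNat • a i + (-(c i)).toNat • b i)) =
        σ + (∑ i, ((-(c i)).toNat • a i + (c i).toNat • b i)) := by
      apply hinj₁
      rw [hadd₁, ← h1]
      abel
    rw [hXY, hadd₂] at h2
    rw [← h2]
    abel
  have P1 : ∀ σ : M, ι₂ σ = ∑ l, (mval₁ σ l) • (ι₂ (a l) - ι₂ (b l)) :=
    fun σ => transfer _ σ (funext fun l => hmval₁ σ l)
  have P1c : ∀ (σ : M) (j : Fin (r+1)), ι₂ σ j = ∑ l, (N j l : ℝ) * ι₁ σ l := by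
    intro σ j
    have h := congrFun (P1 σ) j
    rw [Finset.sum_apply] at h
    rw [h]
    refine Finset.sum_congr rfl fun l _ => ?_
    rw [Pi.smul_apply, htN, zsmul_eq_mul, hmval₁ σ l, mul_comm]
  -- order transfer
  have ordtrans : ∀ c : Fin (r+1) → ℤ,
      rlexLE 0 (fun k => (c k : ℝ)) → rlexLE 0 (∑ l, c l • (ι₂ (a l) - ι₂ (b l))) := by
    intro c hc
    have h1 := combo_one ι₁ hadd₁ c a b
    have h2 := combo_one ι₂ hadd₂ c a b
    have h3 : ∑ l, c l • (ι₁ (a l) - ι₁ (b l)) = fun k => (c k : ℝ) := by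
      rw [← sum_single_int c]
      exact Finset.sum_congr rfl fun l _ => by rw [hab l]
    rw [h3] at h1
    have h4 : rlexLE (ι₁ (∑ i, ((-(c i)).toNat • a i + (c i).toNat • b i)))
        (ι₁ (∑ i, ((c i).toNat • a i + (-(c i)).toNat • b i))) := by
      rw [rlex_sub, h1]
      exact hc
    have h5 := (hord₂ _ _).mp ((hord₁ _ _).mpr h4)
    rw [rlex_sub] at h5
    rw [← h2]
    exact h5
  set t : Fin (r+1) → (Fin (r+1) → ℝ) := fun l => ι₂ (a l) - ι₂ (b l) with ht
  -- triangularity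
  have P3 : ∀ j i : Fin (r+1), j < i → N j i = 0 := by
    have tri : ∀ mj : ℕ, ∀ j i : Fin (r+1), (j : ℕ) = mj → j < i → N j i = 0 := by
      intro mj
      induction mj using Nat.strong_induction_on with
      | _ mj IH =>
        rintro j i rfl hji
        have IH' : ∀ j' i' : Fin (r+1), j' < j → j' < i' → N j' i' = 0 :=
          fun j' i' h1 h2 => IH j'.val (Fin.lt_def.mp h1) j' i' rfl h2
        have hji' : j ≠ i := ne_of_lt hji
        have key : ∀ k : ℤ, 0 ≤ N j j + k * N j i := by
          intro k
          set c : Fin (r+1) → ℤ := fun l => if l = j then 1 else if l = i then k else 0 with hc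
          have hlex : rlexLE 0 (fun k' => (c k' : ℝ)) := by
            left
            refine ⟨j, by simp [hc], fun l hl => ?_⟩
            have h1 : l ≠ j := ne_of_lt hl
            have h2 : l ≠ i := ne_of_lt (lt_trans hl hji)
            simp [hc, h1, h2]
          have h2 := ordtrans c hlex
          have hsum : ∑ l, c l • t l = t j + k • t i := by
            have hterm : ∀ l, c l • t l =
                (if l = j then t j else 0) + (if l = i then k • t i else 0) := by
              intro l
              rcases eq_or_ne l j with rfl | h1
              · simp [hc, hji']
              · rcases eq_or_ne l i with rfl | h2
                · simp [hc, h1]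
                · simp [hc, h1, h2]
            rw [Finset.sum_congr rfl fun l _ => hterm l, Finset.sum_add_distrib]
            simp
          rw [hsum] at h2
          have hco : 0 ≤ (t j + k • t i) j := by
            apply rlex_coord h2
            intro l hl
            have hA : t j l = 0 := by
              show (ι₂ (a j) - ι₂ (b j)) l = 0
              rw [htN j l, IH' l j hl hl, Int.cast_zero]
            have hB : t i l = 0 := by
              show (ι₂ (a i) - ι₂ (b i)) l = 0
              rw [htN i l, IH' l i hl (lt_trans hl hji), Int.cast_zero]
            simp [hA, hB]
          have heval : (t j + k • t i) j = (N j j : ℝ) + (k : ℝ) * (N j i : ℝ) := by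
            simp [ht, htN, zsmul_eq_mul]
          rw [heval] at hco
          exact_mod_cast hco
        by_contra hw
        have h2 : 1 ≤ (N j i)^2 := by rcases lt_or_gt_of_ne hw with h|h <;> nlinarith
        have h3 := key (-(N j j + 1) * N j i)
        have h0 := key 0
        nlinarith [h0, h2, h3]
    exact fun j i h => tri j j i rfl h
  -- nonneg diagonal
  have P4 : ∀ j, 0 ≤ N j j := by
    intro j
    set c : Fin (r+1) → ℤ := fun l => if l = j then 1 else 0 with hc
    have hlex : rlexLE 0 (fun k' => (c k' : ℝ)) :=
      Or.inl ⟨j, by simp [hc], fun l hl => by simp [hc, ne_of_lt hl]⟩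
    have h2 := ordtrans c hlex
    have hsum : ∑ l, c l • t l = t j := by
      have hterm : ∀ l, c l • t l = if l = j then t j else 0 := by
        intro l
        rcases eq_or_ne l j with rfl | h1
        · simp [hc]
        · simp [hc, h1]
      rw [Finset.sum_congr rfl fun l _ => hterm l]
      simp
    rw [hsum] at h2
    have hco : 0 ≤ t j j := by
      apply rlex_coord h2
      intro l hl
      show (ι₂ (a j) - ι₂ (b j)) l = 0
      rw [htN j l, P3 l j hl, Int.cast_zero]
    have hco' : (0:ℝ) ≤ (N j j : ℝ) := by rw [← htN j j]; exact hco
    exact_mod_cast hco'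
  -- first row
  have P2 : ∀ l, N 0 l = if l = 0 then 1 else 0 := by
    intro l
    have hcast : ((N 0 l : ℤ) : ℝ) = ((if l = 0 then 1 else 0 : ℤ) : ℝ) := by
      rw [← htN l 0]
      have h1 := congrFun (hab l) 0
      simp only [Pi.sub_apply] at h1 ⊢
      rw [hd₂ (a l), hd₂ (b l), ← hd₁ (a l), ← hd₁ (b l), ← h1]
      rcases eq_or_ne l 0 with rfl | h
      · simp
      · simp [Pi.single_apply, h, Ne.symm h]
    exact_mod_cast hcast
  exact ⟨N, P1c, P2, P3, P4⟩

lemma prod_id {M : Type*} [AddCommMonoid M] {r : ℕ}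
    (ι₁ ι₂ : M → (Fin (r+1) → ℝ))
    (hgrp₁ : (AddSubgroup.closure (Set.range ι₁) : Set (Fin (r + 1) → ℝ)) =
      {x | ∀ i, ∃ m : ℤ, x i = (m : ℝ)})
    (N N' : Matrix (Fin (r+1)) (Fin (r+1)) ℤ)
    (hP1 : ∀ (σ : M) (j : Fin (r+1)), ι₂ σ j = ∑ l, (N j l : ℝ) * ι₁ σ l)
    (hP1' : ∀ (σ : M) (j : Fin (r+1)), ι₁ σ j = ∑ l, (N' j l : ℝ) * ι₂ σ l) :
    ∀ j k : Fin (r+1), ∑ l, N' j l * N l k = if j = k then 1 else 0 := by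
  intro j k
  set f : (Fin (r+1) → ℝ) →+ ℝ := AddMonoidHom.mk'
    (fun x => ∑ kk, ((∑ l, N' j l * N l kk : ℤ) : ℝ) * x kk)
    (by intro x y
        simp only [Pi.add_apply, mul_add]
        rw [Finset.sum_add_distrib]) with hf
  set g : (Fin (r+1) → ℝ) →+ ℝ := AddMonoidHom.mk' (fun x => x j)
    (by intro x y; rfl) with hg
  have heqon : Set.EqOn f g (Set.range ι₁) := by
    rintro x ⟨σ, rfl⟩
    show (∑ kk, ((∑ l, N' j l * N l kk : ℤ) : ℝ) * ι₁ σ kk) = ι₁ σ j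
    rw [hP1' σ j]
    have : ∀ kk, ((∑ l, N' j l * N l kk : ℤ) : ℝ) * ι₁ σ kk =
        ∑ l, (N' j l : ℝ) * ((N l kk : ℝ) * ι₁ σ kk) := by
      intro kk
      push_cast
      rw [Finset.sum_mul]
      exact Finset.sum_congr rfl fun l _ => by ring
    rw [Finset.sum_congr rfl fun kk _ => this kk, Finset.sum_comm]
    exact Finset.sum_congr rfl fun l _ => by rw [← Finset.mul_sum, ← hP1 σ l]
  have heqcl : Set.EqOn f g (AddSubgroup.closure (Set.range ι₁) : Set _) :=
    AddMonoidHom.eqOn_closure heqon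
  have hmem : (Pi.single k (1:ℝ) : Fin (r+1) → ℝ) ∈
      (AddSubgroup.closure (Set.range ι₁) : Set (Fin (r+1) → ℝ)) := by
    rw [hgrp₁]
    intro i
    exact ⟨if i = k then 1 else 0, by rcases eq_or_ne i k with h|h <;> simp [h, Pi.single_apply]⟩
  have := heqcl hmem
  have hfval : f (Pi.single k (1:ℝ)) = ((∑ l, N' j l * N l k : ℤ) : ℝ) := by
    show (∑ kk, ((∑ l, N' j l * N l kk : ℤ) : ℝ) * (Pi.single k (1:ℝ) : Fin (r+1) → ℝ) kk) = _
    rw [Finset.sum_eq_single k]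
    · simp
    · intro kk _ hkk
      have : (Pi.single k (1:ℝ) : Fin (r+1) → ℝ) kk = 0 := by
        simp [Pi.single_apply, hkk]
      rw [this, mul_zero]
    · simp
  have hgval : g (Pi.single k (1:ℝ)) = if j = k then (1:ℝ) else 0 := by
    show (Pi.single k (1:ℝ) : Fin (r+1) → ℝ) j = _
    rcases eq_or_ne j k with rfl|h
    · simp
    · simp [Pi.single_apply, h]
  rw [hfval, hgval] at this
  exact_mod_cast this

lemma affine_inv {n : ℕ} (A A' : Matrix (Fin n) (Fin n) ℤ) (bv bv' : Fin n → ℤ)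
    (h1 : ∀ i k : Fin n, ∑ j, A' i j * A j k = if i = k then 1 else 0)
    (h2 : ∀ i : Fin n, (∑ j, A' i j * bv j) + bv' i = 0) :
    ∀ y : Fin n → ℝ,
      (A'.map (Int.cast : ℤ → ℝ)).mulVec
        ((A.map (Int.cast : ℤ → ℝ)).mulVec y + fun i => (bv i : ℝ)) +
        (fun i => (bv' i : ℝ)) = y := by
  intro y
  funext i
  simp only [Pi.add_apply, Matrix.mulVec, dotProduct, Matrix.map_apply]
  have expand : ∀ j : Fin n,
      (A' i j : ℝ) * ((∑ k, (A j k : ℝ) * y k) + (bv j : ℝ)) =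
      (∑ k, (A' i j : ℝ) * (A j k : ℝ) * y k) + (A' i j : ℝ) * (bv j : ℝ) := by
    intro j
    rw [mul_add, Finset.mul_sum]
    ring_nf
  rw [Finset.sum_congr rfl fun j _ => expand j, Finset.sum_add_distrib]
  have hb : (∑ j, (A' i j : ℝ) * (bv j : ℝ)) + (bv' i : ℝ) = 0 := by
    have := h2 i
    have : (((∑ j, A' i j * bv j) + bv' i : ℤ) : ℝ) = 0 := by rw [this]; simp
    push_cast at this
    linarith [this]
  have hA : ∑ j, (∑ k, (A' i j : ℝ) * (A j k : ℝ) * y k) = y i := by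
    rw [Finset.sum_comm]
    have : ∀ k : Fin n, (∑ j, (A' i j : ℝ) * (A j k : ℝ) * y k) =
        (if i = k then (1:ℝ) else 0) * y k := by
      intro k
      rw [← Finset.sum_mul]
      congr 1
      have := h1 i k
      have h3 : ((∑ j, A' i j * A j k : ℤ) : ℝ) = ((if i = k then 1 else 0 : ℤ) : ℝ) := by
        rw [this]
      push_cast at h3
      rw [← h3]
    rw [Finset.sum_congr rfl fun k _ => this k]
    simp
  rw [add_assoc, hb, add_zero, hA]

theorem stmt6 {M : Type*} [AddCommMonoid M] [LinearOrder M]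
    (hordadd : ∀ a b c : M, a < b → a + c < b + c)
    (deg : M → ℤ) (hdegadd : ∀ a b : M, deg (a + b) = deg a + deg b)
    (hdegmono : ∀ a b : M, a ≤ b → deg a ≤ deg b)
    (hdegsurj : AddSubgroup.closure (Set.range deg) = (⊤ : AddSubgroup ℤ))
    (n : ℕ)
    (ι₁ ι₂ : M → (Fin (n + 1) → ℝ))
    (hadd₁ : ∀ a b : M, ι₁ (a + b) = ι₁ a + ι₁ b)
    (hadd₂ : ∀ a b : M, ι₂ (a + b) = ι₂ a + ι₂ b)
    (hinj₁ : Function.Injective ι₁) (hinj₂ : Function.Injective ι₂)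
    (hord₁ : ∀ a b : M, a ≤ b ↔ rlexLE (ι₁ a) (ι₁ b))
    (hord₂ : ∀ a b : M, a ≤ b ↔ rlexLE (ι₂ a) (ι₂ b))
    (hgrp₁ : (AddSubgroup.closure (Set.range ι₁) : Set (Fin (n + 1) → ℝ)) =
      {x | ∀ i, ∃ m : ℤ, x i = (m : ℝ)})
    (hgrp₂ : (AddSubgroup.closure (Set.range ι₂) : Set (Fin (n + 1) → ℝ)) =
      {x | ∀ i, ∃ m : ℤ, x i = (m : ℝ)}) :
    (∀ σ : M, ι₁ σ 0 = (deg σ : ℝ) ∧ ι₂ σ 0 = (deg σ : ℝ)) ∧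
    ∃ A : Matrix (Fin n) (Fin n) ℤ,
      (∀ i, A i i = 1) ∧ (∀ i j : Fin n, i < j → A i j = 0) ∧
      ∃ b : Fin n → ℤ,
        (fun y : Fin n → ℝ =>
            (A.map (Int.cast : ℤ → ℝ)).mulVec y + fun i : Fin n => (b i : ℝ)) ''
          closure {y : Fin n → ℝ | ∃ σ : M, (deg σ : ℝ) ≠ 0 ∧
            y = fun i : Fin n => ι₁ σ i.succ / (deg σ : ℝ)} =
        closure {y : Fin n → ℝ | ∃ σ : M, (deg σ : ℝ) ≠ 0 ∧
            y = fun i : Fin n => ι₂ σ i.succ / (deg σ : ℝ)} := by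
  have hd₁ := part1_lemma deg hdegadd hdegmono hdegsurj ι₁ hadd₁ hord₁ hgrp₁
  have hd₂ := part1_lemma deg hdegadd hdegmono hdegsurj ι₂ hadd₂ hord₂ hgrp₂
  refine ⟨fun σ => ⟨hd₁ σ, hd₂ σ⟩, ?_⟩
  obtain ⟨N, P1, P2, P3, P4⟩ := matN_lemma deg hdegadd hdegmono hdegsurj ι₁ ι₂
    hadd₁ hadd₂ hinj₁ hord₁ hord₂ hgrp₁ hgrp₂
  obtain ⟨N', Q1, Q2, Q3, Q4⟩ := matN_lemma deg hdegadd hdegmono hdegsurj ι₂ ι₁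
    hadd₂ hadd₁ hinj₂ hord₂ hord₁ hgrp₂ hgrp₁
  have hNN' : ∀ j k, ∑ l, N' j l * N l k = if j = k then 1 else 0 :=
    prod_id ι₁ ι₂ hgrp₁ N N' P1 Q1
  have hN'N : ∀ j k, ∑ l, N j l * N' l k = if j = k then 1 else 0 :=
    prod_id ι₂ ι₁ hgrp₂ N' N Q1 P1
  -- diagonal entries are 1
  have hdiagmul : ∀ j, N' j j * N j j = 1 := by
    intro j
    have h := hNN' j j
    rw [if_pos rfl] at h
    rw [← h]
    rw [Finset.sum_eq_single j]
    · intro l _ hl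
      rcases lt_or_gt_of_ne hl with hlt | hlt
      · rw [P3 l j hlt, mul_zero]
      · rw [Q3 j l hlt, zero_mul]
    · intro h'; exact absurd (Finset.mem_univ j) h'
  have hdiag : ∀ j, N j j = 1 := by
    intro j
    have h := hdiagmul j
    have h1 : IsUnit (N j j) := IsUnit.of_mul_eq_one _ (by rw [mul_comm]; exact h)
    rcases Int.isUnit_iff.mp h1 with h2 | h2
    · exact h2
    · have := P4 j; omega
  have hdiag' : ∀ j, N' j j = 1 := by
    intro j
    have h := hdiagmul j
    rw [hdiag j, mul_one] at h
    exact h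
  -- the blocks
  set A : Matrix (Fin n) (Fin n) ℤ := fun i j => N i.succ j.succ with hA
  set A' : Matrix (Fin n) (Fin n) ℤ := fun i j => N' i.succ j.succ with hA'
  set bv : Fin n → ℤ := fun i => N i.succ 0 with hbv
  set bv' : Fin n → ℤ := fun i => N' i.succ 0 with hbv'
  -- block identities
  have hblock : ∀ (U V : Matrix (Fin (n+1)) (Fin (n+1)) ℤ),
      (∀ j k, ∑ l, U j l * V l k = if j = k then 1 else 0) →
      (∀ l, V 0 l = if l = 0 then 1 else 0) →
      (∀ i k : Fin n, ∑ j : Fin n, U i.succ j.succ * V j.succ k.succ = if i = k then 1 else 0) ∧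
      (∀ i : Fin n, (∑ j : Fin n, U i.succ j.succ * V j.succ 0) + U i.succ 0 = 0) := by
    intro U V hUV hV0
    constructor
    · intro i k
      have h := hUV i.succ k.succ
      rw [Fin.sum_univ_succ] at h
      rw [hV0 k.succ, if_neg (Fin.succ_ne_zero k), mul_zero, zero_add] at h
      rw [h]
      simp [Fin.succ_inj]
    · intro i
      have h := hUV i.succ 0
      rw [Fin.sum_univ_succ] at h
      rw [hV0 0, if_pos rfl, mul_one] at h
      rw [if_neg (Fin.succ_ne_zero i)] at h
      linarith [h]
  obtain ⟨hA'A, hbb⟩ := hblock N' N hNN' P2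
  obtain ⟨hAA', hbb'⟩ := hblock N N' hN'N Q2
  have hbb2 : ∀ i : Fin n, (∑ j, A' i j * bv j) + bv' i = 0 := fun i => hbb i
  have hbb2' : ∀ i : Fin n, (∑ j, A i j * bv' j) + bv i = 0 := fun i => hbb' i
  -- the affine maps
  have hleft := affine_inv A A' bv bv' hA'A hbb2
  have hright := affine_inv A' A bv' bv hAA' hbb2'
  -- homeomorphism
  have hcontf : Continuous fun y : Fin n → ℝ =>
      (A.map (Int.cast : ℤ → ℝ)).mulVec y + fun i : Fin n => (bv i : ℝ) := by
    have h1 : Continuous fun y : Fin n → ℝ => (A.map (Int.cast : ℤ → ℝ)).mulVec y := by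
      have : (fun y : Fin n → ℝ => (A.map (Int.cast : ℤ → ℝ)).mulVec y) =
          ⇑((A.map (Int.cast : ℤ → ℝ)).mulVecLin) := by
        funext y; rw [Matrix.mulVecLin_apply]
      rw [this]
      exact LinearMap.continuous_of_finiteDimensional _
    exact h1.add continuous_const
  have hcontg : Continuous fun y : Fin n → ℝ =>
      (A'.map (Int.cast : ℤ → ℝ)).mulVec y + fun i : Fin n => (bv' i : ℝ) := by
    have h1 : Continuous fun y : Fin n → ℝ => (A'.map (Int.cast : ℤ → ℝ)).mulVec y := by
      have : (fun y : Fin n → ℝ => (A'.map (Int.cast : ℤ → ℝ)).mulVec y) =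
          ⇑((A'.map (Int.cast : ℤ → ℝ)).mulVecLin) := by
        funext y; rw [Matrix.mulVecLin_apply]
      rw [this]
      exact LinearMap.continuous_of_finiteDimensional _
    exact h1.add continuous_const
  set φ : Homeomorph (Fin n → ℝ) (Fin n → ℝ) :=
    { toFun := fun y => (A.map (Int.cast : ℤ → ℝ)).mulVec y + fun i : Fin n => (bv i : ℝ)
      invFun := fun y => (A'.map (Int.cast : ℤ → ℝ)).mulVec y + fun i : Fin n => (bv' i : ℝ)
      left_inv := fun y => hleft y
      right_inv := fun y => hright y
      continuous_toFun := hcontf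
      continuous_invFun := hcontg } with hφ
  refine ⟨A, fun i => hdiag i.succ, fun i j h => P3 i.succ j.succ (Fin.succ_lt_succ_iff.mpr h),
    bv, ?_⟩
  -- the image identity on the base sets
  have hmaps : ∀ σ : M, (deg σ : ℝ) ≠ 0 →
      ((A.map (Int.cast : ℤ → ℝ)).mulVec (fun i : Fin n => ι₁ σ i.succ / (deg σ : ℝ)) +
        fun i : Fin n => (bv i : ℝ)) = fun i : Fin n => ι₂ σ i.succ / (deg σ : ℝ) := by
    intro σ hσ
    funext i
    simp only [Pi.add_apply, Matrix.mulVec, dotProduct, Matrix.map_apply, hA, hbv]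
    have h := P1 σ i.succ
    rw [Fin.sum_univ_succ, hd₁ σ] at h
    rw [h, eq_div_iff hσ, add_mul, Finset.sum_mul]
    rw [Finset.sum_congr rfl fun j _ => by rw [mul_assoc, div_mul_cancel₀ _ hσ]]
    rw [add_comm]; rfl
  -- image of base set
  have himg : (fun y : Fin n → ℝ =>
      (A.map (Int.cast : ℤ → ℝ)).mulVec y + fun i : Fin n => (bv i : ℝ)) ''
      {y : Fin n → ℝ | ∃ σ : M, (deg σ : ℝ) ≠ 0 ∧
        y = fun i : Fin n => ι₁ σ i.succ / (deg σ : ℝ)} =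
      {y : Fin n → ℝ | ∃ σ : M, (deg σ : ℝ) ≠ 0 ∧
        y = fun i : Fin n => ι₂ σ i.succ / (deg σ : ℝ)} := by
    ext x
    constructor
    · rintro ⟨y, ⟨σ, hσ, rfl⟩, rfl⟩
      refine ⟨σ, hσ, ?_⟩
      show ((A.map (Int.cast : ℤ → ℝ)).mulVec (fun i : Fin n => ι₁ σ i.succ / (deg σ : ℝ)) +
        fun i : Fin n => (bv i : ℝ)) = fun i : Fin n => ι₂ σ i.succ / (deg σ : ℝ)
      exact hmaps σ hσ

    · rintro ⟨σ, hσ, rfl⟩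
      exact ⟨fun i => ι₁ σ i.succ / (deg σ : ℝ), ⟨σ, hσ, rfl⟩, hmaps σ hσ⟩
  calc (fun y : Fin n → ℝ =>
      (A.map (Int.cast : ℤ → ℝ)).mulVec y + fun i : Fin n => (bv i : ℝ)) ''
      closure {y : Fin n → ℝ | ∃ σ : M, (deg σ : ℝ) ≠ 0 ∧
        y = fun i : Fin n => ι₁ σ i.succ / (deg σ : ℝ)}
      = φ '' closure {y : Fin n → ℝ | ∃ σ : M, (deg σ : ℝ) ≠ 0 ∧
        y = fun i : Fin n => ι₁ σ i.succ / (deg σ : ℝ)} := rfl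
    _ = closure ((fun y : Fin n → ℝ =>
      (A.map (Int.cast : ℤ → ℝ)).mulVec y + fun i : Fin n => (bv i : ℝ)) ''
      {y : Fin n → ℝ | ∃ σ : M, (deg σ : ℝ) ≠ 0 ∧
        y = fun i : Fin n => ι₁ σ i.succ / (deg σ : ℝ)}) := φ.image_closure _
    _ = closure {y : Fin n → ℝ | ∃ σ : M, (deg σ : ℝ) ≠ 0 ∧
        y = fun i : Fin n => ι₂ σ i.succ / (deg σ : ℝ)} := by rw [himg]
end

section
/- Let r ≥ 1 and let φ : ℤ^r → ℤ^r be a group automorphism that is order-preserving for the lexicographic order on ℤ^r with first coordinate most significant (x ≤_lex y implies φ(x) ≤_lex φ(y)). Then, with e₁, …, e_r the standard basis, φ(e_i) − e_i lies in the subgroup generated by e_{i+1}, …, e_r for every i; i.e. the matrix of φ in the standard basis is lower triangular with all diagonal entries equal to 1 (in particular φ ∈ SL_r(ℤ) is unipotent). -/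
/-- Lexicographic order on `ℤ^r`, first coordinate most significant. -/
def zlexLE {r : ℕ} (x y : Fin r → ℤ) : Prop :=
  (∃ i : Fin r, x i < y i ∧ ∀ j : Fin r, j < i → x j = y j) ∨ x = y

namespace Stmt7Aux

variable {r : ℕ}

def lexlt (x y : Fin r → ℤ) : Prop :=
  ∃ i : Fin r, x i < y i ∧ ∀ j : Fin r, j < i → x j = y j

lemma lexlt_ne {x y : Fin r → ℤ} (h : lexlt x y) : x ≠ y := by
  rintro rfl
  obtain ⟨i, hi, -⟩ := h
  exact lt_irrefl _ hi

lemma lexlt_asymm {x y : Fin r → ℤ} (h1 : lexlt x y) (h2 : lexlt y x) : False := by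
  obtain ⟨i, hi, hib⟩ := h1
  obtain ⟨j, hj, hjb⟩ := h2
  rcases lt_trichotomy i j with h | h | h
  · exact absurd (hjb i h).symm (ne_of_lt hi)
  · subst h; exact lt_irrefl _ (hi.trans hj)
  · exact absurd (hib j h).symm (ne_of_lt hj)

lemma lexlt_total {x y : Fin r → ℤ} (h : x ≠ y) : lexlt x y ∨ lexlt y x := by
  obtain ⟨a0, ha0⟩ := Function.ne_iff.mp h
  have hne : {i : Fin r | x i ≠ y i}.Nonempty := ⟨a0, ha0⟩
  obtain ⟨a, ha, hmin⟩ := (wellFounded_lt : WellFounded ((· < ·) : Fin r → Fin r → Prop)).has_min _ hne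
  have heq : ∀ j : Fin r, j < a → x j = y j := fun j hj =>
    by_contra fun hne' => hmin j hne' hj
  rcases lt_or_gt_of_ne ha with h' | h'
  · exact Or.inl ⟨a, h', heq⟩
  · exact Or.inr ⟨a, h', fun j hj => (heq j hj).symm⟩

lemma strict_of_mono (φ : (Fin r → ℤ) ≃+ (Fin r → ℤ))
    (hmono : ∀ x y : Fin r → ℤ, zlexLE x y → zlexLE (φ x) (φ y))
    {x y : Fin r → ℤ} (h : lexlt x y) : lexlt (φ x) (φ y) := by
  rcases hmono x y (Or.inl h) with h' | h'
  · exact h'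
  · exact absurd (φ.injective h') (lexlt_ne h)

lemma symm_strict (φ : (Fin r → ℤ) ≃+ (Fin r → ℤ))
    (hs : ∀ {x y : Fin r → ℤ}, lexlt x y → lexlt (φ x) (φ y))
    {x y : Fin r → ℤ} (h : lexlt x y) : lexlt (φ.symm x) (φ.symm y) := by
  by_cases heq : φ.symm x = φ.symm y
  · exact absurd (φ.symm.injective.eq_iff.mp heq ▸ rfl) (lexlt_ne h)
  · rcases lexlt_total heq with h' | h'
    · exact h'
    · have := hs h'
      rw [φ.apply_symm_apply, φ.apply_symm_apply] at this
      exact absurd this (fun hh => lexlt_asymm h hh)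

lemma fin_le_apply {f : Fin r → Fin r} (hf : StrictMono f) (i : Fin r) : i ≤ f i := by
  by_contra hc
  push_neg at hc
  have hne : {j : Fin r | f j < j}.Nonempty := ⟨i, hc⟩
  obtain ⟨m, hm, hmin⟩ := (wellFounded_lt : WellFounded ((· < ·) : Fin r → Fin r → Prop)).has_min _ hne
  exact hmin (f m) (hf hm) hm

lemma fin_strictMono_id {f : Fin r → Fin r} (hf : StrictMono f) (i : Fin r) : f i = i := by
  have h1 : i ≤ f i := fin_le_apply hf i
  have hg : StrictMono (fun j : Fin r => (f j.rev).rev) := by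
    intro a b hab
    exact Fin.rev_lt_rev.mpr (hf (Fin.rev_lt_rev.mpr hab))
  have h2 := fin_le_apply hg i.rev
  simp only [Fin.rev_rev] at h2
  exact le_antisymm (Fin.rev_le_rev.mp h2) h1

lemma single_eq_smul (k : Fin r) (c : ℤ) :
    (Pi.single k c : Fin r → ℤ) = c • (Pi.single k (1 : ℤ) : Fin r → ℤ) := by
  funext j
  simp only [Pi.smul_apply, smul_eq_mul, Pi.single_apply]
  split <;> simp

lemma key (φ : (Fin r → ℤ) ≃+ (Fin r → ℤ))
    (hs : ∀ {x y : Fin r → ℤ}, lexlt x y → lexlt (φ x) (φ y)) (i : Fin r) :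
    0 < φ (Pi.single i 1) i ∧ ∀ j : Fin r, j < i → φ (Pi.single i 1) j = 0 := by
  -- each φ(e_i) is lex-positive
  have hpos : ∀ k : Fin r, lexlt 0 (φ (Pi.single k 1)) := by
    intro k
    have h0 : lexlt (0 : Fin r → ℤ) (Pi.single k 1) :=
      ⟨k, by simp, fun j hj => by simp [Pi.single_eq_of_ne (ne_of_lt hj)]⟩
    have := hs h0
    rwa [map_zero] at this
  set f : Fin r → Fin r := fun k => (hpos k).choose with hf
  have hfspec : ∀ k : Fin r, 0 < φ (Pi.single k 1) (f k) ∧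
      ∀ j : Fin r, j < f k → φ (Pi.single k 1) j = 0 := by
    intro k
    obtain ⟨h1, h2⟩ := (hpos k).choose_spec
    exact ⟨by simpa using h1, fun j hj => by simpa using (h2 j hj).symm⟩
  have hmono : StrictMono f := by
    intro i' i hii
    by_contra hc
    push_neg at hc   -- hc : f i ≤ f i'
    set x := φ (Pi.single i 1) with hx
    set y := φ (Pi.single i' 1) with hy
    have hxa : 0 < x (f i) := (hfspec i).1
    have hxk : ∀ j, j < f i → x j = 0 := (hfspec i).2
    have hyb : 0 < y (f i') := (hfspec i').1
    have hyk : ∀ j, j < f i' → y j = 0 := (hfspec i').2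
    have hya : 0 ≤ y (f i) := by
      rcases lt_or_eq_of_le hc with h | h
      · exact le_of_eq (hyk _ h).symm
      · rw [h]; exact le_of_lt hyb
    set n : ℤ := y (f i) + 1 with hn
    have hn0 : 0 < n := by linarith
    -- lexlt y (n • x)
    have claim1 : lexlt y (n • x) := by
      refine ⟨f i, ?_, ?_⟩
      · have : n * 1 ≤ n * x (f i) := mul_le_mul_of_nonneg_left hxa (le_of_lt hn0)
        simp only [Pi.smul_apply, smul_eq_mul]
        omega
      · intro j hj
        have hxj := hxk j hj
        have hyj := hyk j (lt_of_lt_of_le hj hc)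
        simp [hyj, hxj]
    -- lexlt (n • e_i) e_{i'}
    have claim2 : lexlt (n • Pi.single i (1:ℤ)) (Pi.single i' 1) := by
      refine ⟨i', ?_, ?_⟩
      · simp [Pi.single_eq_of_ne hii.ne]
      · intro j hj
        have h1 : j ≠ i := ne_of_lt (hj.trans hii)
        have h2 : j ≠ i' := ne_of_lt hj
        simp [Pi.single_eq_of_ne h1, Pi.single_eq_of_ne h2]
    have claim3 := hs claim2
    rw [map_zsmul] at claim3
    exact lexlt_asymm claim1 claim3
  have hid : ∀ k, f k = k := fin_strictMono_id hmono
  have := hfspec i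
  rw [hid i] at this
  exact this

end Stmt7Aux

open Stmt7Aux

theorem stmt7 (r : ℕ) (hr : 1 ≤ r) (φ : (Fin r → ℤ) ≃+ (Fin r → ℤ))
    (hmono : ∀ x y : Fin r → ℤ, zlexLE x y → zlexLE (φ x) (φ y)) :
    ∀ i : Fin r, φ (Pi.single i 1) i = 1 ∧
      ∀ j : Fin r, j < i → φ (Pi.single i 1) j = 0 := by
  have hs : ∀ {x y : Fin r → ℤ}, lexlt x y → lexlt (φ x) (φ y) :=
    fun h => strict_of_mono φ hmono h
  have hs' : ∀ {x y : Fin r → ℤ}, lexlt x y → lexlt (φ.symm x) (φ.symm y) :=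
    fun h => symm_strict φ (fun h' => hs h') h
  intro i
  obtain ⟨hdiag, htri⟩ := key φ (fun h => hs h) i
  obtain ⟨hdiag', htri'⟩ := key φ.symm (fun h => hs' h) i
  refine ⟨?_, htri⟩
  -- 1 = ∑ k, (φ.symm e_i) k * (φ e_k) i, reduces to diagonal product
  set c : Fin r → ℤ := fun k => φ.symm (Pi.single i 1) k with hc
  have hsum : φ.symm (Pi.single i 1) = ∑ k : Fin r, Pi.single k (c k) :=
    (Finset.univ_sum_single _).symm
  have h1 : (1 : ℤ) = ∑ k : Fin r, c k * φ (Pi.single k 1) i := by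
    have h0 := congrArg (fun v => φ v i) hsum
    simp only [φ.apply_symm_apply, map_sum, Finset.sum_apply, Pi.single_eq_same] at h0
    refine h0.trans ?_
    refine Finset.sum_congr rfl fun k _ => ?_
    rw [single_eq_smul k (c k), map_zsmul, Pi.smul_apply, smul_eq_mul]
  have h2 : (∑ k : Fin r, c k * φ (Pi.single k 1) i) = c i * φ (Pi.single i 1) i := by
    refine Finset.sum_eq_single i ?_ ?_
    · intro k _ hk
      rcases lt_or_gt_of_ne hk with h | h
      · have : c k = 0 := htri' k h
        rw [this, zero_mul]
      · have : φ (Pi.single k 1) i = 0 := (key φ (fun h => hs h) k).2 i h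
        rw [this, mul_zero]
    · intro h
      exact absurd (Finset.mem_univ i) h
  have h2 : (1 : ℤ) = c i * φ (Pi.single i 1) i := h1.trans h2
  have hci : 0 < c i := hdiag'
  rcases Int.mul_eq_one_iff_eq_one_or_neg_one.mp h2.symm with ⟨h3, h4⟩ | ⟨h3, h4⟩
  · exact h4
  · rw [h3] at hci; exact absurd hci (by norm_num)
end

section
/- Let r ≥ 1 and let Γ be a subgroup of ℝ^r, equipped with the order induced by the lexicographic order on ℝ^r with first coordinate most significant, and let deg : Γ → ℤ be a surjective, monotone group homomorphism. Assume there exists x ∈ Γ with x₁ ≠ 0. Then there is a real number t > 0 such that x₁ = t·deg(x) for every x ∈ Γ; in particular Γ is contained in tℤ × ℝ^{r−1}. -/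
theorem stmt9 (r : ℕ) (hr : 1 ≤ r) (Γ : AddSubgroup (Fin r → ℝ))
    (deg : ↥Γ →+ ℤ) (hsurj : Function.Surjective deg)
    (hmono : ∀ x y : ↥Γ, rlexLE (x : Fin r → ℝ) (y : Fin r → ℝ) → deg x ≤ deg y)
    (hex : ∃ x : ↥Γ, (x : Fin r → ℝ) ⟨0, hr⟩ ≠ 0) :
    ∃ t : ℝ, 0 < t ∧ (∀ x : ↥Γ, (x : Fin r → ℝ) ⟨0, hr⟩ = t * (deg x : ℝ)) ∧
      ∀ x : ↥Γ, ∃ m : ℤ, (x : Fin r → ℝ) ⟨0, hr⟩ = t * (m : ℝ) := by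
  obtain ⟨g, hg⟩ := hsurj 1
  set i : Fin r := ⟨0, hr⟩ with hi
  have hj0 : ∀ j : Fin r, ¬ j < i := by
    intro j hj
    exact Nat.not_lt_zero j.val hj
  -- no element of degree 0 has positive first coordinate
  have nopos : ∀ y : ↥Γ, deg y = 0 → ¬ (0 < (y : Fin r → ℝ) i) := by
    intro y hy hpos
    obtain ⟨n, hn⟩ := Archimedean.arch ((g : Fin r → ℝ) i) hpos
    have hlt : (g : Fin r → ℝ) i < (((n + 1) • y : ↥Γ) : Fin r → ℝ) i := by
      have : (((n + 1) • y : ↥Γ) : Fin r → ℝ) i = (n + 1 : ℕ) * (y : Fin r → ℝ) i := by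
        push_cast
        simp
      rw [this]
      have : (n : ℝ) * (y : Fin r → ℝ) i < (n + 1 : ℕ) * (y : Fin r → ℝ) i := by
        push_cast; nlinarith
      calc (g : Fin r → ℝ) i ≤ n • (y : Fin r → ℝ) i := hn
        _ = (n : ℝ) * (y : Fin r → ℝ) i := by simp
        _ < _ := this
    have hle : deg g ≤ deg ((n + 1) • y) :=
      hmono g ((n + 1) • y) (Or.inl ⟨i, hlt, fun j hj => absurd hj (hj0 j)⟩)
    rw [hg, map_nsmul, hy] at hle
    simp at hle
  -- degree 0 implies first coordinate 0
  have key : ∀ y : ↥Γ, deg y = 0 → (y : Fin r → ℝ) i = 0 := by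
    intro y hy
    by_contra h
    rcases lt_or_gt_of_ne h with hneg | hpos
    · exact nopos (-y) (by simp [hy]) (by simpa using hneg)
    · exact nopos y hy hpos
  have hmain : ∀ x : ↥Γ, (x : Fin r → ℝ) i = (g : Fin r → ℝ) i * (deg x : ℝ) := by
    intro x
    have h0 : deg (x - (deg x) • g) = 0 := by
      rw [map_sub, map_zsmul, hg]
      simp
    have := key _ h0
    have hcoe : ((x - (deg x) • g : ↥Γ) : Fin r → ℝ) i
        = (x : Fin r → ℝ) i - (deg x : ℝ) * (g : Fin r → ℝ) i := by
      push_cast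
      simp
    rw [hcoe] at this
    linarith
  -- positivity of t
  have hgnn : 0 ≤ (g : Fin r → ℝ) i := by
    by_contra h
    push_neg at h
    have hlt : rlexLT (g : Fin r → ℝ) ((0 : ↥Γ) : Fin r → ℝ) :=
      ⟨i, by simpa using h, fun j hj => absurd hj (hj0 j)⟩
    have := hmono g 0 (Or.inl hlt)
    rw [hg, map_zero] at this
    omega
  obtain ⟨x, hx⟩ := hex
  have ht : 0 < (g : Fin r → ℝ) i := by
    rcases hgnn.lt_or_eq with h | h
    · exact h
    · exfalso
      apply hx
      rw [hmain x, ← h]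
      ring
  exact ⟨(g : Fin r → ℝ) i, ht, hmain, fun x => ⟨deg x, hmain x⟩⟩
end

section
/- Let r ≥ 1 and, for i = 1, …, r+1, let K_i = {x ∈ ℝ^r : x_j = 0 for all j ≤ r − i + 1} (so K₁ = {0} and K_{r+1} = ℝ^r), each an isolated subgroup of ℝ^r with the lexicographic order (first coordinate most significant). Let Γ ⊆ ℝ^r be a subgroup, with the induced lexicographic order, such that Γ ∩ K_i ≠ Γ ∩ K_{i+1} for every i = 1, …, r. Then a subgroup H ⊆ Γ is isolated (with respect to the induced order on Γ) if and only if H = Γ ∩ K_i for some i ∈ {1, …, r+1}. -/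
open scoped Classical

/-- Lexicographic absolute value on `ℝ^r`: `max(x, -x)` for the lexicographic order. -/
noncomputable def rlexAbs {r : ℕ} (x : Fin r → ℝ) : Fin r → ℝ :=
  if rlexLE x (-x) then -x else x

/-- `H` is an isolated subgroup of `Γ` with respect to the order induced on `Γ` by the
lexicographic order of `ℝ^r`. -/
def IsolatedIn {r : ℕ} (Γ H : AddSubgroup (Fin r → ℝ)) : Prop :=
  ∀ γ ∈ H, ∀ η ∈ Γ, rlexLE (rlexAbs η) (rlexAbs γ) → η ∈ H

/-- The isolated subgroup `K_i = {x : x_j = 0 for all (1-based) j ≤ r - i + 1}` of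
`ℝ^r_lex`, for `1 ≤ i ≤ r + 1`; in 0-based terms, `x_j = 0` whenever `j + i ≤ r`. -/
def Ksub (r i : ℕ) : AddSubgroup (Fin r → ℝ) where
  carrier := {x | ∀ j : Fin r, (j : ℕ) + i ≤ r → x j = 0}
  add_mem' := by
    intro a b ha hb j hj
    simp only [Pi.add_apply, ha j hj, hb j hj, add_zero]
  zero_mem' := by intro j hj; rfl
  neg_mem' := by
    intro a ha j hj
    simp only [Pi.neg_apply, ha j hj, neg_zero]

lemma rlexAbs_eq_or {r : ℕ} (x : Fin r → ℝ) : rlexAbs x = x ∨ rlexAbs x = -x := by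
  unfold rlexAbs; split
  · exact Or.inr rfl
  · exact Or.inl rfl

lemma rlexAbs_lead {r : ℕ} (x : Fin r → ℝ) (m : Fin r)
    (hm : ∀ j : Fin r, j < m → x j = 0) : rlexAbs x m = |x m| := by
  rcases lt_trichotomy (x m) 0 with h | h | h
  · have hle : rlexLE x (-x) :=
      Or.inl ⟨m, by simp only [Pi.neg_apply]; linarith,
        fun j hj => by simp [hm j hj]⟩
    simp [rlexAbs, hle, abs_of_neg h]
  · rcases rlexAbs_eq_or x with h' | h' <;> simp [h', h]
  · have hnle : ¬ rlexLE x (-x) := by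
      rintro (⟨k, hk1, hk2⟩ | heq)
      · simp only [Pi.neg_apply] at hk1
        rcases lt_trichotomy k m with hkm | hkm | hkm
        · have := hm k hkm; rw [this] at hk1; linarith
        · subst hkm; linarith
        · have := hk2 m hkm; simp only [Pi.neg_apply] at this; linarith
      · have := congrFun heq m; simp only [Pi.neg_apply] at this; linarith
    simp [rlexAbs, hnle, abs_of_pos h]

lemma exists_lead {r : ℕ} (x : Fin r → ℝ) (j₀ : Fin r) (hj₀ : x j₀ ≠ 0) :
    ∃ m : Fin r, x m ≠ 0 ∧ m ≤ j₀ ∧ ∀ j, j < m → x j = 0 := by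
  classical
  set s : Finset (Fin r) := Finset.univ.filter (fun j => x j ≠ 0) with hs
  have hne : s.Nonempty := ⟨j₀, by simp [hs, hj₀]⟩
  refine ⟨s.min' hne, ?_, ?_, ?_⟩
  · have := s.min'_mem hne; simp [hs] at this; exact this
  · exact s.min'_le j₀ (by simp [hs, hj₀])
  · intro j hj
    by_contra hxj
    exact absurd (s.min'_le j (by simp [hs, hxj])) (not_le.mpr hj)

lemma mem_Ksub {r i : ℕ} {x : Fin r → ℝ} :
    x ∈ Ksub r i ↔ ∀ j : Fin r, (j : ℕ) + i ≤ r → x j = 0 := Iff.rfl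

lemma Ksub_isolated {r i : ℕ} (Γ : AddSubgroup (Fin r → ℝ)) :
    IsolatedIn Γ (Γ ⊓ Ksub r i) := by
  intro γ hγ η hη hle
  refine ⟨hη, ?_⟩
  show ∀ j : Fin r, (j : ℕ) + i ≤ r → η j = 0
  by_contra hcon
  push_neg at hcon
  obtain ⟨j₀, hj₀r, hj₀⟩ := hcon
  obtain ⟨m, hm0, hmj, hmlt⟩ := exists_lead η j₀ hj₀
  have hγK : γ ∈ Ksub r i := hγ.2
  have hγ0 : ∀ j : Fin r, j ≤ m → rlexAbs γ j = 0 := by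
    intro j hj
    have hmj' : (m : ℕ) ≤ (j₀ : ℕ) := hmj
    have hj' : (j : ℕ) ≤ (m : ℕ) := hj
    have : γ j = 0 := hγK j (by omega)
    rcases rlexAbs_eq_or γ with h' | h' <;> simp [h', this]
  have hηm : rlexAbs η m = |η m| := rlexAbs_lead η m hmlt
  have hηpos : 0 < rlexAbs η m := by rw [hηm]; exact abs_pos.mpr hm0
  have hη0 : ∀ j : Fin r, j < m → rlexAbs η j = 0 := by
    intro j hj
    rcases rlexAbs_eq_or η with h' | h' <;> simp [h', hmlt j hj]
  rcases hle with ⟨k, hk1, hk2⟩ | heq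
  · rcases lt_trichotomy k m with hkm | hkm | hkm
    · rw [hη0 k hkm, hγ0 k (le_of_lt hkm)] at hk1; linarith
    · subst hkm; rw [hγ0 k le_rfl] at hk1; linarith
    · have := hk2 m hkm; rw [hγ0 m le_rfl] at this; linarith
  · have := congrFun heq m
    rw [hγ0 m le_rfl] at this; linarith

theorem stmt10 (r : ℕ) (hr : 1 ≤ r) (Γ : AddSubgroup (Fin r → ℝ))
    (hchain : ∀ i : ℕ, 1 ≤ i → i ≤ r → Γ ⊓ Ksub r i ≠ Γ ⊓ Ksub r (i + 1))
    (H : AddSubgroup (Fin r → ℝ)) (hH : H ≤ Γ) :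
    IsolatedIn Γ H ↔ ∃ i : ℕ, 1 ≤ i ∧ i ≤ r + 1 ∧ H = Γ ⊓ Ksub r i := by
  constructor
  · intro hiso
    classical
    set S : Finset ℕ := (Finset.Icc 1 (r+1)).filter (fun i => Γ ⊓ Ksub r i ≤ H) with hS
    have h1S : 1 ∈ S := by
      simp only [hS, Finset.mem_filter, Finset.mem_Icc]
      refine ⟨⟨le_refl 1, by omega⟩, ?_⟩
      intro x hx
      have hx0 : x = 0 := by
        funext j
        exact hx.2 j (by have := j.isLt; omega)
      rw [hx0]; exact H.zero_mem
    have hne : S.Nonempty := ⟨1, h1S⟩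
    set i := S.max' hne with hi
    have hiS : i ∈ S := S.max'_mem hne
    simp only [hS, Finset.mem_filter, Finset.mem_Icc] at hiS
    refine ⟨i, hiS.1.1, hiS.1.2, le_antisymm ?_ hiS.2⟩
    intro γ hγ
    refine ⟨hH hγ, ?_⟩
    show ∀ j : Fin r, (j : ℕ) + i ≤ r → γ j = 0
    by_contra hcon
    push_neg at hcon
    obtain ⟨j₀, hj₀r, hj₀⟩ := hcon
    obtain ⟨m, hm0, hmj, hmlt⟩ := exists_lead γ j₀ hj₀
    have hmr : (m : ℕ) + i ≤ r := by
      have : (m : ℕ) ≤ (j₀ : ℕ) := hmj; omega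
    have hkey : Γ ⊓ Ksub r (r - (m : ℕ) + 1) ≤ H := by
      rintro η ⟨hηΓ, hηK⟩
      have hηlt : ∀ j : Fin r, j < m → η j = 0 := by
        intro j hj
        exact hηK j (by have hj' : (j : ℕ) < (m : ℕ) := hj; omega)
      obtain ⟨N, hN⟩ := exists_nat_gt (|η m| / |γ m|)
      have hγm : 0 < |γ m| := abs_pos.mpr hm0
      have hNbig : |η m| < (N : ℝ) * |γ m| := by
        rw [div_lt_iff₀ hγm] at hN; linarith
      have hNγ : (N • γ) ∈ H := AddSubgroup.nsmul_mem H hγ N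
      refine hiso (N • γ) hNγ η hηΓ ?_
      left
      refine ⟨m, ?_, ?_⟩
      · have h1 : rlexAbs η m = |η m| := rlexAbs_lead η m hηlt
        have h2 : rlexAbs (N • γ) m = |(N • γ) m| := rlexAbs_lead (N • γ) m (by
          intro j hj
          simp [hmlt j hj])
        have h3 : (N • γ) m = (N : ℝ) * γ m := by simp
        rw [h1, h2, h3, abs_mul, Nat.abs_cast]
        exact hNbig
      · intro j hj
        have e1 : rlexAbs η j = 0 := by
          rcases rlexAbs_eq_or η with h' | h' <;> simp [h', hηlt j hj]
        have e2 : rlexAbs (N • γ) j = 0 := by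
          have hz : (N • γ) j = 0 := by simp [hmlt j hj]
          rcases rlexAbs_eq_or (N • γ) with h' | h' <;> rw [h'] <;>
            simp only [Pi.neg_apply, hz, neg_zero]
        rw [e1, e2]
    have hmem : r - (m : ℕ) + 1 ∈ S := by
      simp only [hS, Finset.mem_filter, Finset.mem_Icc]
      exact ⟨⟨by omega, by omega⟩, hkey⟩
    have hle' := S.le_max' _ hmem
    rw [← hi] at hle'
    have h1i : 1 ≤ i := hiS.1.1
    omega
  · rintro ⟨i, -, -, rfl⟩
    exact Ksub_isolated Γ
end

section
/- Let k be an algebraically closed field and K a field extension of k of finite transcendence degree n. Let v : Kˣ → Γ be a k-valuation whose value group Γ = v(Kˣ) has rational rank n, i.e. dim_ℚ(Γ ⊗_ℤ ℚ) = n. Then for every finite-dimensional k-linear subspace W ⊆ K, the dimension of W over k equals the cardinality of the set of values v(W ∖ {0}) = {v(s) : s ∈ W, s ≠ 0}. -/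
section Val
variable {k K : Type*} [Field k] [Field K] [Algebra k K]
variable {Γ : Type*} [AddCommGroup Γ] [LinearOrder Γ] [IsOrderedAddMonoid Γ] {v : K → Γ}

lemma v_one (hk : ∀ a : k, a ≠ 0 → v (algebraMap k K a) = 0) : v 1 = 0 := by
  have := hk 1 one_ne_zero; simpa using this

lemma v_inv (hmul : ∀ f g : K, f ≠ 0 → g ≠ 0 → v (f * g) = v f + v g)
    (hk : ∀ a : k, a ≠ 0 → v (algebraMap k K a) = 0)
    (f : K) (hf : f ≠ 0) : v f⁻¹ = - v f := by
  have h := hmul f f⁻¹ hf (inv_ne_zero hf)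
  rw [mul_inv_cancel₀ hf, v_one hk] at h
  exact eq_neg_of_add_eq_zero_right h.symm

lemma v_neg (hmul : ∀ f g : K, f ≠ 0 → g ≠ 0 → v (f * g) = v f + v g)
    (hk : ∀ a : k, a ≠ 0 → v (algebraMap k K a) = 0)
    (f : K) (hf : f ≠ 0) : v (-f) = v f := by
  have h := hmul (algebraMap k K (-1)) f (by simp) hf
  rw [hk (-1) (by simp), map_neg, map_one, neg_one_mul, zero_add] at h
  exact h

lemma v_pow (hmul : ∀ f g : K, f ≠ 0 → g ≠ 0 → v (f * g) = v f + v g)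
    (hk : ∀ a : k, a ≠ 0 → v (algebraMap k K a) = 0)
    (f : K) (hf : f ≠ 0) (m : ℕ) : v (f ^ m) = m • v f := by
  induction m with
  | zero => simpa using v_one hk
  | succ i ih =>
    rw [pow_succ, hmul _ _ (pow_ne_zero _ hf) hf, ih, succ_nsmul]

lemma v_sum (hmul : ∀ f g : K, f ≠ 0 → g ≠ 0 → v (f * g) = v f + v g)
    (haddv : ∀ f g : K, f ≠ 0 → g ≠ 0 → f + g ≠ 0 → min (v f) (v g) ≤ v (f + g))
    (hk : ∀ a : k, a ≠ 0 → v (algebraMap k K a) = 0)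
    {ι : Type*} (t : Finset ι) (f : ι → K) (h0 : ∀ i ∈ t, f i ≠ 0)
    (hd : ∀ i ∈ t, ∀ j ∈ t, i ≠ j → v (f i) ≠ v (f j)) (hne : t.Nonempty) :
    ∃ i ∈ t, (∑ j ∈ t, f j) ≠ 0 ∧ v (∑ j ∈ t, f j) = v (f i) ∧ ∀ j ∈ t, v (f i) ≤ v (f j) := by
  classical
  induction t using Finset.cons_induction with
  | empty => exact absurd hne (by simp)
  | cons a s ha ih =>
    rcases s.eq_empty_or_nonempty with rfl | hs
    · exact ⟨a, by simp, by simpa using h0 a (by simp), by simp, by simp⟩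
    · obtain ⟨i, hi, hS0, hSv, hSmin⟩ := ih (fun j hj => h0 j (Finset.mem_cons_of_mem hj))
        (fun i hi j hj hij => hd i (Finset.mem_cons_of_mem hi) j (Finset.mem_cons_of_mem hj) hij) hs
      set S := ∑ j ∈ s, f j with hSdef
      have hsum : ∑ j ∈ Finset.cons a s ha, f j = f a + S := Finset.sum_cons ha
      have hfa : f a ≠ 0 := h0 a (Finset.mem_cons_self a s)
      have hne' : v (f a) ≠ v (f i) := hd a (Finset.mem_cons_self a s) i
        (Finset.mem_cons_of_mem hi) (by rintro rfl; exact ha hi)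
      rcases lt_or_gt_of_ne hne' with hlt | hgt
      · -- v (f a) < v (f i) = v S ; result value v (f a)
        have hvS : v (f a) < v S := by rw [hSv]; exact hlt
        have hne0 : f a + S ≠ 0 := by
          intro h
          have hSe : S = -f a := by linear_combination h
          rw [hSe, v_neg hmul hk _ hfa] at hvS
          exact lt_irrefl _ hvS
        have hge : v (f a) ≤ v (f a + S) := by
          have := haddv (f a) S hfa hS0 hne0
          exact le_trans (le_min (le_refl _) hvS.le) this
        have hle : v (f a + S) ≤ v (f a) := by
          by_contra hcon
          push_neg at hcon
          have h2 : min (v (f a + S)) (v (-S)) ≤ v (f a) := by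
            have := haddv (f a + S) (-S) hne0 (neg_ne_zero.mpr hS0) (by
              rw [add_neg_cancel_right]; exact hfa)
            rwa [add_neg_cancel_right] at this
          rw [v_neg hmul hk _ hS0] at h2
          rcases min_le_iff.mp h2 with h | h
          · exact absurd h (not_le.mpr hcon)
          · exact absurd h (not_le.mpr hvS)
        refine ⟨a, Finset.mem_cons_self a s, fun hz => hne0 (hsum ▸ hz), ?_, ?_⟩
        · rw [hsum]; exact le_antisymm hle hge
        · intro j hj
          rcases Finset.mem_cons.mp hj with rfl | hj
          · exact le_refl _
          · exact le_trans hvS.le (hSv ▸ hSmin j hj)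
      · -- v S = v (f i) < v (f a) ; result value v (f i)
        have hvS : v S < v (f a) := by rw [hSv]; exact hgt
        have hne0 : f a + S ≠ 0 := by
          intro h
          have hSe : S = -f a := by linear_combination h
          rw [hSe, v_neg hmul hk _ hfa] at hvS
          exact lt_irrefl _ hvS
        have hge : v S ≤ v (f a + S) := by
          have := haddv (f a) S hfa hS0 hne0
          exact le_trans (le_min hvS.le (le_refl _)) this
        have hle : v (f a + S) ≤ v S := by
          by_contra hcon
          push_neg at hcon
          have h2 : min (v (f a + S)) (v (-(f a))) ≤ v S := by
            have := haddv (f a + S) (-(f a)) hne0 (neg_ne_zero.mpr hfa) (by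
              rw [add_comm (f a) S, add_neg_cancel_right]; exact hS0)
            rw [add_comm (f a) S] at this ⊢
            rwa [add_neg_cancel_right] at this
          rw [v_neg hmul hk _ hfa] at h2
          rcases min_le_iff.mp h2 with h | h
          · exact absurd h (not_le.mpr hcon)
          · exact absurd h (not_le.mpr hvS)
        refine ⟨i, Finset.mem_cons_of_mem hi, fun hz => hne0 (hsum ▸ hz), ?_, ?_⟩
        · rw [hsum, ← hSv]; exact le_antisymm hle hge
        · intro j hj
          rcases Finset.mem_cons.mp hj with rfl | hj
          · exact (hSv.symm.trans_lt hvS).le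
          · exact hSmin j hj

end Val

open IntermediateField Polynomial

lemma exch {F K : Type*} [Field F] [Field K] [Algebra F K] (a u : K)
    (hu : Transcendental F u)
    (h : IsAlgebraic ↥(adjoin F {a}) u) : IsAlgebraic ↥(adjoin F {u}) a := by
  classical
  obtain ⟨p, hp0, hpu⟩ := h
  set N := p.natDegree + 1 with hN
  have hrs : ∀ i : ℕ, ∃ rs : Polynomial F × Polynomial F,
      (p.coeff i : K) = aeval a rs.1 / aeval a rs.2 ∧ aeval a rs.2 ≠ 0 := by
    intro i
    by_cases hz : (p.coeff i : K) = 0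
    · exact ⟨⟨0, 1⟩, by simp [hz], by simp⟩
    · obtain ⟨r, s, hres⟩ := (mem_adjoin_simple_iff F _).mp (p.coeff i).2
      refine ⟨⟨r, s⟩, hres, fun hs => hz ?_⟩
      rw [hres, hs, div_zero]
  choose rs hres hsne using hrs
  set D : K := ∏ i ∈ Finset.range N, aeval a (rs i).2 with hD
  have hDne : D ≠ 0 := Finset.prod_ne_zero_iff.mpr fun i _ => hsne i
  set q : ℕ → Polynomial F :=
    fun i => (rs i).1 * ∏ i' ∈ (Finset.range N).erase i, (rs i').2 with hq
  have hqeval : ∀ i ∈ Finset.range N, aeval a (q i) = (p.coeff i : K) * D := by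
    intro i hi
    rw [hq]
    simp only [map_mul, map_prod]
    rw [hres i, hD, ← Finset.mul_prod_erase _ _ hi, ← mul_assoc,
      div_mul_cancel₀ _ (hsne i)]
  have hps : (0 : K) = ∑ i ∈ Finset.range N, (p.coeff i : K) * u ^ i := by
    rw [← hpu, aeval_eq_sum_range]
    exact Finset.sum_congr rfl fun i _ => Algebra.smul_def _ _
  have hsum : ∑ i ∈ Finset.range N, aeval a (q i) * u ^ i = 0 := by
    calc ∑ i ∈ Finset.range N, aeval a (q i) * u ^ i
        = D * ∑ i ∈ Finset.range N, (p.coeff i : K) * u ^ i := by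
          rw [Finset.mul_sum]
          exact Finset.sum_congr rfl fun i hi => by rw [hqeval i hi]; ring
      _ = 0 := by rw [← hps, mul_zero]
  have hqne : q p.natDegree ≠ 0 := by
    intro hzero
    have h1 := hqeval p.natDegree (by simp [hN])
    rw [hzero, map_zero] at h1
    have h2 : (p.coeff p.natDegree : K) ≠ 0 := by
      simpa using (Polynomial.leadingCoeff_ne_zero.mpr hp0)
    exact h2 (by
      rcases mul_eq_zero.mp h1.symm with h | h
      · exact h
      · exact absurd h hDne)
  set M := (Finset.range N).sup (fun i => (q i).natDegree) + 1 with hM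
  have hdeg : ∀ i ∈ Finset.range N, (q i).natDegree < M :=
    fun i hi => Nat.lt_succ_of_le (Finset.le_sup (f := fun i => (q i).natDegree) hi)
  set tr : ℕ → Polynomial F := fun j => ∑ i ∈ Finset.range N, C ((q i).coeff j) * X ^ i with htr
  have htreval : ∀ j : ℕ, aeval u (tr j)
      = ∑ i ∈ Finset.range N, algebraMap F K ((q i).coeff j) * u ^ i := by
    intro j
    rw [htr]
    simp [map_sum]
  have hkey : ∑ j ∈ Finset.range M, aeval u (tr j) * a ^ j = 0 := by
    calc ∑ j ∈ Finset.range M, aeval u (tr j) * a ^ j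
        = ∑ j ∈ Finset.range M, ∑ i ∈ Finset.range N,
            (algebraMap F K ((q i).coeff j) * a ^ j) * u ^ i := by
          refine Finset.sum_congr rfl fun j _ => ?_
          rw [htreval, Finset.sum_mul]
          exact Finset.sum_congr rfl fun i _ => by ring
      _ = ∑ i ∈ Finset.range N, (∑ j ∈ Finset.range M,
            algebraMap F K ((q i).coeff j) * a ^ j) * u ^ i := by
          rw [Finset.sum_comm]
          exact Finset.sum_congr rfl fun i _ => by rw [Finset.sum_mul]
      _ = ∑ i ∈ Finset.range N, aeval a (q i) * u ^ i := by
          refine Finset.sum_congr rfl fun i hi => ?_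
          rw [aeval_eq_sum_range' (hdeg i hi)]
          congr 1
          exact Finset.sum_congr rfl fun j _ => by rw [Algebra.smul_def]
      _ = 0 := hsum
  have hmem : ∀ j : ℕ, aeval u (tr j) ∈ adjoin F {u} :=
    fun j => algebra_adjoin_le_adjoin F {u} (aeval_mem_adjoin_singleton F u)
  set R : Polynomial ↥(adjoin F {u}) :=
    ∑ j ∈ Finset.range M, C (⟨aeval u (tr j), hmem j⟩ : ↥(adjoin F {u})) * X ^ j with hR
  have hRa : aeval a R = 0 := by
    rw [hR, map_sum, ← hkey]
    refine Finset.sum_congr rfl fun j _ => ?_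
    rw [map_mul, aeval_C, map_pow, aeval_X]
    rfl
  -- nonzeroness
  set i₁ := p.natDegree with hi₁
  have hi₁mem : i₁ ∈ Finset.range N := by simp [hN]
  set j₀ := (q i₁).natDegree with hj₀
  have hcne : (q i₁).coeff j₀ ≠ 0 := Polynomial.leadingCoeff_ne_zero.mpr hqne
  have htrne : tr j₀ ≠ 0 := by
    intro hzero
    have : (tr j₀).coeff i₁ = (q i₁).coeff j₀ := by
      rw [htr, Polynomial.finset_sum_coeff]
      rw [Finset.sum_eq_single i₁]
      · rw [Polynomial.coeff_C_mul, Polynomial.coeff_X_pow, if_pos rfl, mul_one]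
      · intro b _ hb
        rw [Polynomial.coeff_C_mul, Polynomial.coeff_X_pow, if_neg (Ne.symm hb), mul_zero]
      · intro hni; exact absurd hi₁mem hni
    rw [hzero, Polynomial.coeff_zero] at this
    exact hcne this.symm
  have hEne : aeval u (tr j₀) ≠ 0 := fun hzz => htrne (transcendental_iff.mp hu _ hzz)
  have hR0 : R ≠ 0 := by
    intro hzero
    have hj₀M : j₀ ∈ Finset.range M := Finset.mem_range.mpr (hdeg i₁ hi₁mem)
    have : R.coeff j₀ = (⟨aeval u (tr j₀), hmem j₀⟩ : ↥(adjoin F {u})) := by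
      rw [hR, Polynomial.finset_sum_coeff]
      rw [Finset.sum_eq_single j₀]
      · rw [Polynomial.coeff_C_mul, Polynomial.coeff_X_pow, if_pos rfl, mul_one]
      · intro b _ hb
        rw [Polynomial.coeff_C_mul, Polynomial.coeff_X_pow, if_neg (Ne.symm hb), mul_zero]
      · intro hni; exact absurd hj₀M hni
    rw [hzero, Polynomial.coeff_zero] at this
    exact hEne (by
      have := congrArg (Subtype.val) this
      simpa using this.symm)
  exact ⟨R, hR0, hRa⟩

open IntermediateField Polynomial

section FT
variable {k K : Type*} [Field k] [Field K] [Algebra k K]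

-- from part2a (restated here for testing; will merge)
lemma algOn_mono {S T : Set K} (h : S ⊆ T) {x : K}
    (hx : IsAlgebraic ↥(adjoin k S) x) : IsAlgebraic ↥(adjoin k T) x :=
  IsAlgebraic.tower_top_of_subalgebra_le (adjoin.mono k S T h) hx

lemma algOn_trans {S : Set K} {a x : K}
    (hx : IsAlgebraic ↥(adjoin k (insert a S)) x)
    (ha : IsAlgebraic ↥(adjoin k S) a) : IsAlgebraic ↥(adjoin k S) x := by
  set E := adjoin k S
  have h1 : IsAlgebraic ↥(adjoin ↥E {a}) x := by
    have h' : IsAlgebraic ↥((adjoin ↥E {a}).restrictScalars k) x := by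
      rw [adjoin_adjoin_left, Set.union_singleton]; exact hx
    exact h'
  have hInt : Algebra.IsAlgebraic ↥E ↥(adjoin ↥E {a}) :=
    isAlgebraic_adjoin_simple ha.isIntegral
  have : Algebra.IsIntegral ↥E ↥(adjoin ↥E {a}) := Algebra.isAlgebraic_iff_isIntegral.mp hInt
  exact (isIntegral_trans x h1.isIntegral).isAlgebraic

lemma exch' {F K' : Type*} [Field F] [Field K'] [Algebra F K'] (a u : K')
    (hu : Transcendental F u)
    (h : IsAlgebraic ↥(adjoin F {a}) u) : IsAlgebraic ↥(adjoin F {u}) a := exch a u hu h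

lemma algOn_exch {S : Set K} {a u : K}
    (hu : Transcendental ↥(adjoin k S) u)
    (h : IsAlgebraic ↥(adjoin k (insert a S)) u) :
    IsAlgebraic ↥(adjoin k (insert u S)) a := by
  set E := adjoin k S
  have h1 : IsAlgebraic ↥(adjoin ↥E {a}) u := by
    have h' : IsAlgebraic ↥((adjoin ↥E {a}).restrictScalars k) u := by
      rw [adjoin_adjoin_left, Set.union_singleton]; exact h
    exact h'
  have h2 := exch' a u hu h1
  have h3 : IsAlgebraic ↥((adjoin ↥E {u}).restrictScalars k) a := h2
  rwa [adjoin_adjoin_left, Set.union_singleton] at h3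

lemma ind_exchange : ∀ (m : ℕ) (T : Finset K) (_ : T.card ≤ m) (Y : Set K) (z : ℕ → K)
    (_ : ∀ w : K, IsAlgebraic ↥(adjoin k (Y ∪ ↑T)) w)
    (_ : ∀ i ≤ m, Transcendental ↥(adjoin k (Y ∪ z '' {j | j < i})) (z i)), False := by
  have himg0 : ∀ z : ℕ → K, z '' {j | j < 0} = ∅ := by
    intro z; apply Set.eq_empty_iff_forall_notMem.mpr; rintro x ⟨j, hj, -⟩
    exact Nat.not_lt_zero j hj
  intro m
  induction m with
  | zero =>
    intro T hTm Y z halg hz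
    have hT : (T : Set K) = ∅ := by
      have := Finset.card_eq_zero.mp (le_antisymm hTm (Nat.zero_le _)); simp [this]
    have h0 := hz 0 le_rfl
    rw [himg0 z] at h0
    rw [hT] at halg
    exact h0 (halg (z 0))
  | succ m ih =>
    intro T hTm Y z halg hz
    classical
    have hzY : Transcendental ↥(adjoin k (Y ∪ ∅)) (z 0) := by
      have h0 := hz 0 (Nat.zero_le _); rwa [himg0 z] at h0
    by_cases hTe : T = ∅
    · subst hTe
      have hh := halg (z 0)
      rw [Finset.coe_empty] at hh
      exact hzY hh
    · set 𝒮 := T.powerset.filter (fun T' : Finset K => IsAlgebraic ↥(adjoin k (Y ∪ (T' : Set K))) (z 0)) with h𝒮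
      have hTS : T ∈ 𝒮 := Finset.mem_filter.mpr ⟨Finset.mem_powerset_self T, halg (z 0)⟩
      obtain ⟨T', hT'S, hmin⟩ := 𝒮.exists_min_image Finset.card ⟨T, hTS⟩
      have hT'sub : T' ⊆ T := Finset.mem_powerset.mp (Finset.mem_filter.mp hT'S).1
      have hT'alg : IsAlgebraic ↥(adjoin k (Y ∪ ↑T')) (z 0) := (Finset.mem_filter.mp hT'S).2
      have hT'ne : T'.Nonempty := by
        rcases T'.eq_empty_or_nonempty with rfl | h
        · refine absurd ?_ hzY
          have h2 := hT'alg; rwa [Finset.coe_empty] at h2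
        · exact h
      obtain ⟨a, haT'⟩ := hT'ne
      set L : Set K := Y ∪ ↑(T'.erase a) with hL
      have htrans : Transcendental ↥(adjoin k L) (z 0) := by
        intro halgL
        have hmem : T'.erase a ∈ 𝒮 := Finset.mem_filter.mpr
          ⟨Finset.mem_powerset.mpr ((Finset.erase_subset a T').trans hT'sub), halgL⟩
        have h1 := hmin _ hmem
        have h2 := Finset.card_erase_lt_of_mem haT'
        omega
      have hins : IsAlgebraic ↥(adjoin k (insert a L)) (z 0) := by
        have hIL : insert a L = Y ∪ ↑T' := by
          rw [hL, ← Set.union_insert, ← Finset.coe_insert, Finset.insert_erase haT']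
        rw [hIL]; exact hT'alg
      have hexch := algOn_exch htrans hins
      set Y' := insert (z 0) Y with hY'
      have hmono : IsAlgebraic ↥(adjoin k (Y' ∪ ↑(T.erase a))) a := by
        refine algOn_mono ?_ hexch
        rw [hL, hY', Set.insert_union]
        exact Set.insert_subset_insert (Set.union_subset_union_right Y
          (Finset.coe_subset.mpr (Finset.erase_subset_erase a hT'sub)))
      have halg' : ∀ w : K, IsAlgebraic ↥(adjoin k (Y' ∪ ↑(T.erase a))) w := by
        intro w
        refine algOn_trans ?_ hmono
        refine algOn_mono ?_ (halg w)
        intro x hx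
        rcases hx with hx | hx
        · exact Set.mem_insert_of_mem a (Or.inl (Set.mem_insert_of_mem _ hx))
        · by_cases hxa : x = a
          · rw [hxa]; exact Set.mem_insert a _
          · refine Set.mem_insert_of_mem a (Or.inr ?_)
            simp only [Finset.coe_erase, Set.mem_diff, Set.mem_singleton_iff]
            exact ⟨hx, hxa⟩
      have hcard : (T.erase a).card ≤ m := by
        have : a ∈ T := hT'sub haT'
        have := Finset.card_erase_of_mem this
        omega
      refine ih (T.erase a) hcard Y' (fun j => z (j + 1)) halg' ?_
      intro i hi
      have hset : Y' ∪ (fun j => z (j + 1)) '' {j | j < i} = Y ∪ z '' {j | j < i + 1} := by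
        rw [hY', Set.insert_union]
        ext x
        simp only [Set.mem_insert_iff, Set.mem_union, Set.mem_image, Set.mem_setOf_eq]
        constructor
        · rintro (rfl | hx | ⟨j, hj, rfl⟩)
          · exact Or.inr ⟨0, Nat.succ_pos i, rfl⟩
          · exact Or.inl hx
          · exact Or.inr ⟨j + 1, Nat.succ_lt_succ hj, rfl⟩
        · rintro (hx | ⟨j, hj, rfl⟩)
          · exact Or.inr (Or.inl hx)
          · rcases j with _ | j'
            · exact Or.inl rfl
            · exact Or.inr (Or.inr ⟨j', Nat.lt_of_succ_lt_succ hj, rfl⟩)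
      rw [hset]
      exact hz (i + 1) (Nat.succ_le_succ hi)

lemma transcendental_adjoin_empty {u : K}
    (h : ∀ p : Polynomial k, p ≠ 0 → Polynomial.aeval u p ≠ 0) :
    Transcendental ↥(adjoin k (∅ : Set K)) u := by
  classical
  rintro ⟨p, hp0, hpu⟩
  set N := p.natDegree + 1 with hN
  have hcmem : ∀ i : ℕ, ((p.coeff i : K)) ∈ (⊥ : IntermediateField k K) :=
    fun i => (adjoin_empty k K).le (p.coeff i).2
  choose aa haa using fun i => (IntermediateField.mem_bot).mp (hcmem i)
  set q : Polynomial k := ∑ i ∈ Finset.range N, C (aa i) * X ^ i with hqdef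
  have hq0 : q ≠ 0 := by
    intro hzero
    have hc : q.coeff p.natDegree = aa p.natDegree := by
      rw [hqdef, Polynomial.finset_sum_coeff, Finset.sum_eq_single p.natDegree]
      · rw [Polynomial.coeff_C_mul, Polynomial.coeff_X_pow, if_pos rfl, mul_one]
      · intro b _ hb
        rw [Polynomial.coeff_C_mul, Polynomial.coeff_X_pow, if_neg (Ne.symm hb), mul_zero]
      · intro hni; exact absurd (Finset.mem_range.mpr (by omega)) hni
    rw [hzero, Polynomial.coeff_zero] at hc
    have : (p.coeff p.natDegree : K) = 0 := by rw [← haa, ← hc, map_zero]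
    have hlc := Polynomial.leadingCoeff_ne_zero.mpr hp0
    exact hlc (by exact_mod_cast this)
  refine h q hq0 ?_
  have : aeval u q = ∑ i ∈ Finset.range N, (p.coeff i : K) * u ^ i := by
    rw [hqdef, map_sum]
    refine Finset.sum_congr rfl fun i _ => ?_
    rw [map_mul, aeval_C, map_pow, aeval_X, haa]
  rw [this, ← hpu, aeval_eq_sum_range]
  exact (Finset.sum_congr rfl fun i _ => by rw [Algebra.smul_def]; rfl)

end FT

open scoped TensorProduct

lemma exists_gamma {Γ : Type*} [AddCommGroup Γ] {n : ℕ}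
    (hrank : Module.rank ℚ (ℚ ⊗[ℤ] Γ) = n) :
    ∃ γ : Fin n → Γ, LinearIndependent ℚ (fun i => (1 : ℚ) ⊗ₜ[ℤ] γ i) := by
  classical
  set s₀ : Set (ℚ ⊗[ℤ] Γ) := Set.range (fun g : Γ => (1 : ℚ) ⊗ₜ[ℤ] g) with hs₀
  have hspan : Submodule.span ℚ s₀ = ⊤ := by
    rw [Submodule.eq_top_iff']
    intro x
    induction x using TensorProduct.induction_on with
    | zero => exact Submodule.zero_mem _
    | tmul q g =>
        have hq : q ⊗ₜ[ℤ] g = q • ((1 : ℚ) ⊗ₜ[ℤ] g) := by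
          rw [TensorProduct.smul_tmul', smul_eq_mul, mul_one]
        rw [hq]
        exact Submodule.smul_mem _ q (Submodule.subset_span ⟨g, rfl⟩)
    | add x y hx hy => exact Submodule.add_mem _ hx hy
  obtain ⟨b, hbsub, hbspan, hbli⟩ := exists_linearIndependent ℚ s₀
  have hbtop : Submodule.span ℚ (Set.range ((↑) : b → ℚ ⊗[ℤ] Γ)) = ⊤ := by
    rw [Subtype.range_coe, hbspan, hspan]
  let B : Module.Basis b ℚ (ℚ ⊗[ℤ] Γ) := Module.Basis.mk hbli (by rw [hbtop])
  have hmk : Cardinal.mk b = n := by rw [B.mk_eq_rank'', hrank]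
  obtain ⟨e⟩ := Cardinal.mk_eq_nat_iff.mp hmk
  have hchoice : ∀ x : b, ∃ g : Γ, (1 : ℚ) ⊗ₜ[ℤ] g = (x : ℚ ⊗[ℤ] Γ) := fun x => hbsub x.2
  choose g hg using hchoice
  refine ⟨fun i => g (e.symm i), ?_⟩
  have : (fun i : Fin n => (1 : ℚ) ⊗ₜ[ℤ] g (e.symm i)) = (fun i : Fin n => ((e.symm i : ℚ ⊗[ℤ] Γ))) := by
    funext i; rw [hg]
  rw [this]
  exact hbli.comp e.symm e.symm.injective

lemma gamma_sep {Γ : Type*} [AddCommGroup Γ] {n : ℕ} {γ : Fin n → Γ}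
    (hli : LinearIndependent ℚ (fun i => (1 : ℚ) ⊗ₜ[ℤ] γ i))
    {i : Fin n} {m : ℤ} (hm : m ≠ 0) {A : Set (Fin n)} (hiA : i ∉ A)
    (h : m • γ i ∈ Submodule.span ℤ (γ '' A)) : False := by
  set f : Fin n → ℚ ⊗[ℤ] Γ := fun j => (1 : ℚ) ⊗ₜ[ℤ] γ j with hf
  set φ : Γ →ₗ[ℤ] ℚ ⊗[ℤ] Γ := TensorProduct.mk ℤ ℚ Γ 1 with hφ
  have h2 : φ (m • γ i) ∈ Submodule.map φ (Submodule.span ℤ (γ '' A)) :=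
    Submodule.mem_map_of_mem h
  rw [Submodule.map_span] at h2
  have himg : φ '' (γ '' A) = f '' A := by rw [Set.image_image]; rfl
  rw [himg] at h2
  have h3 : φ (m • γ i) ∈ (Submodule.span ℚ (f '' A)).restrictScalars ℤ := by
    refine Submodule.span_le.mpr (fun x hx => ?_) h2
    exact Submodule.subset_span hx
  rw [Submodule.restrictScalars_mem] at h3
  rw [map_smul] at h3
  have hφγ : φ (γ i) = f i := rfl
  rw [hφγ] at h3
  have h4 : f i ∈ Submodule.span ℚ (f '' A) := by
    have hmz : ((m : ℚ)) ≠ 0 := Int.cast_ne_zero.mpr hm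
    have : ((m : ℚ))⁻¹ • (m • f i) = f i := by
      rw [← Int.cast_smul_eq_zsmul ℚ, smul_smul, inv_mul_cancel₀ hmz, one_smul]
    rw [← this]
    exact Submodule.smul_mem _ _ h3
  exact hli.notMem_span_image hiA h4
section Residue
open IntermediateField Polynomial
open scoped TensorProduct

variable {k K : Type*} [Field k] [IsAlgClosed k] [Field K] [Algebra k K]
variable {Γ : Type*} [AddCommGroup Γ] [LinearOrder Γ] [IsOrderedAddMonoid Γ]

lemma residue (n : ℕ)
    (htr : ∃ s : Finset K, IsTranscendenceBasis k (fun i : (s : Set K) => (i : K)) ∧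
      s.card = n)
    (v : K → Γ)
    (hmul : ∀ f g : K, f ≠ 0 → g ≠ 0 → v (f * g) = v f + v g)
    (haddv : ∀ f g : K, f ≠ 0 → g ≠ 0 → f + g ≠ 0 → min (v f) (v g) ≤ v (f + g))
    (hk : ∀ a : k, a ≠ 0 → v (algebraMap k K a) = 0)
    (hval : ∀ γ : Γ, ∃ f : K, f ≠ 0 ∧ v f = γ)
    (hrank : Module.rank ℚ (ℚ ⊗[ℤ] Γ) = n) :
    ∀ u : K, u ≠ 0 → v u = 0 →
      ∃ c : k, u - algebraMap k K c = 0 ∨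
        (u - algebraMap k K c ≠ 0 ∧ 0 < v (u - algebraMap k K c)) := by
  intro u hu0 hvu
  by_contra hcon
  push_neg at hcon
  -- extract: ∀ c, u - c ≠ 0 and v (u - c) = 0
  have huc : ∀ c : k, u - algebraMap k K c ≠ 0 ∧ v (u - algebraMap k K c) = 0 := by
    intro c
    obtain ⟨h1, h2⟩ := hcon c
    refine ⟨h1, ?_⟩
    have hge : 0 ≤ v (u - algebraMap k K c) := by
      by_cases hc : c = 0
      · subst hc; simpa using hvu.ge
      · have := haddv u (-(algebraMap k K c)) hu0
          (neg_ne_zero.mpr ((_root_.map_ne_zero _).mpr hc)) (by rwa [← sub_eq_add_neg])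
        rw [← sub_eq_add_neg] at this
        rw [v_neg hmul hk _ ((_root_.map_ne_zero _).mpr hc), hk c hc, hvu] at this
        simpa using this
    exact le_antisymm (h2 h1) hge
  -- polynomials in u have value 0
  have hprodm : ∀ s : Multiset k,
      (s.map (fun a => u - algebraMap k K a)).prod ≠ 0 ∧
      v (s.map (fun a => u - algebraMap k K a)).prod = 0 := by
    intro s
    induction s using Multiset.induction_on with
    | empty => exact ⟨by simp, by simpa using v_one hk⟩
    | cons a s ih =>
      rw [Multiset.map_cons, Multiset.prod_cons]
      obtain ⟨ih1, ih2⟩ := ih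
      obtain ⟨h1, h2⟩ := huc a
      exact ⟨mul_ne_zero h1 ih1, by rw [hmul _ _ h1 ih1, h2, ih2, add_zero]⟩
  have hupoly : ∀ p : Polynomial k, p ≠ 0 → aeval u p ≠ 0 ∧ v (aeval u p) = 0 := by
    intro p hp
    have hsplit : p = C p.leadingCoeff * (p.roots.map fun a => X - C a).prod :=
      (IsAlgClosed.splits p).eq_prod_roots
    have heval : aeval u p =
        algebraMap k K p.leadingCoeff *
          (p.roots.map (fun a => u - algebraMap k K a)).prod := by
      conv_lhs => rw [hsplit]
      rw [map_mul, aeval_C, map_multiset_prod, Multiset.map_map]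
      congr 1
      exact congrArg Multiset.prod (Multiset.map_congr rfl (fun a _ => by simp))
    obtain ⟨h1, h2⟩ := hprodm p.roots
    have hlc : p.leadingCoeff ≠ 0 := leadingCoeff_ne_zero.mpr hp
    have hlcK : algebraMap k K p.leadingCoeff ≠ 0 := (_root_.map_ne_zero _).mpr hlc
    refine ⟨by rw [heval]; exact mul_ne_zero hlcK h1, ?_⟩
    rw [heval, hmul _ _ hlcK h1, hk _ hlc, h2, add_zero]
  -- gamma and x
  obtain ⟨s, hbasis, hscard⟩ := htr
  obtain ⟨γF, hli⟩ := exists_gamma hrank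
  have hxe : ∀ i : Fin n, ∃ f : K, f ≠ 0 ∧ v f = γF i := fun i => hval (γF i)
  choose xF hxF0 hxFv using hxe
  classical
  set x : ℕ → K := fun j => if h : j < n then xF ⟨j, h⟩ else 1 with hxdef
  have hx0 : ∀ j, j < n → x j ≠ 0 := by
    intro j hj; rw [hxdef]; simp only [dif_pos hj]; exact hxF0 _
  have hxv : ∀ j (hj : j < n), v (x j) = γF ⟨j, hj⟩ := by
    intro j hj; rw [hxdef]; simp only [dif_pos hj]; exact hxFv _
  set E : ℕ → IntermediateField k K :=
    fun i => adjoin k (insert u (x '' {j | j < i})) with hEdef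
  set G : ℕ → Submodule ℤ Γ :=
    fun i => Submodule.span ℤ ((fun j => v (x j)) '' {j | j < i}) with hGdef
  have himg0 : x '' {j | j < 0} = ∅ := by
    apply Set.eq_empty_iff_forall_notMem.mpr; rintro w ⟨j, hj, -⟩; exact Nat.not_lt_zero j hj
  have hGmono : ∀ i, G i ≤ G (i + 1) := by
    intro i
    apply Submodule.span_mono
    apply Set.image_mono
    intro j hj; exact Nat.lt_succ_of_lt hj
  have hsetsucc : ∀ i : ℕ, insert u (x '' {j | j < i}) ∪ {x i} = insert u (x '' {j | j < i + 1}) := by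
    intro i
    rw [Set.union_singleton, Set.insert_comm]
    congr 1
    have : {j : ℕ | j < i + 1} = insert i {j : ℕ | j < i} := by
      ext j; simp [Nat.lt_succ_iff_lt_or_eq, or_comm, le_iff_eq_or_lt]
    rw [this, Set.image_insert_eq]
  have hEsucc : ∀ i : ℕ, E (i + 1) = (adjoin ↥(E i) {x i}).restrictScalars k := by
    intro i
    simp only [hEdef]
    rw [adjoin_adjoin_left, hsetsucc i]
  -- the claim machinery
  have hclaim : ∀ i (hin : i < n), (∀ c : K, c ∈ E i → c ≠ 0 → v c ∈ G i) →
      ∀ A : Polynomial ↥(E i), A ≠ 0 →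
        aeval (x i) A ≠ 0 ∧ v (aeval (x i) A) ∈ G (i + 1) := by
    intro i hin hVP A hA0
    have hexp : aeval (x i) A = ∑ j ∈ A.support, ((A.coeff j : K)) * (x i) ^ j := by
      conv_lhs => rw [A.as_sum_support]
      rw [map_sum]
      refine Finset.sum_congr rfl fun j _ => ?_
      rw [aeval_monomial]
      rfl
    have hterm0 : ∀ j ∈ A.support, ((A.coeff j : K)) * (x i) ^ j ≠ 0 := by
      intro j hj
      have hc : (A.coeff j : K) ≠ 0 := by
        intro hzz
        have : A.coeff j = 0 := by exact_mod_cast hzz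
        exact Polynomial.mem_support_iff.mp hj this
      exact mul_ne_zero hc (pow_ne_zero _ (hx0 i hin))
    have htermv : ∀ j ∈ A.support,
        v (((A.coeff j : K)) * (x i) ^ j) = v ((A.coeff j : K)) + j • v (x i) := by
      intro j hj
      have hc : (A.coeff j : K) ≠ 0 := by
        intro hzz
        have : A.coeff j = 0 := by exact_mod_cast hzz
        exact Polynomial.mem_support_iff.mp hj this
      rw [hmul _ _ hc (pow_ne_zero _ (hx0 i hin)), v_pow hmul hk _ (hx0 i hin)]
    have hGle : G i ≤ Submodule.span ℤ (γF '' {jf : Fin n | (jf : ℕ) < i}) := by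
      simp only [hGdef]
      apply Submodule.span_le.mpr
      rintro g ⟨j, hj, rfl⟩
      have hjn : j < n := lt_trans hj hin
      refine Submodule.subset_span ⟨⟨j, hjn⟩, hj, ?_⟩
      show γF ⟨j, hjn⟩ = v (x j)
      exact (hxv j hjn).symm
    have hd : ∀ j ∈ A.support, ∀ j' ∈ A.support, j ≠ j' →
        v (((A.coeff j : K)) * (x i) ^ j) ≠ v (((A.coeff j' : K)) * (x i) ^ j') := by
      intro j hj j' hj' hjj' heq
      rw [htermv j hj, htermv j' hj'] at heq
      have hcj : (A.coeff j : K) ≠ 0 := fun hzz =>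
        Polynomial.mem_support_iff.mp hj (by exact_mod_cast hzz)
      have hcj' : (A.coeff j' : K) ≠ 0 := fun hzz =>
        Polynomial.mem_support_iff.mp hj' (by exact_mod_cast hzz)
      have hvj : v ((A.coeff j : K)) ∈ G i := hVP _ (A.coeff j).2 hcj
      have hvj' : v ((A.coeff j' : K)) ∈ G i := hVP _ (A.coeff j').2 hcj'
      have hm : ((j : ℤ) - (j' : ℤ)) • v (x i) =
          v ((A.coeff j' : K)) - v ((A.coeff j : K)) := by
        rw [sub_smul, natCast_zsmul, natCast_zsmul, sub_eq_sub_iff_add_eq_add, add_comm]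
        exact heq
      have hmem : ((j : ℤ) - (j' : ℤ)) • γF ⟨i, hin⟩ ∈
          Submodule.span ℤ (γF '' {jf : Fin n | (jf : ℕ) < i}) := by
        rw [← hxv i hin, hm]
        exact Submodule.sub_mem _ (hGle hvj') (hGle hvj)
      refine gamma_sep hli ?_ ?_ hmem
      · intro hzz
        apply hjj'
        have : (j : ℤ) = (j' : ℤ) := by omega
        exact_mod_cast this
      · simp
    have hne : A.support.Nonempty := Polynomial.nonempty_support_iff.mpr hA0
    obtain ⟨j₀, hj₀, hsum0, hsumv, -⟩ :=
      v_sum hmul haddv hk A.support (fun j => ((A.coeff j : K)) * (x i) ^ j) hterm0 hd hne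
    rw [← hexp] at hsum0 hsumv
    refine ⟨hsum0, ?_⟩
    rw [hsumv, htermv j₀ hj₀]
    have h1 : v ((A.coeff j₀ : K)) ∈ G (i + 1) := by
      have hcj : (A.coeff j₀ : K) ≠ 0 := fun hzz =>
        Polynomial.mem_support_iff.mp hj₀ (by exact_mod_cast hzz)
      exact hGmono i (hVP _ (A.coeff j₀).2 hcj)
    have h2 : j₀ • v (x i) ∈ G (i + 1) := by
      have hbase : v (x i) ∈ G (i + 1) := by
        simp only [hGdef]
        exact Submodule.subset_span ⟨i, Nat.lt_succ_self i, rfl⟩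
      have : j₀ • v (x i) = (j₀ : ℤ) • v (x i) := (natCast_zsmul _ _).symm
      rw [this]
      exact Submodule.smul_mem _ _ hbase
    exact Submodule.add_mem _ h1 h2
  -- VP by induction
  have hVP : ∀ i, i ≤ n → ∀ c : K, c ∈ E i → c ≠ 0 → v c ∈ G i := by
    intro i
    induction i with
    | zero =>
      intro _ c hc hc0
      have hE0 : E 0 = adjoin k {u} := by
        simp only [hEdef]; rw [himg0]; simp
      rw [hE0] at hc
      obtain ⟨r, sP, hres⟩ := (mem_adjoin_simple_iff k c).mp hc
      have hse : aeval u sP ≠ 0 := by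
        intro hzz; rw [hzz, div_zero] at hres; exact hc0 hres
      have hre : aeval u r ≠ 0 := by
        intro hzz; rw [hzz, zero_div] at hres; exact hc0 hres
      have hr0 : r ≠ 0 := fun hzz => hre (by rw [hzz, map_zero])
      have hs0 : sP ≠ 0 := fun hzz => hse (by rw [hzz, map_zero])
      have hv : v c = 0 := by
        rw [hres, div_eq_mul_inv, hmul _ _ hre (inv_ne_zero hse),
          v_inv hmul hk _ hse, (hupoly r hr0).2, (hupoly sP hs0).2]
        simp
      rw [hv]; exact Submodule.zero_mem _
    | succ i ih =>
      intro hin c hc hc0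
      have hi : i ≤ n := Nat.le_of_succ_le hin
      have hinn : i < n := Nat.lt_of_succ_le hin
      rw [hEsucc i] at hc
      rw [IntermediateField.mem_restrictScalars] at hc
      obtain ⟨A, B, hres⟩ := (mem_adjoin_simple_iff ↥(E i) c).mp hc
      have hBe : aeval (x i) B ≠ 0 := by
        intro hzz; rw [hzz, div_zero] at hres; exact hc0 hres
      have hAe : aeval (x i) A ≠ 0 := by
        intro hzz; rw [hzz, zero_div] at hres; exact hc0 hres
      have hA0 : A ≠ 0 := fun hzz => hAe (by rw [hzz, map_zero])
      have hB0 : B ≠ 0 := fun hzz => hBe (by rw [hzz, map_zero])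
      obtain ⟨-, hAv⟩ := hclaim i hinn (ih hi) A hA0
      obtain ⟨-, hBv⟩ := hclaim i hinn (ih hi) B hB0
      have hv : v c = v (aeval (x i) A) - v (aeval (x i) B) := by
        rw [hres, div_eq_mul_inv, hmul _ _ hAe (inv_ne_zero hBe),
          v_inv hmul hk _ hBe, sub_eq_add_neg]
      rw [hv]
      exact Submodule.sub_mem _ hAv hBv
  -- transcendence chain
  have hTx : ∀ i, i < n → Transcendental ↥(E i) (x i) := by
    rintro i hin ⟨A, hA0, hAev⟩
    exact (hclaim i hin (hVP i (le_of_lt hin)) A hA0).1 hAev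
  have hz0 : Transcendental ↥(adjoin k (∅ : Set K)) u :=
    transcendental_adjoin_empty (fun p hp => (hupoly p hp).1)
  set z : ℕ → K := fun i => if i = 0 then u else x (i - 1) with hzdef
  have halg : ∀ w : K, IsAlgebraic ↥(adjoin k ((∅ : Set K) ∪ ↑s)) w := by
    intro w
    have h1 := hbasis.isAlgebraic
    have h2 : IsAlgebraic ↥(Algebra.adjoin k (Set.range (fun i : (s : Set K) => (i : K)))) w :=
      h1.isAlgebraic w
    rw [Subtype.range_coe] at h2
    have h3 := IsAlgebraic.tower_top_of_subalgebra_le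
      (IntermediateField.algebra_adjoin_le_adjoin k ((s : Set K))) h2
    refine algOn_mono ?_ h3
    rw [Set.empty_union]
  have hz : ∀ i ≤ n, Transcendental ↥(adjoin k ((∅ : Set K) ∪ z '' {j | j < i})) (z i) := by
    intro i hi
    rcases i with _ | i'
    · have h0 : z '' {j | j < 0} = ∅ := by
        apply Set.eq_empty_iff_forall_notMem.mpr; rintro w ⟨j, hj, -⟩
        exact Nat.not_lt_zero j hj
      rw [h0, Set.empty_union]
      have hzz : z 0 = u := by simp [hzdef]
      rw [hzz]
      exact hz0
    · have hset : (∅ : Set K) ∪ z '' {j | j < i' + 1} = insert u (x '' {j | j < i'}) := by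
        rw [Set.empty_union]
        ext w
        simp only [Set.mem_image, Set.mem_setOf_eq, Set.mem_insert_iff]
        constructor
        · rintro ⟨j, hj, rfl⟩
          rcases j with _ | j''
          · left; simp [hzdef]
          · right
            refine ⟨j'', Nat.lt_of_succ_lt_succ hj, ?_⟩
            rw [hzdef]; simp
        · rintro (rfl | ⟨j, hj, rfl⟩)
          · exact ⟨0, Nat.succ_pos i', by simp [hzdef]⟩
          · refine ⟨j + 1, Nat.succ_lt_succ hj, ?_⟩
            rw [hzdef]; simp
      rw [hset]
      have hzz : z (i' + 1) = x i' := by simp [hzdef]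
      rw [hzz]
      exact hTx i' (Nat.lt_of_succ_le hi)
  exact ind_exchange n s (le_of_eq hscard) ∅ z halg hz

end Residue

theorem stmt11 {k K : Type*} [Field k] [IsAlgClosed k] [Field K] [Algebra k K]
    (n : ℕ)
    (htr : ∃ s : Finset K, IsTranscendenceBasis k (fun i : (s : Set K) => (i : K)) ∧
      s.card = n)
    {Γ : Type*} [AddCommGroup Γ] [LinearOrder Γ] [IsOrderedAddMonoid Γ] (v : K → Γ)
    (hmul : ∀ f g : K, f ≠ 0 → g ≠ 0 → v (f * g) = v f + v g)
    (haddv : ∀ f g : K, f ≠ 0 → g ≠ 0 → f + g ≠ 0 → min (v f) (v g) ≤ v (f + g))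
    (hk : ∀ a : k, a ≠ 0 → v (algebraMap k K a) = 0)
    (hval : ∀ γ : Γ, ∃ f : K, f ≠ 0 ∧ v f = γ)
    (hrank : Module.rank ℚ (ℚ ⊗[ℤ] Γ) = n) :
    ∀ W : Submodule k K, FiniteDimensional k ↥W →
      Module.finrank k ↥W = Nat.card {γ : Γ | ∃ s : K, s ∈ W ∧ s ≠ 0 ∧ v s = γ} := by
  intro W hW
  classical
  have hres := residue n htr v hmul haddv hk hval hrank
  set S : Set Γ := {γ : Γ | ∃ s : K, s ∈ W ∧ s ≠ 0 ∧ v s = γ} with hSdef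
  have hrepex : ∀ γ : S, ∃ w : K, w ∈ W ∧ w ≠ 0 ∧ v w = (γ : Γ) := fun γ => γ.2
  choose rep hrepW hrep0 hrepv using hrepex
  have hLI : LinearIndependent k (fun γ : S => (⟨rep γ, hrepW γ⟩ : ↥W)) := by
    rw [linearIndependent_iff']
    intro t g hsum γ₀ hγ₀
    by_contra hg
    have hKsum : ∑ γ ∈ t, g γ • rep γ = 0 := by
      have h1 := congrArg (fun z : ↥W => (z : K)) hsum
      simpa using h1
    set t' := t.filter (fun γ => g γ ≠ 0) with ht'
    have hsum0 : ∑ γ ∈ t', g γ • rep γ = 0 := by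
      rw [ht', Finset.sum_filter_of_ne, hKsum]
      intro γ _ hne hgz
      exact hne (by rw [hgz, zero_smul])
    have h0 : ∀ γ ∈ t', g γ • rep γ ≠ 0 := by
      intro γ hγ
      exact smul_ne_zero (Finset.mem_filter.mp hγ).2 (hrep0 γ)
    have hvval : ∀ γ ∈ t', v (g γ • rep γ) = (γ : Γ) := by
      intro γ hγ
      rw [Algebra.smul_def, hmul _ _ ((_root_.map_ne_zero _).mpr (Finset.mem_filter.mp hγ).2)
        (hrep0 γ), hk _ (Finset.mem_filter.mp hγ).2, hrepv, zero_add]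
    have hd : ∀ γ ∈ t', ∀ γ' ∈ t', γ ≠ γ' →
        v (g γ • rep γ) ≠ v (g γ' • rep γ') := by
      intro γ hγ γ' hγ' hne
      rw [hvval γ hγ, hvval γ' hγ']
      exact fun h => hne (Subtype.coe_injective h)
    have hne : t'.Nonempty := ⟨γ₀, Finset.mem_filter.mpr ⟨hγ₀, hg⟩⟩
    obtain ⟨-, -, hs0, -, -⟩ := v_sum hmul haddv hk t' _ h0 hd hne
    exact hs0 hsum0
  have hcard1 : Cardinal.mk S ≤ Module.finrank k ↥W := hLI.cardinalMk_le_finrank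
  have hfinS : Finite ↥S := by
    rw [← Cardinal.lt_aleph0_iff_finite]
    exact lt_of_le_of_lt hcard1 (Cardinal.nat_lt_aleph0 _)
  haveI := Fintype.ofFinite ↥S
  have hle1 : Nat.card ↥S ≤ Module.finrank k ↥W := by
    rw [Nat.card_eq_fintype_card]
    exact hLI.fintype_card_le_finrank
  -- spanning direction
  set V : Submodule k K := Submodule.span k (Set.range rep) with hV
  have hmemV : ∀ γ : S, rep γ ∈ V := fun γ => Submodule.subset_span ⟨γ, rfl⟩
  have hSfin : S.Finite := Set.toFinite S
  have key : ∀ d : ℕ, ∀ w : K, w ∈ W → w ≠ 0 →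
      ((hSfin.toFinset.filter (fun γ => v w ≤ γ)).card ≤ d) → w ∈ V := by
    intro d
    induction d with
    | zero =>
      intro w hw hw0 hcard
      exfalso
      have hvwS : v w ∈ S := ⟨w, hw, hw0, rfl⟩
      have hmemf : v w ∈ hSfin.toFinset.filter (fun γ => v w ≤ γ) :=
        Finset.mem_filter.mpr ⟨hSfin.mem_toFinset.mpr hvwS, le_rfl⟩
      have := Finset.card_pos.mpr ⟨v w, hmemf⟩
      omega
    | succ d ih =>
      intro w hw hw0 hcard
      have hvwS : v w ∈ S := ⟨w, hw, hw0, rfl⟩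
      set γw : ↥S := ⟨v w, hvwS⟩ with hγw
      have hrne : rep γw ≠ 0 := hrep0 γw
      have hrv : v (rep γw) = v w := hrepv γw
      set u : K := w * (rep γw)⁻¹ with hu
      have hu0 : u ≠ 0 := mul_ne_zero hw0 (inv_ne_zero hrne)
      have hvu : v u = 0 := by
        rw [hu, hmul _ _ hw0 (inv_ne_zero hrne), v_inv hmul hk _ hrne, hrv, add_neg_cancel]
      obtain ⟨c, hc⟩ := hres u hu0 hvu
      have hfact : (u - algebraMap k K c) * rep γw = w - algebraMap k K c * rep γw := by
        rw [hu, sub_mul, inv_mul_cancel_right₀ hrne]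
      rcases hc with hczero | ⟨hcne, hcpos⟩
      · have hwc : w = algebraMap k K c * rep γw := by
          have h2 := hfact
          rw [hczero, zero_mul] at h2
          exact (sub_eq_zero.mp h2.symm)
        rw [hwc, ← Algebra.smul_def]
        exact V.smul_mem _ (hmemV γw)
      · set w' := w - algebraMap k K c * rep γw with hw'
        have hw'0 : w' ≠ 0 := by
          rw [← hfact]
          exact mul_ne_zero hcne hrne
        have hvpos : v w < v w' := by
          rw [← hfact, hmul _ _ hcne hrne, hrv]
          calc v w = 0 + v w := by rw [zero_add]
            _ < v (u - algebraMap k K c) + v w := by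
                exact add_lt_add_left hcpos _
        have hw'W : w' ∈ W := by
          show w - algebraMap k K c * rep γw ∈ W
          refine W.sub_mem hw ?_
          rw [← Algebra.smul_def]
          exact W.smul_mem _ (hrepW γw)
        have hmemf : v w ∈ hSfin.toFinset.filter (fun γ => v w ≤ γ) :=
          Finset.mem_filter.mpr ⟨hSfin.mem_toFinset.mpr hvwS, le_rfl⟩
        have hsub : hSfin.toFinset.filter (fun γ => v w' ≤ γ) ⊆
            (hSfin.toFinset.filter (fun γ => v w ≤ γ)).erase (v w) := by
          intro γ hγ
          obtain ⟨hm, hle⟩ := Finset.mem_filter.mp hγ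
          refine Finset.mem_erase.mpr ⟨?_, Finset.mem_filter.mpr ⟨hm, ?_⟩⟩
          · intro hzz
            rw [hzz] at hle
            exact absurd (lt_of_lt_of_le hvpos hle) (lt_irrefl _)
          · exact le_of_lt (lt_of_lt_of_le hvpos hle)
        have hcard' : (hSfin.toFinset.filter (fun γ => v w' ≤ γ)).card ≤ d := by
          have h1 := Finset.card_le_card hsub
          have h2 := Finset.card_erase_of_mem hmemf
          omega
        have hw'V := ih w' hw'W hw'0 hcard'
        have hwsplit : w = w' + algebraMap k K c * rep γw := by rw [hw']; ring
        rw [hwsplit]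
        refine V.add_mem hw'V ?_
        rw [← Algebra.smul_def]
        exact V.smul_mem _ (hmemV γw)
  have hWleV : W ≤ V := by
    intro w hw
    by_cases hw0 : w = 0
    · rw [hw0]; exact V.zero_mem
    · exact key _ w hw hw0 le_rfl
  haveI hVfin : FiniteDimensional k ↥V := FiniteDimensional.span_of_finite k (Set.finite_range rep)
  have h2 : Module.finrank k ↥W ≤ Module.finrank k ↥V := Submodule.finrank_mono hWleV
  haveI : Fintype ↥(Set.range rep) := Fintype.ofFinite _
  have h3 : Module.finrank k ↥V ≤ Nat.card ↥S := by
    have h4 := finrank_span_le_card (R := k) (Set.range rep)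
    have hc : (Set.range rep).toFinset.card ≤ Fintype.card ↥S := by
      rw [Set.toFinset_range]
      exact Finset.card_image_le.trans (by simp)
    rw [Nat.card_eq_fintype_card]
    rw [hV]
    exact h4.trans hc
  exact le_antisymm (le_trans h2 h3) hle1
end

section
/- Let K be a field, n ≥ 1, and v : Kˣ → ℤ^n a group homomorphism (v(st) = v(s) + v(t) for all nonzero s, t ∈ K). Suppose given subsets F_t(d) ⊆ K for each d ∈ ℕ and t ∈ ℝ such that F_{t'}(d) ⊆ F_t(d) whenever t ≤ t' (the filtration is decreasing) and s·s' ∈ F_{t+t'}(d+d') whenever s ∈ F_t(d) and s' ∈ F_{t'}(d') (the filtration is multiplicative). Fix B ∈ ℝ and define Σ_{v,F,B} = {(d, x, t) ∈ ℕ × ℤ^n × ℝ : t ≥ B·d and x = v(s) for some nonzero s ∈ F_t(d)} ⊆ ℝ^{n+2}. Then Σ_{v,F,B} is a subsemigroup of (ℝ^{n+2}, +), and it is asymptotically convex: for every element σ of the subgroup of ℝ^{n+2} generated by Σ_{v,F,B} that lies in the interior of the closure of the convex cone generated by Σ_{v,F,B}, there is a positive integer k with kσ ∈ Σ_{v,F,B}.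 -/
open Finset

/-- coordinatewise cast ℚ^κ → ℝ^κ -/
def cv {κ : Type*} (y : κ → ℚ) : κ → ℝ := fun j => (y j : ℝ)

lemma cv_sum_smul {ι κ : Type*} [Fintype ι] (c : ι → ℚ) (y : ι → κ → ℚ) :
    cv (∑ i, c i • y i) = ∑ i, (c i : ℝ) • cv (y i) := by
  funext j
  simp only [cv, Finset.sum_apply, Pi.smul_apply, smul_eq_mul]
  push_cast
  rfl

/-- Casting a ℚ-linearly independent family in `κ → ℚ` gives an ℝ-linearly
independent family in `κ → ℝ`. -/
lemma indep_cast {ι κ : Type*} [Fintype ι] [DecidableEq ι] [Fintype κ]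
    {v : ι → κ → ℚ} (hv : LinearIndependent ℚ v) :
    LinearIndependent ℝ (fun i => cv (v i)) := by
  classical
  set G : Matrix ι ι ℚ := Matrix.of fun i i' => ∑ j, v i j * v i' j with hG
  have hdet : G.det ≠ 0 := by
    intro h0
    obtain ⟨g, hg0, hgv⟩ := Matrix.exists_mulVec_eq_zero_iff.2 h0
    have key : ∀ j, (∑ i, g i * v i j) ^ 2 = ∑ i, ∑ i', g i * g i' * (v i j * v i' j) := by
      intro j
      rw [sq, Finset.sum_mul_sum]
      exact sum_congr rfl fun i _ => sum_congr rfl fun i' _ => by ring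
    have hsq : ∑ j, (∑ i, g i * v i j) ^ 2 = 0 := by
      calc ∑ j, (∑ i, g i * v i j) ^ 2
          = ∑ j, ∑ i, ∑ i', g i * g i' * (v i j * v i' j) :=
            sum_congr rfl fun j _ => key j
        _ = ∑ i, ∑ j, ∑ i', g i * g i' * (v i j * v i' j) := Finset.sum_comm
        _ = ∑ i, ∑ i', ∑ j, g i * g i' * (v i j * v i' j) :=
            sum_congr rfl fun i _ => Finset.sum_comm
        _ = ∑ i, g i * ((G.mulVec g) i) := by
            apply sum_congr rfl; intro i _
            simp only [Matrix.mulVec, dotProduct, hG, Matrix.of_apply, Finset.mul_sum]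
            apply sum_congr rfl; intro i' _
            rw [Finset.sum_mul, Finset.mul_sum]
            exact sum_congr rfl fun j _ => by ring
        _ = 0 := by rw [hgv]; simp
    have hrel : ∀ j, ∑ i, g i * v i j = 0 := by
      intro j
      have h := (Finset.sum_eq_zero_iff_of_nonneg (fun j _ => sq_nonneg _)).1 hsq j (mem_univ j)
      exact pow_eq_zero_iff two_ne_zero |>.1 h
    have hz := Fintype.linearIndependent_iff.1 hv g ?_
    · exact hg0 (funext fun i => hz i)
    · funext j
      simp only [Finset.sum_apply, Pi.smul_apply, smul_eq_mul, Pi.zero_apply]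
      exact hrel j
  rw [Fintype.linearIndependent_iff]
  intro g hg
  have hrelR : ∀ j, ∑ i, g i * (v i j : ℝ) = 0 := by
    intro j
    have := congrFun hg j
    simpa [cv, Finset.sum_apply] using this
  have hmv : (G.map (Rat.cast : ℚ → ℝ)).mulVec g = 0 := by
    funext i0
    simp only [Matrix.mulVec, dotProduct, Matrix.map_apply, hG, Matrix.of_apply,
      Pi.zero_apply]
    push_cast
    calc ∑ i, (∑ j, (v i0 j : ℝ) * (v i j : ℝ)) * g i
        = ∑ i, ∑ j, (v i0 j : ℝ) * (g i * (v i j : ℝ)) :=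
          sum_congr rfl fun i _ => by rw [Finset.sum_mul]; exact sum_congr rfl fun j _ => by ring
      _ = ∑ j, (v i0 j : ℝ) * (∑ i, g i * (v i j : ℝ)) := by
          rw [Finset.sum_comm]
          exact sum_congr rfl fun j _ => by rw [Finset.mul_sum]
      _ = 0 := by simp [hrelR]
  have hdetR : (G.map (Rat.cast : ℚ → ℝ)).det ≠ 0 := by
    have : (G.map (Rat.cast : ℚ → ℝ)).det = ((G.det : ℚ) : ℝ) := by
      rw [show (G.map (Rat.cast : ℚ → ℝ)) = (Rat.castHom ℝ).mapMatrix G from rfl,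
        ← RingHom.map_det (Rat.castHom ℝ) G]; rfl
    rw [this]
    simpa using hdet
  intro i
  by_contra hne
  have : g ≠ 0 := fun h => hne (by rw [h]; rfl)
  exact hdetR (Matrix.exists_mulVec_eq_zero_iff.1 ⟨g, this, hmv⟩)

/-- Rational points are dense in the real solution set of a rational linear system. -/
lemma rat_dense {ι κ : Type*} [Fintype ι] [DecidableEq ι] [Fintype κ] [DecidableEq κ]
    (w : ι → κ → ℚ) (w₀ : κ → ℚ) (x : ι → ℝ)
    (hx : ∀ j, ∑ i, x i * (w i j : ℝ) = (w₀ j : ℝ))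
    (δ : ℝ) (hδ : 0 < δ) :
    ∃ q : ι → ℚ, (∀ j, ∑ i, q i * w i j = w₀ j) ∧ ∀ i, |(q i : ℝ) - x i| < δ := by
  classical
  set M : Matrix κ ι ℚ := Matrix.of fun j i => w i j with hM
  set f : (ι → ℚ) →ₗ[ℚ] (κ → ℚ) := M.mulVecLin with hfdef
  have hf : ∀ (c : ι → ℚ) (j : κ), f c j = ∑ i, c i * w i j := by
    intro c j
    simp only [hfdef, Matrix.mulVecLin_apply, Matrix.mulVec, dotProduct, hM,
      Matrix.of_apply]
    exact sum_congr rfl fun i _ => mul_comm _ _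
  set K := LinearMap.ker f with hK
  obtain ⟨W, hKW⟩ := Submodule.exists_isCompl K
  set bK := Module.finBasis ℚ K with hbK
  set bW := Module.finBasis ℚ W with hbW
  set dK := Module.finrank ℚ K
  set dW := Module.finrank ℚ W
  set kk : Fin dK → (ι → ℚ) := fun i => (bK i : ι → ℚ) with hkk
  set uu : Fin dW → (ι → ℚ) := fun j => (bW j : ι → ℚ) with huu
  set fu : Fin dW → (κ → ℚ) := fun j => f (uu j) with hfu
  have hfk : ∀ i, f (kk i) = 0 := fun i => (bK i).2
  -- fu is ℚ-linearly independent
  have hfu_indep : LinearIndependent ℚ fu := by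
    rw [Fintype.linearIndependent_iff]
    intro a ha
    have hu' : (∑ j, a j • uu j) ∈ K := by
      rw [hK, LinearMap.mem_ker, map_sum]
      simpa only [map_smul] using ha
    have hu'W : (∑ j, a j • uu j) ∈ W := W.sum_mem fun j _ => W.smul_mem _ (bW j).2
    have hu0 : (∑ j, a j • uu j) = 0 := by
      have := hKW.inf_eq_bot
      have hmem : (∑ j, a j • uu j) ∈ K ⊓ W := ⟨hu', hu'W⟩
      rw [this] at hmem
      simpa using hmem
    have : (∑ j, a j • bW j) = (0 : W) := by
      apply Subtype.ext
      push_cast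
      simpa [huu] using hu0
    exact Fintype.linearIndependent_iff.1 bW.linearIndependent a this
  set kkR : Fin dK → (ι → ℝ) := fun i => cv (kk i) with hkkR
  set uuR : Fin dW → (ι → ℝ) := fun j => cv (uu j) with huuR
  set fuR : Fin dW → (κ → ℝ) := fun j => cv (fu j) with hfuR'
  have hfuR : LinearIndependent ℝ fuR := indep_cast hfu_indep
  -- any rational combination result: cv of a ℚ-span member of K lies in ℝ-span of kkR (etc.)
  have hcvK : ∀ y ∈ K, cv y ∈ Submodule.span ℝ (Set.range kkR) := by
    intro y hy
    have := bK.sum_repr ⟨y, hy⟩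
    have hyeq : y = ∑ i, (bK.repr ⟨y, hy⟩ i) • kk i := by
      have hco := congrArg (K.subtype) this
      simp only [map_sum, map_smul] at hco
      exact hco.symm
    rw [hyeq, cv_sum_smul]
    exact Submodule.sum_mem _ fun i _ =>
      Submodule.smul_mem _ _ (Submodule.subset_span ⟨i, rfl⟩)
  have hcvW : ∀ y ∈ W, cv y ∈ Submodule.span ℝ (Set.range uuR) := by
    intro y hy
    have := bW.sum_repr ⟨y, hy⟩
    have hyeq : y = ∑ i, (bW.repr ⟨y, hy⟩ i) • uu i := by
      have hco := congrArg (W.subtype) this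
      simp only [map_sum, map_smul] at hco
      exact hco.symm
    rw [hyeq, cv_sum_smul]
    exact Submodule.sum_mem _ fun i _ =>
      Submodule.smul_mem _ _ (Submodule.subset_span ⟨i, rfl⟩)
  -- the combined family spans ℝ^ι
  have hspan : ∀ z : ι → ℝ, z ∈ Submodule.span ℝ (Set.range (Sum.elim kkR uuR)) := by
    have hcv : ∀ y : ι → ℚ, cv y ∈ Submodule.span ℝ (Set.range (Sum.elim kkR uuR)) := by
      intro y
      have hytop : y ∈ K ⊔ W := by rw [hKW.sup_eq_top]; trivial
      obtain ⟨k, hk, w', hw', hkw⟩ := Submodule.mem_sup.1 hytop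
      have : cv y = cv k + cv w' := by
        rw [← hkw]; funext l; simp [cv]
      rw [this]
      refine Submodule.add_mem _ ?_ ?_
      · exact Submodule.span_le.2 (by
          rintro _ ⟨i, rfl⟩
          exact Submodule.subset_span ⟨Sum.inl i, rfl⟩) (hcvK k hk)
      · exact Submodule.span_le.2 (by
          rintro _ ⟨i, rfl⟩
          exact Submodule.subset_span ⟨Sum.inr i, rfl⟩) (hcvW w' hw')
    intro z
    have hz : z = ∑ l, z l • cv (Pi.single l (1 : ℚ)) := by
      funext m
      simp only [Finset.sum_apply, Pi.smul_apply, smul_eq_mul, cv, Pi.single_apply]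
      rw [Finset.sum_eq_single m]
      · simp
      · intro b _ hb
        simp [Ne.symm hb]
      · intro h; exact absurd (mem_univ m) h
    rw [hz]
    exact Submodule.sum_mem _ fun l _ => Submodule.smul_mem _ _ (hcv _)
  obtain ⟨γ, hγ⟩ := (Submodule.mem_span_range_iff_exists_fun ℝ).1 (hspan x)
  -- the real linear map
  set fR : (ι → ℝ) →ₗ[ℝ] (κ → ℝ) := (M.map (Rat.cast : ℚ → ℝ)).mulVecLin with hfRdef
  have hfRapp : ∀ (c : ι → ℝ) (j : κ), fR c j = ∑ i, c i * (w i j : ℝ) := by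
    intro c j
    simp only [hfRdef, Matrix.mulVecLin_apply, Matrix.mulVec, dotProduct,
      Matrix.map_apply, hM, Matrix.of_apply]
    exact sum_congr rfl fun i _ => mul_comm _ _
  have hfRcv : ∀ y : ι → ℚ, fR (cv y) = cv (f y) := by
    intro y
    funext j
    rw [hfRapp]
    simp only [cv, hf]
    push_cast
    rfl
  have hfRx : fR x = cv w₀ := by
    funext j
    rw [hfRapp]
    exact hx j
  -- coefficients on the uu-part match a rational solution
  have hbeta : cv w₀ = ∑ j, γ (Sum.inr j) • fuR j := by
    rw [← hfRx, ← hγ, map_sum]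
    simp only [map_smul]
    rw [Fintype.sum_sum_type]
    have h1 : ∀ i, fR (Sum.elim kkR uuR (Sum.inl i)) = 0 := by
      intro i
      simp only [Sum.elim_inl, hkkR]
      rw [hfRcv, hfk]
      funext j; simp [cv]
    have h2 : ∀ j, fR (Sum.elim kkR uuR (Sum.inr j)) = fuR j := by
      intro j
      simp only [Sum.elim_inr, huuR]
      rw [hfRcv]
    simp only [h1, h2, smul_zero, Finset.sum_const_zero, zero_add]
  -- w₀ is a rational combination of the fu
  have hbQ : w₀ ∈ Submodule.span ℚ (Set.range fu) := by
    by_contra hnot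
    set vopt : Option (Fin dW) → (κ → ℚ) := fun o => o.elim w₀ fu with hvopt
    have hio : LinearIndependent ℚ vopt := by
      rw [linearIndependent_option]
      exact ⟨hfu_indep, hnot⟩
    have hioR := indep_cast hio
    set gbad : Option (Fin dW) → ℝ := fun o => o.elim 1 (fun j => -γ (Sum.inr j)) with hgbad
    have hzero : ∑ o, gbad o • cv (vopt o) = 0 := by
      rw [Fintype.sum_option]
      simp only [hgbad, hvopt, Option.elim, one_smul, neg_smul]
      rw [Finset.sum_neg_distrib]
      rw [show (∑ j, γ (Sum.inr j) • cv (fu j)) = cv w₀ from hbeta.symm]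
      abel
    have := Fintype.linearIndependent_iff.1 hioR gbad hzero none
    simp [hgbad] at this
  obtain ⟨q0, hq0⟩ := (Submodule.mem_span_range_iff_exists_fun ℚ).1 hbQ
  set x₀ : ι → ℚ := ∑ j, q0 j • uu j with hx₀
  have hfx₀ : f x₀ = w₀ := by
    rw [hx₀, map_sum]
    simp only [map_smul]
    exact hq0
  have hcvx₀ : cv x₀ = ∑ j, (q0 j : ℝ) • uuR j := cv_sum_smul _ _
  -- match γ (inr j) with q0 j
  have hmatch : ∀ j, γ (Sum.inr j) = (q0 j : ℝ) := by
    have hrel : ∑ j, (γ (Sum.inr j) - (q0 j : ℝ)) • fuR j = 0 := by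
      simp only [sub_smul]
      rw [Finset.sum_sub_distrib, ← hbeta]
      have : ∑ j, (q0 j : ℝ) • fuR j = cv w₀ := by
        rw [show cv w₀ = cv (∑ j, q0 j • fu j) from by rw [hq0], cv_sum_smul]
      rw [this, sub_self]
    intro j
    have := Fintype.linearIndependent_iff.1 hfuR _ hrel j
    linarith [this]
  -- choose rational approximations of the kk-coefficients
  set C : ℝ := 1 + ∑ i, ∑ l, |(kk i l : ℝ)| with hC
  have hCpos : 0 < C := by
    have : (0:ℝ) ≤ ∑ i, ∑ l, |(kk i l : ℝ)| :=
      Finset.sum_nonneg fun i _ => Finset.sum_nonneg fun l _ => abs_nonneg _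
    linarith
  set ε : ℝ := δ / C with hε
  have hεpos : 0 < ε := div_pos hδ hCpos
  have hα : ∀ i : Fin dK, ∃ a : ℚ, |γ (Sum.inl i) - (a : ℝ)| < ε := fun i =>
    exists_rat_near (γ (Sum.inl i)) hεpos
  choose α hαlt using hα
  refine ⟨x₀ + ∑ i, α i • kk i, ?_, ?_⟩
  · intro j
    have : f (x₀ + ∑ i, α i • kk i) = w₀ := by
      rw [map_add, hfx₀, map_sum]
      simp only [map_smul, hfk, smul_zero, Finset.sum_const_zero, add_zero]
    rw [← hf, this]
  · intro l
    have hcvq : cv (x₀ + ∑ i, α i • kk i) = cv x₀ + ∑ i, (α i : ℝ) • kkR i := by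
      funext m
      simp only [cv, Pi.add_apply, Finset.sum_apply, Pi.smul_apply, smul_eq_mul, hkkR]
      push_cast
      rfl
    have hxrep : x = ∑ i, γ (Sum.inl i) • kkR i + cv x₀ := by
      rw [← hγ, Fintype.sum_sum_type]
      simp only [Sum.elim_inl, Sum.elim_inr]
      rw [hcvx₀]
      congr 1
      exact sum_congr rfl fun j _ => by rw [hmatch j]
    have hdiffeq : cv (x₀ + ∑ i, α i • kk i) - x
        = ∑ i, ((α i : ℝ) - γ (Sum.inl i)) • kkR i := by
      rw [hcvq, hxrep]
      simp only [sub_smul]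
      rw [Finset.sum_sub_distrib]
      abel
    have hl : ((x₀ + ∑ i, α i • kk i) l : ℝ) - x l
        = ∑ i, ((α i : ℝ) - γ (Sum.inl i)) * (kk i l : ℝ) := by
      have h := congrFun hdiffeq l
      simpa [cv, Finset.sum_apply, hkkR] using h
    rw [show ((((x₀ + ∑ i, α i • kk i) l : ℚ) : ℝ)) - x l
        = ((x₀ + ∑ i, α i • kk i) l : ℝ) - x l from rfl, hl]
    calc |∑ i, ((α i : ℝ) - γ (Sum.inl i)) * (kk i l : ℝ)|
        ≤ ∑ i, |((α i : ℝ) - γ (Sum.inl i)) * (kk i l : ℝ)| :=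
          Finset.abs_sum_le_sum_abs _ _
      _ = ∑ i, |(α i : ℝ) - γ (Sum.inl i)| * |(kk i l : ℝ)| :=
          sum_congr rfl fun i _ => abs_mul _ _
      _ ≤ ∑ i, ε * |(kk i l : ℝ)| := by
          refine Finset.sum_le_sum fun i _ => ?_
          refine mul_le_mul_of_nonneg_right ?_ (abs_nonneg _)
          rw [abs_sub_comm]
          exact (hαlt i).le
      _ = ε * ∑ i, |(kk i l : ℝ)| := (Finset.mul_sum _ _ _).symm
      _ ≤ ε * ∑ i, ∑ l', |(kk i l' : ℝ)| := by
          refine mul_le_mul_of_nonneg_left ?_ hεpos.le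
          exact Finset.sum_le_sum fun i _ =>
            Finset.single_le_sum (f := fun l' => |(kk i l' : ℝ)|)
              (fun l' _ => abs_nonneg _) (mem_univ l)
      _ < ε * C := by
          refine (mul_lt_mul_iff_right₀ hεpos).2 ?_
          rw [hC]
          linarith
      _ = δ := by
          rw [hε]
          field_simp

/-- The cone generated by a subset of a real vector space. -/
def coneGen {V : Type*} [AddCommMonoid V] [Module ℝ V] (S : Set V) : Set V :=
  {x | ∃ (m : ℕ) (c : Fin m → ℝ) (y : Fin m → V),
    (∀ i, 0 ≤ c i) ∧ (∀ i, y i ∈ S) ∧ x = ∑ i, c i • y i}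

lemma coneGen_convex {V : Type*} [AddCommGroup V] [Module ℝ V] (S : Set V) :
    Convex ℝ (coneGen S) := by
  rintro x ⟨m, c, y, hc, hy, rfl⟩ x' ⟨m', c', y', hc', hy', rfl⟩ a b ha hb hab
  refine ⟨m + m', Fin.addCases (fun i => a * c i) (fun i => b * c' i),
    Fin.addCases y y', ?_, ?_, ?_⟩
  · intro i
    refine Fin.addCases (fun i => ?_) (fun i => ?_) i <;> simp only [Fin.addCases_left,
      Fin.addCases_right]
    · exact mul_nonneg ha (hc i)
    · exact mul_nonneg hb (hc' i)
  · intro i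
    refine Fin.addCases (fun i => ?_) (fun i => ?_) i <;> simp only [Fin.addCases_left,
      Fin.addCases_right]
    · exact hy i
    · exact hy' i
  · rw [Fin.sum_univ_add]
    simp only [Fin.addCases_left, Fin.addCases_right, Finset.smul_sum, smul_smul]

lemma coneGen_zero_mem {V : Type*} [AddCommMonoid V] [Module ℝ V] (S : Set V) :
    (0 : V) ∈ coneGen S :=
  ⟨0, Fin.elim0, Fin.elim0, fun i => i.elim0, fun i => i.elim0, by simp⟩

/-- The semigroup `Σ_{v,F,B} ⊆ ℝ × ℝ^n × ℝ = ℝ^{n+2}` attached to a multiplicative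
filtration `F` and a homomorphism `v : Kˣ → ℤ^n`. -/
def SigmaF {K : Type*} [Field K] (n : ℕ) (v : Kˣ → (Fin n → ℤ))
    (F : ℕ → ℝ → Set K) (B : ℝ) : Set (ℝ × (Fin n → ℝ) × ℝ) :=
  {p | ∃ (d : ℕ) (t : ℝ) (s : Kˣ), B * (d : ℝ) ≤ t ∧ (s : K) ∈ F d t ∧
    p = ((d : ℝ), fun i => (v s i : ℝ), t)}

theorem stmt12 {K : Type*} [Field K] (n : ℕ) (hn : 1 ≤ n)
    (v : Kˣ → (Fin n → ℤ)) (hv : ∀ s t : Kˣ, v (s * t) = v s + v t)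
    (F : ℕ → ℝ → Set K)
    (hdec : ∀ (d : ℕ) (t t' : ℝ), t ≤ t' → F d t' ⊆ F d t)
    (hmul : ∀ (d d' : ℕ) (t t' : ℝ) (s s' : K),
      s ∈ F d t → s' ∈ F d' t' → s * s' ∈ F (d + d') (t + t'))
    (B : ℝ) :
    (∀ p ∈ SigmaF n v F B, ∀ q ∈ SigmaF n v F B, p + q ∈ SigmaF n v F B) ∧
    ∀ σ ∈ (AddSubgroup.closure (SigmaF n v F B) : Set (ℝ × (Fin n → ℝ) × ℝ)),
      σ ∈ interior (closure (coneGen (SigmaF n v F B))) →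
      ∃ j : ℕ, 0 < j ∧ j • σ ∈ SigmaF n v F B := by
  classical
  set P := ℝ × (Fin n → ℝ) × ℝ
  set S : Set P := SigmaF n v F B with hSdef
  have hadd : ∀ p ∈ S, ∀ q ∈ S, p + q ∈ S := by
    rintro p ⟨d, t, s, hBt, hF, rfl⟩ q ⟨d', t', s', hBt', hF', rfl⟩
    refine ⟨d + d', t + t', s * s', ?_, ?_, ?_⟩
    · push_cast
      have : B * ((d : ℝ) + (d' : ℝ)) = B * (d : ℝ) + B * (d' : ℝ) := by ring
      linarith
    · have := hmul d d' t t' (s : K) (s' : K) hF hF'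
      simpa using this
    · refine Prod.ext ?_ (Prod.ext ?_ ?_)
      · show (d : ℝ) + (d' : ℝ) = ((d + d' : ℕ) : ℝ)
        push_cast; ring
      · funext i
        show ((v s i : ℝ)) + ((v s' i : ℝ)) = ((v (s * s') i : ℝ))
        rw [hv]
        push_cast
        simp
      · rfl
  refine ⟨hadd, ?_⟩
  intro σ hσgrp hσint
  set C : Set P := coneGen S with hCdef
  have hCconv : Convex ℝ C := coneGen_convex S
  -- bounds on C
  have hbound : ∀ p ∈ C, 0 ≤ p.1 ∧ B * p.1 ≤ p.2.2 := by
    rintro p ⟨m, c, y, hc, hy, rfl⟩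
    choose d t s hBt hF hyeq using hy
    have h1 : (∑ i, c i • y i).1 = ∑ i, c i * (d i : ℝ) := by
      rw [Prod.fst_sum]
      exact Finset.sum_congr rfl fun i _ => by rw [hyeq i]; rfl
    have h3 : (∑ i, c i • y i).2.2 = ∑ i, c i * t i := by
      rw [Prod.snd_sum, Prod.snd_sum]
      exact Finset.sum_congr rfl fun i _ => by rw [hyeq i]; rfl
    constructor
    · rw [h1]
      exact Finset.sum_nonneg fun i _ => mul_nonneg (hc i) (Nat.cast_nonneg _)
    · rw [h1, h3, Finset.mul_sum]
      refine Finset.sum_le_sum fun i _ => ?_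
      have := hBt i
      have hci := hc i
      calc B * (c i * (d i : ℝ)) = c i * (B * (d i : ℝ)) := by ring
        _ ≤ c i * t i := mul_le_mul_of_nonneg_left this hci
  have hclosed : IsClosed {p : P | 0 ≤ p.1 ∧ B * p.1 ≤ p.2.2} := by
    refine IsClosed.inter ?_ ?_
    · exact isClosed_le continuous_const continuous_fst
    · exact isClosed_le (continuous_const.mul continuous_fst) (continuous_snd.snd)
  have hboundcl : ∀ p ∈ closure C, 0 ≤ p.1 ∧ B * p.1 ≤ p.2.2 :=
    fun p hp => closure_minimal (fun q hq => hbound q hq) hclosed hp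
  have hσcl : σ ∈ closure C := interior_subset hσint
  have hTB : B * σ.1 ≤ σ.2.2 := (hboundcl σ hσcl).2
  -- integrality of σ
  have hσG : (∃ a : ℤ, σ.1 = (a : ℝ)) ∧ ∀ j, ∃ a : ℤ, σ.2.1 j = (a : ℝ) := by
    set Gint : AddSubgroup P :=
      { carrier := {p | (∃ a : ℤ, p.1 = (a : ℝ)) ∧ ∀ j, ∃ a : ℤ, p.2.1 j = (a : ℝ)}
        add_mem' := by
          rintro p q ⟨⟨a, ha⟩, hp2⟩ ⟨⟨b, hb⟩, hq2⟩
          refine ⟨⟨a + b, ?_⟩, fun j => ?_⟩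
          · show p.1 + q.1 = ((a + b : ℤ) : ℝ)
            rw [ha, hb]; push_cast; ring
          · obtain ⟨a', ha'⟩ := hp2 j
            obtain ⟨b', hb'⟩ := hq2 j
            exact ⟨a' + b', by show p.2.1 j + q.2.1 j = _; rw [ha', hb']; push_cast; ring⟩
        zero_mem' := ⟨⟨0, by simp⟩, fun j => ⟨0, by simp⟩⟩
        neg_mem' := by
          rintro p ⟨⟨a, ha⟩, hp2⟩
          refine ⟨⟨-a, ?_⟩, fun j => ?_⟩
          · show -p.1 = ((-a : ℤ) : ℝ)
            rw [ha]; push_cast; ring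
          · obtain ⟨a', ha'⟩ := hp2 j
            exact ⟨-a', by show -(p.2.1 j) = _; rw [ha']; push_cast; ring⟩ }
    have hSG : S ⊆ (Gint : Set P) := by
      rintro p ⟨d, t, s, _, _, rfl⟩
      exact ⟨⟨(d : ℤ), by push_cast; rfl⟩, fun j => ⟨v s j, rfl⟩⟩
    exact (AddSubgroup.closure_le Gint).2 hSG hσgrp
  obtain ⟨⟨Dz, hDz⟩, hX⟩ := hσG
  choose Xz hXz using hX
  -- σ.1 > 0
  have hDpos : 0 < σ.1 := by
    obtain ⟨r0, hr0, hball0⟩ := Metric.mem_nhds_iff.1 (mem_interior_iff_mem_nhds.1 hσint)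
    have hmem : ((σ.1 - r0 / 2, σ.2) : P) ∈ closure C := by
      apply hball0
      rw [Metric.mem_ball, Prod.dist_eq]
      simp only [Real.dist_eq, dist_self]
      rw [show σ.1 - r0 / 2 - σ.1 = -(r0 / 2) by ring, abs_neg, abs_of_pos (by linarith)]
      exact max_lt (by linarith) hr0
    have := (hboundcl _ hmem).1
    simp only at this
    linarith
  -- interior of C is nonempty
  have hconvCl : Convex ℝ (closure C) := hCconv.closure
  have haff1 : affineSpan ℝ (closure C) = ⊤ :=
    (hconvCl.interior_nonempty_iff_affineSpan_eq_top).1 ⟨σ, hσint⟩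
  have haff2 : affineSpan ℝ C = ⊤ := by
    have hsub : closure C ⊆ (affineSpan ℝ C : Set P) :=
      closure_minimal (subset_affineSpan ℝ C) ((affineSpan ℝ C).closed_of_finiteDimensional)
    have hle : affineSpan ℝ (closure C) ≤ affineSpan ℝ C := affineSpan_le.2 hsub
    rw [haff1] at hle
    exact top_unique hle
  obtain ⟨y₀, hy₀⟩ : (interior C).Nonempty :=
    (hCconv.interior_nonempty_iff_affineSpan_eq_top).2 haff2
  -- σ is in the interior of C itself
  have hσintC : σ ∈ interior C := by
    obtain ⟨r, hr, hball⟩ := Metric.mem_nhds_iff.1 (mem_interior_iff_mem_nhds.1 hσint)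
    set a : ℝ := min (1/2 : ℝ) (r / (2 * (‖σ - y₀‖ + 1))) with ha
    have hnorm1 : (0:ℝ) < ‖σ - y₀‖ + 1 := by positivity
    have hapos : 0 < a := lt_min (by norm_num) (div_pos hr (by positivity))
    have ha12 : a ≤ 1/2 := min_le_left _ _
    have ha1 : a < 1 := lt_of_le_of_lt ha12 (by norm_num)
    have h1a : (0:ℝ) < 1 - a := by linarith
    set z : P := (1 - a)⁻¹ • (σ - a • y₀) with hz
    have e1 : σ - a • y₀ - (1 - a) • σ = a • (σ - y₀) := by
      rw [sub_smul, one_smul, smul_sub]; abel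
    have hzsub : z - σ = ((1 - a)⁻¹ * a) • (σ - y₀) := by
      calc z - σ = (1 - a)⁻¹ • (σ - a • y₀) - (1 - a)⁻¹ • ((1 - a) • σ) := by
            rw [smul_smul, inv_mul_cancel₀ (ne_of_gt h1a), one_smul]
        _ = (1 - a)⁻¹ • (σ - a • y₀ - (1 - a) • σ) := (smul_sub _ _ _).symm
        _ = (1 - a)⁻¹ • (a • (σ - y₀)) := by rw [e1]
        _ = ((1 - a)⁻¹ * a) • (σ - y₀) := smul_smul _ _ _
    have hzcl : z ∈ closure C := by
      apply hball
      rw [Metric.mem_ball, dist_eq_norm, hzsub, norm_smul]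
      rw [Real.norm_eq_abs, abs_of_pos (mul_pos (inv_pos.2 h1a) hapos)]
      have h2a : (1 - a)⁻¹ ≤ 2 := by
        rw [inv_le_comm₀ h1a (by norm_num)]
        linarith
      have har : a ≤ r / (2 * (‖σ - y₀‖ + 1)) := min_le_right _ _
      calc (1 - a)⁻¹ * a * ‖σ - y₀‖ ≤ 2 * (r / (2 * (‖σ - y₀‖ + 1))) * ‖σ - y₀‖ := by
            refine mul_le_mul_of_nonneg_right ?_ (norm_nonneg _)
            refine mul_le_mul h2a har hapos.le (by norm_num)
        _ = r * (‖σ - y₀‖ / (‖σ - y₀‖ + 1)) := by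
            field_simp
        _ < r * 1 := by
            refine (mul_lt_mul_iff_right₀ hr).2 ?_
            rw [div_lt_one hnorm1]
            linarith
        _ = r := mul_one r
    have hcombo : a • y₀ + (1 - a) • z = σ := by
      rw [hz, smul_smul, mul_inv_cancel₀ (ne_of_gt h1a), one_smul]
      abel
    have := hCconv.combo_interior_closure_mem_interior hy₀ hzcl hapos (le_of_lt h1a)
      (by ring)
    rwa [hcombo] at this
  -- a slightly raised point lies in C
  obtain ⟨r', hr', hball'⟩ := Metric.mem_nhds_iff.1 (mem_interior_iff_mem_nhds.1 hσintC)
  set ε : ℝ := r' / 2 with hε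
  have hεpos : 0 < ε := by positivity
  have hσε : ((σ.1, σ.2.1, σ.2.2 + ε) : P) ∈ C := by
    apply hball'
    rw [Metric.mem_ball, Prod.dist_eq, Prod.dist_eq]
    simp only [dist_self, Real.dist_eq]
    rw [show σ.2.2 + ε - σ.2.2 = ε by ring, abs_of_pos hεpos]
    have : (0:ℝ) ⊔ ((0:ℝ) ⊔ ε) = ε := by
      rw [max_eq_right hεpos.le, max_eq_right hεpos.le]
    rw [this]
    rw [hε]; linarith
  -- representation of the raised point
  obtain ⟨m, c, y, hcnn, hyS, hrep⟩ := hσε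
  choose d t s hBt hFm hyeq using fun i => hyS i
  have h1 : σ.1 = ∑ i, c i * (d i : ℝ) := by
    have h := congrArg Prod.fst hrep
    rw [Prod.fst_sum] at h
    refine h.trans (Finset.sum_congr rfl fun i _ => ?_)
    rw [hyeq i]; rfl
  have h2 : ∀ jj, σ.2.1 jj = ∑ i, c i * ((v (s i) jj : ℤ) : ℝ) := by
    intro jj
    have h := congrArg (fun p : P => p.2.1 jj) hrep
    simp only at h
    rw [Prod.snd_sum, Prod.fst_sum, Finset.sum_apply] at h
    refine h.trans (Finset.sum_congr rfl fun i _ => ?_)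
    rw [hyeq i]; rfl
  have h3 : σ.2.2 + ε = ∑ i, c i * t i := by
    have h := congrArg (fun p : P => p.2.2) hrep
    simp only at h
    rw [Prod.snd_sum, Prod.snd_sum] at h
    refine h.trans (Finset.sum_congr rfl fun i _ => ?_)
    rw [hyeq i]; rfl
  -- restrict to positive coefficients
  set J : Finset (Fin m) := Finset.univ.filter (fun i => 0 < c i) with hJ
  have hJuniv : ∀ g : Fin m → ℝ, ∑ i ∈ J, c i * g i = ∑ i, c i * g i := by
    intro g
    refine Finset.sum_subset (Finset.subset_univ J) ?_
    intro i _ hiJ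
    have hci : c i = 0 := by
      refine le_antisymm ?_ (hcnn i)
      by_contra hlt
      exact hiJ (Finset.mem_filter.2 ⟨Finset.mem_univ i, lt_of_not_ge hlt⟩)
    rw [hci, zero_mul]
  have hJne : J.Nonempty := by
    by_contra hno
    rw [Finset.not_nonempty_iff_eq_empty] at hno
    have : σ.1 = 0 := by
      rw [h1, ← hJuniv (fun i => (d i : ℝ)), hno, Finset.sum_empty]
    linarith
  haveI hJtype : Nonempty ↥J := ⟨⟨hJne.choose, hJne.choose_spec⟩⟩
  -- set up the rational system
  set w : ↥J → Option (Fin n) → ℚ :=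
    fun i o => Option.elim o ((d i.1 : ℚ)) (fun jj => ((v (s i.1) jj : ℚ))) with hw
  set w₀ : Option (Fin n) → ℚ :=
    fun o => Option.elim o ((Dz : ℚ)) (fun jj => ((Xz jj : ℚ))) with hw₀
  set xx : ↥J → ℝ := fun i => c i.1 with hxx
  have hxsys : ∀ o, ∑ i : ↥J, xx i * ((w i o : ℚ) : ℝ) = ((w₀ o : ℚ) : ℝ) := by
    intro o
    cases o with
    | none =>
      show ∑ i : ↥J, c i.1 * (((d i.1 : ℚ)) : ℝ) = ((Dz : ℚ) : ℝ)
      push_cast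
      rw [Finset.sum_coe_sort J (fun i => c i * (d i : ℝ)), hJuniv, ← h1, hDz]
    | some jj =>
      show ∑ i : ↥J, c i.1 * (((v (s i.1) jj : ℚ)) : ℝ) = ((Xz jj : ℚ) : ℝ)
      push_cast
      rw [Finset.sum_coe_sort J (fun i => c i * ((v (s i) jj : ℤ) : ℝ)), hJuniv, ← h2, hXz]
  -- thresholds
  set δ₁ : ℝ := J.inf' hJne c with hδ₁
  have hδ₁pos : 0 < δ₁ :=
    (Finset.lt_inf'_iff hJne).2 fun i hi => (Finset.mem_filter.1 hi).2
  set Tabs : ℝ := ∑ i : ↥J, |t i.1| with hTabs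
  have hTabsnn : 0 ≤ Tabs := Finset.sum_nonneg fun i _ => abs_nonneg _
  set δ₂ : ℝ := ε / (1 + Tabs) with hδ₂
  have hδ₂pos : 0 < δ₂ := div_pos hεpos (by linarith)
  set δ : ℝ := min δ₁ δ₂ with hδ
  have hδpos : 0 < δ := lt_min hδ₁pos hδ₂pos
  obtain ⟨q, hqeq, hqnear⟩ := rat_dense w w₀ xx hxsys δ hδpos
  have hqpos : ∀ i : ↥J, 0 < q i := by
    intro i
    have h1' := hqnear i
    have h2' : δ ≤ c i.1 := le_trans (min_le_left _ _) (Finset.inf'_le c i.2)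
    have h3' := abs_lt.1 h1'
    have : (0 : ℝ) < (q i : ℝ) := by
      have : xx i = c i.1 := rfl
      linarith [h3'.1]
    exact_mod_cast this
  -- the t-estimate
  have hct : ∑ i : ↥J, xx i * t i.1 = σ.2.2 + ε := by
    rw [Finset.sum_coe_sort J (fun i => c i * t i), hJuniv, ← h3]
  have hqt : σ.2.2 < ∑ i : ↥J, (q i : ℝ) * t i.1 := by
    have hdiffb : |∑ i : ↥J, (q i : ℝ) * t i.1 - ∑ i : ↥J, xx i * t i.1| ≤ δ * Tabs := by
      rw [← Finset.sum_sub_distrib]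
      refine (Finset.abs_sum_le_sum_abs _ _).trans ?_
      rw [hTabs, Finset.mul_sum]
      refine Finset.sum_le_sum fun i _ => ?_
      rw [show (q i : ℝ) * t i.1 - xx i * t i.1 = ((q i : ℝ) - xx i) * t i.1 by ring, abs_mul]
      exact mul_le_mul_of_nonneg_right (hqnear i).le (abs_nonneg _)
    have hδT : δ * Tabs < ε := by
      have hle : δ * Tabs ≤ δ₂ * Tabs :=
        mul_le_mul_of_nonneg_right (min_le_right _ _) hTabsnn
      have : δ₂ * Tabs < δ₂ * (1 + Tabs) := by
        refine (mul_lt_mul_iff_right₀ hδ₂pos).2 ?_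
        linarith
      have heq : δ₂ * (1 + Tabs) = ε := by
        rw [hδ₂]
        field_simp
      linarith
    have habs := lt_of_le_of_lt hdiffb hδT
    have h4 := (abs_lt.1 habs).1
    rw [hct] at h4
    linarith
  -- clear denominators
  set N : ℕ := ∏ i : ↥J, (q i).den with hN
  have hNpos : 0 < N := Finset.prod_pos fun i _ => (q i).pos
  have hqN : ∀ i : ↥J, ∃ a : ℕ, 0 < a ∧ ((a : ℚ)) = q i * (N : ℚ) := by
    intro i
    set Mn : ℕ := ∏ i' ∈ Finset.univ.erase i, (q i').den with hMn
    have hMnpos : 0 < Mn := Finset.prod_pos fun i' _ => (q i').pos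
    have hsplit : (N : ℚ) = ((q i).den : ℚ) * (Mn : ℚ) := by
      rw [hN, hMn]
      push_cast
      rw [Finset.mul_prod_erase Finset.univ (fun i' => ((q i').den : ℚ)) (Finset.mem_univ i)]
    have hq_mul : q i * (N : ℚ) = ((q i).num : ℚ) * (Mn : ℚ) := by
      rw [hsplit, ← mul_assoc, Rat.mul_den_eq_num]
    have hnumpos : 0 < (q i).num := Rat.num_pos.2 (hqpos i)
    refine ⟨(q i).num.toNat * Mn, ?_, ?_⟩
    · exact Nat.mul_pos (by omega) hMnpos
    · rw [hq_mul]
      calc (((q i).num.toNat * Mn : ℕ) : ℚ)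
          = (((q i).num.toNat : ℤ) : ℚ) * (Mn : ℚ) := by push_cast; ring
        _ = ((q i).num : ℚ) * (Mn : ℚ) := by rw [Int.toNat_of_nonneg hnumpos.le]
  choose aa haapos haaeq using hqN
  -- semigroup facts
  have hnsmul : ∀ p ∈ S, ∀ k : ℕ, 0 < k → k • p ∈ S := by
    intro p hp k hk
    induction k with
    | zero => omega
    | succ k ih =>
      rcases Nat.eq_zero_or_pos k with hk0 | hk0
      · subst hk0; simpa using hp
      · rw [succ_nsmul]
        exact hadd _ (ih hk0) _ hp
  have hZS : (∑ i : ↥J, aa i • y i.1) ∈ S := by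
    have hne' : (Finset.univ : Finset ↥J).Nonempty := Finset.univ_nonempty
    refine Finset.Nonempty.cons_induction
      (motive := fun (s' : Finset ↥J) _ => (∑ i ∈ s', aa i • y i.1) ∈ S) ?_ ?_ hne'
    · intro i
      rw [Finset.sum_singleton]
      exact hnsmul _ (hyS i.1) _ (haapos i)
    · intro i s' his hs' ih
      rw [Finset.sum_cons]
      exact hadd _ (hnsmul _ (hyS i.1) _ (haapos i)) _ ih
  obtain ⟨dZ, tZ, sZ, hBZ, hFZ, hZeq⟩ := hZS
  -- components of the semigroup element
  have hZ1 : (dZ : ℝ) = ∑ i : ↥J, (aa i : ℝ) * (d i.1 : ℝ) := by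
    have h : (dZ : ℝ) = ∑ i : ↥J, (aa i • y i.1).1 := by
      rw [← Prod.fst_sum, hZeq]
    rw [h]
    refine Finset.sum_congr rfl fun i _ => ?_
    rw [hyeq i.1]
    exact nsmul_eq_mul _ _
  have hZ2 : ∀ jj, ((v sZ jj : ℤ) : ℝ) = ∑ i : ↥J, (aa i : ℝ) * ((v (s i.1) jj : ℤ) : ℝ) := by
    intro jj
    have h : ((v sZ jj : ℤ) : ℝ) = ∑ i : ↥J, ((aa i • y i.1).2.1) jj := by
      rw [← Finset.sum_apply, ← Prod.fst_sum, ← Prod.snd_sum, hZeq]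
    rw [h]
    refine Finset.sum_congr rfl fun i _ => ?_
    rw [hyeq i.1]
    exact nsmul_eq_mul _ _
  have hZ3 : tZ = ∑ i : ↥J, (aa i : ℝ) * t i.1 := by
    have h : tZ = ∑ i : ↥J, (aa i • y i.1).2.2 := by
      rw [← Prod.snd_sum, ← Prod.snd_sum, hZeq]
    rw [h]
    refine Finset.sum_congr rfl fun i _ => ?_
    rw [hyeq i.1]
    exact nsmul_eq_mul _ _
  -- numeric identities
  have haaR : ∀ i : ↥J, (aa i : ℝ) = (q i : ℝ) * (N : ℝ) := by
    intro i
    have := haaeq i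
    exact_mod_cast congrArg (fun z : ℚ => (z : ℝ)) this
  have hqd : ∑ i : ↥J, q i * ((d i.1 : ℕ) : ℚ) = ((Dz : ℤ) : ℚ) := by
    have := hqeq none
    simpa [hw, hw₀] using this
  have hqx : ∀ jj, ∑ i : ↥J, q i * ((v (s i.1) jj : ℤ) : ℚ) = ((Xz jj : ℤ) : ℚ) := by
    intro jj
    have := hqeq (some jj)
    simpa [hw, hw₀] using this
  have hdZ : (dZ : ℝ) = (N : ℝ) * σ.1 := by
    rw [hZ1]
    have : ∑ i : ↥J, (aa i : ℝ) * (d i.1 : ℝ)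
        = (N : ℝ) * ∑ i : ↥J, (q i : ℝ) * (d i.1 : ℝ) := by
      rw [Finset.mul_sum]
      exact Finset.sum_congr rfl fun i _ => by rw [haaR i]; ring
    rw [this, hDz]
    congr 1
    have := congrArg (fun z : ℚ => (z : ℝ)) hqd
    push_cast at this
    exact this
  have hXZ : ∀ jj, ((v sZ jj : ℤ) : ℝ) = (N : ℝ) * σ.2.1 jj := by
    intro jj
    rw [hZ2 jj]
    have : ∑ i : ↥J, (aa i : ℝ) * ((v (s i.1) jj : ℤ) : ℝ)
        = (N : ℝ) * ∑ i : ↥J, (q i : ℝ) * ((v (s i.1) jj : ℤ) : ℝ) := by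
      rw [Finset.mul_sum]
      exact Finset.sum_congr rfl fun i _ => by rw [haaR i]; ring
    rw [this, hXz jj]
    congr 1
    have := congrArg (fun z : ℚ => (z : ℝ)) (hqx jj)
    push_cast at this
    exact this
  have htZ : (N : ℝ) * σ.2.2 < tZ := by
    rw [hZ3]
    have : ∑ i : ↥J, (aa i : ℝ) * t i.1
        = (N : ℝ) * ∑ i : ↥J, (q i : ℝ) * t i.1 := by
      rw [Finset.mul_sum]
      exact Finset.sum_congr rfl fun i _ => by rw [haaR i]; ring
    rw [this]
    have hNR : (0 : ℝ) < (N : ℝ) := by exact_mod_cast hNpos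
    exact (mul_lt_mul_iff_right₀ hNR).2 hqt
  -- conclusion
  refine ⟨N, hNpos, dZ, (N : ℝ) * σ.2.2, sZ, ?_, ?_, ?_⟩
  · rw [hdZ]
    calc B * ((N : ℝ) * σ.1) = (N : ℝ) * (B * σ.1) := by ring
      _ ≤ (N : ℝ) * σ.2.2 :=
        mul_le_mul_of_nonneg_left hTB (by positivity)
  · exact hdec dZ ((N : ℝ) * σ.2.2) tZ htZ.le hFZ
  · refine Prod.ext ?_ (Prod.ext ?_ ?_)
    · show (N : ℕ) • σ.1 = (dZ : ℝ)
      rw [nsmul_eq_mul, hdZ]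
    · funext jj
      show ((N : ℕ) • σ.2.1) jj = ((v sZ jj : ℤ) : ℝ)
      rw [Pi.smul_apply, nsmul_eq_mul, hXZ jj]
    · show (N : ℕ) • σ.2.2 = (N : ℝ) * σ.2.2
      rw [nsmul_eq_mul]
end
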